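/- arXiv:1812.00484 — 9 statements merged into one kernel-verified Lean document; each statement's English description precedes it below -/
import Mathlib

section
/- In the topology on T ∪ {∞} whose open sets are the nice upper sets, the singleton {∞} is not locally closed (not the intersection of an open set and a closed set). -/
open Topology TopologicalSpace Set

/-- The hyperspace of compact subsets (including `∅`) of `X`. -/
def Kt (X : Type*) [TopologicalSpace X] : Type _ := {A : Set X // IsCompact A}

/-- The Vietoris topology on the hyperspace, generated by the sets
`U⁺ = {A : A ⊆ U}` and `U⁻ = {A : A ∩ U ≠ ∅}` for `U` open. -/
instance Kt.topology (X : Type*) [TopologicalSpace X] : TopologicalSpace (Kt X) :=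
  TopologicalSpace.generateFrom
    ({S | ∃ U : Set X, IsOpen U ∧ S = {A : Kt X | A.1 ⊆ U}} ∪
     {S | ∃ U : Set X, IsOpen U ∧ S = {A : Kt X | (A.1 ∩ U).Nonempty}})

/-- The Hilbert cube `[0,1]^ω`. -/
abbrev HilbertCube : Type := ℕ → unitInterval

open scoped Classical in
/-- The type of a space: the pair (number of connected components, number of
nondegenerate components) if the number of components is finite; `none` (= `∞`) otherwise. -/
noncomputable def typeOf (K : Type*) [TopologicalSpace K] : Option (ℕ × ℕ) :=
  if Finite (ConnectedComponents K) then
    some (Nat.card (ConnectedComponents K),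
      Nat.card {c : ConnectedComponents K |
        ¬ ({x : K | ConnectedComponents.mk x = c} : Set K).Subsingleton})
  else none

/-- The order on the type poset `T ∪ {∞}` (`none` plays the role of `∞`):
`(0,0)` is comparable only with itself, positive finite types are ordered by the
product order, and `∞` is above every positive finite type. -/
def tle : Option (ℕ × ℕ) → Option (ℕ × ℕ) → Prop
  | none, none => True
  | none, some _ => False
  | some p, none => 0 < p.1
  | some p, some q => (p = (0, 0) ∧ q = (0, 0)) ∨ (0 < p.1 ∧ p.1 ≤ q.1 ∧ p.2 ≤ q.2)

/-- Membership in the type poset `T ∪ {∞}`: finite types are pairs `(m, n)` with `m ≥ n`. -/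
def isType : Option (ℕ × ℕ) → Prop
  | none => True
  | some p => p.2 ≤ p.1

/-- The type poset `T ∪ {∞}` as a type. -/
abbrev TP : Type := {o : Option (ℕ × ℕ) // isType o}

/-- The order on the type poset. -/
def TP.le (a b : TP) : Prop := tle a.1 b.1

/-- `R` is an upper set in the type poset. -/
def IsUpperSetTP (R : Set TP) : Prop := ∀ a b : TP, a ∈ R → TP.le a b → b ∈ R

/-- `R` is nice: if it meets `T₊ ∪ {∞}`, then it contains `(m, 0)` for some `m > 0`. -/
def NiceSet (R : Set TP) : Prop :=
  (∃ a ∈ R, a.1 ≠ some (0, 0)) →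
    ∃ m : ℕ, 0 < m ∧ (⟨some (m, 0), Nat.zero_le m⟩ : TP) ∈ R

/-- A set is open in the topology of nice upper sets. -/
def OpenTP (R : Set TP) : Prop := IsUpperSetTP R ∧ NiceSet R

/-- A set is closed in the topology of nice upper sets. -/
def ClosedTP (R : Set TP) : Prop := OpenTP Rᶜ

/-- A set is locally closed: the intersection of an open set and a closed set. -/
def LocallyClosedTP (S : Set TP) : Prop := ∃ U C : Set TP, OpenTP U ∧ ClosedTP C ∧ S = U ∩ C

theorem stmt8 :
    ¬ LocallyClosedTP ({⟨none, trivial⟩} : Set TP) := by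
  rintro ⟨U, C, ⟨hUup, hUnice⟩, ⟨hCup, hCnice⟩, hS⟩
  have hinf : (⟨none, trivial⟩ : TP) ∈ U ∩ C := by rw [← hS]; exact rfl
  obtain ⟨m, hm, hmU⟩ := hUnice ⟨⟨none, trivial⟩, hinf.1, by simp⟩
  have hmnotS : (⟨some (m, 0), Nat.zero_le m⟩ : TP) ∉ ({⟨none, trivial⟩} : Set TP) := by
    intro h; rw [Set.mem_singleton_iff] at h; cases congrArg Subtype.val h
  rw [hS] at hmnotS
  have hmC : (⟨some (m, 0), Nat.zero_le m⟩ : TP) ∈ Cᶜ := fun h => hmnotS ⟨hmU, h⟩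
  have : (⟨none, trivial⟩ : TP) ∈ Cᶜ := hCup _ _ hmC hm
  exact this hinf.2
end

section
/- In the topology on T ∪ {∞} of nice upper sets: the singleton {(0,0)} is clopen, the singleton {(1,0)} is closed, and for every t ∈ T₊ with t ≠ (1,0), the singleton {t} is locally closed but neither open nor closed. -/
open Topology TopologicalSpace Set

lemma tle_trans {a b c : Option (ℕ × ℕ)} (h1 : tle a b) (h2 : tle b c) : tle a c := by
  cases a <;> cases b <;> cases c <;>
    simp_all [tle, Prod.ext_iff] <;> omega

lemma tle_antisymm {a b : Option (ℕ × ℕ)} (h1 : tle a b) (h2 : tle b a) : a = b := by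
  cases a <;> cases b <;>
    simp_all [tle, Prod.ext_iff] <;> omega

lemma tle_le_zz {o : Option (ℕ × ℕ)} (h : tle o (some (0, 0))) : o = some (0, 0) := by
  cases o <;> simp_all [tle, Prod.ext_iff] <;> omega

lemma tle_le_oz {o : Option (ℕ × ℕ)} (h : tle o (some (1, 0))) : o = some (1, 0) := by
  cases o <;> simp_all [tle, Prod.ext_iff] <;> omega

theorem stmt9 :
    (OpenTP ({⟨some (0, 0), le_refl 0⟩} : Set TP) ∧
      ClosedTP ({⟨some (0, 0), le_refl 0⟩} : Set TP)) ∧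
    ClosedTP ({⟨some (1, 0), Nat.zero_le 1⟩} : Set TP) ∧
    ∀ (m n : ℕ) (hnm : n ≤ m), 0 < m → (m, n) ≠ (1, 0) →
      LocallyClosedTP ({⟨some (m, n), hnm⟩} : Set TP) ∧
      ¬ OpenTP ({⟨some (m, n), hnm⟩} : Set TP) ∧
      ¬ ClosedTP ({⟨some (m, n), hnm⟩} : Set TP) := by

  refine ⟨⟨⟨?_, ?_⟩, ?_, ?_⟩, ⟨?_, ?_⟩, ?_⟩
  · -- {(0,0)} open: upper
    intro a b ha hab
    simp only [Set.mem_singleton_iff] at ha ⊢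
    subst ha
    have : b.1 = some (0, 0) := by
      rcases hb : b.1 with _ | q
      · rw [TP.le, hb] at hab; simpa [tle] using hab
      · rw [TP.le, hb] at hab
        rcases hab with ⟨_, h⟩ | ⟨h1, h2, _⟩
        · rw [h]
        · simp at h2; omega
    exact Subtype.ext this
  · -- {(0,0)} nice (vacuous)
    rintro ⟨a, ha, hne⟩
    simp only [Set.mem_singleton_iff] at ha
    exact absurd (by rw [ha]) hne
  · -- {(0,0)}ᶜ upper
    intro a b ha hab hb
    simp only [Set.mem_singleton_iff] at hb
    apply ha
    subst hb
    exact Subtype.ext (tle_le_zz hab)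
  · -- {(0,0)}ᶜ nice
    intro _
    exact ⟨1, one_pos, by simp [Subtype.ext_iff]⟩
  · -- {(1,0)}ᶜ upper
    intro a b ha hab hb
    simp only [Set.mem_singleton_iff] at hb
    apply ha
    subst hb
    exact Subtype.ext (tle_le_oz hab)
  · -- {(1,0)}ᶜ nice
    intro _
    exact ⟨2, two_pos, by simp [Subtype.ext_iff]⟩
  · intro m n hnm hm hne
    set t : TP := ⟨some (m, n), hnm⟩ with ht
    refine ⟨?_, ?_, ?_⟩
    · -- locally closed
      refine ⟨{b : TP | tle (some (m, n)) b.1 ∨ tle (some (m + 1, 0)) b.1},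
        {b : TP | (tle (some (m, n)) b.1 ∧ b.1 ≠ some (m, n)) ∨ tle (some (m + 1, 0)) b.1}ᶜ,
        ⟨?_, ?_⟩, ?_, ?_⟩
      · rintro a b (ha | ha) hab
        · exact Or.inl (tle_trans ha hab)
        · exact Or.inr (tle_trans ha hab)
      · intro _
        exact ⟨m + 1, Nat.succ_pos m, Or.inr (by simp [tle])⟩
      · rw [ClosedTP, compl_compl]
        constructor
        · rintro a b (⟨ha, hane⟩ | ha) hab
          · refine Or.inl ⟨tle_trans ha hab, ?_⟩
            intro hb
            exact hane (by rw [tle_antisymm ha (hb ▸ hab)])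
          · exact Or.inr (tle_trans ha hab)
        · intro _
          exact ⟨m + 1, Nat.succ_pos m, Or.inr (by simp [tle])⟩
      · ext b
        simp only [Set.mem_singleton_iff, Set.mem_inter_iff, Set.mem_setOf_eq,
          Set.mem_compl_iff]
        constructor
        · rintro rfl
          refine ⟨Or.inl (Or.inr ⟨hm, le_refl _, le_refl _⟩), ?_⟩
          rintro (⟨_, hne'⟩ | h)
          · exact hne' rfl
          · rcases h with ⟨h1, _⟩ | ⟨_, h2, _⟩
            · simp at h1
            · exact Nat.not_succ_le_self m h2
        · rintro ⟨h1 | h1, h2⟩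
          · by_contra hbt
            exact h2 (Or.inl ⟨h1, fun hb => hbt (Subtype.ext hb)⟩)
          · exact absurd (Or.inr h1) h2
    · -- not open
      rintro ⟨hup, -⟩
      have : (⟨none, trivial⟩ : TP) ∈ ({t} : Set TP) :=
        hup t ⟨none, trivial⟩ rfl (by show tle (some (m, n)) none; simpa [tle] using hm)
      simp [Subtype.ext_iff] at this
    · -- not closed
      rintro ⟨hup, -⟩
      have h10 : (⟨some (1, 0), Nat.zero_le 1⟩ : TP) ∈ ({t} : Set TP)ᶜ := by
        simp only [Set.mem_compl_iff, Set.mem_singleton_iff, Subtype.ext_iff]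
        intro h
        exact hne (by injection h with h'; exact h'.symm ▸ rfl)
      have := hup _ t h10 (Or.inr ⟨one_pos, hm, Nat.zero_le n⟩)
      exact this rfl
end

section
/- Let X be a metrizable space, let F be a compact subfamily of the hyperspace K(X), and let U ⊆ X be open such that every member of F meets U. Then there exists a closed subset A ⊆ X with A ⊆ U such that every member of F meets A. -/
open Topology TopologicalSpace Set

theorem stmt10 {X : Type*} [TopologicalSpace X] [MetrizableSpace X]
    (F : Set (Kt X)) (hF : IsCompact F) (U : Set X) (hU : IsOpen U)
    (hmeet : ∀ K ∈ F, (K.1 ∩ U).Nonempty) :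
    ∃ A : Set X, IsClosed A ∧ A ⊆ U ∧ ∀ K ∈ F, (K.1 ∩ A).Nonempty := by
  letI : MetricSpace X := TopologicalSpace.metrizableSpaceMetric X
  -- For each K ∈ F, pick a point x K ∈ K ∩ U and radius ε K with closedBall ⊆ U
  have hsel : ∀ K : F, ∃ x : X, ∃ ε : ℝ, 0 < ε ∧ x ∈ K.1.1 ∧
      Metric.closedBall x ε ⊆ U := by
    rintro ⟨K, hK⟩
    obtain ⟨x, hxK, hxU⟩ := hmeet K hK
    obtain ⟨ε, hε, hball⟩ := Metric.isOpen_iff.mp hU x hxU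
    exact ⟨x, ε / 2, by linarith, hxK,
      (Metric.closedBall_subset_ball (by linarith)).trans hball⟩
  choose x ε hε hxK hball using hsel
  -- Open cover of F in the Vietoris topology
  have hopen : ∀ K : F, IsOpen {A : Kt X | (A.1 ∩ Metric.ball (x K) (ε K)).Nonempty} := by
    intro K
    exact TopologicalSpace.GenerateOpen.basic _
      (Or.inr ⟨Metric.ball (x K) (ε K), Metric.isOpen_ball, rfl⟩)
  have hcover : F ⊆ ⋃ K : F, {A : Kt X | (A.1 ∩ Metric.ball (x K) (ε K)).Nonempty} := by
    intro K hK
    exact mem_iUnion.mpr ⟨⟨K, hK⟩, x ⟨K, hK⟩, hxK ⟨K, hK⟩,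
      Metric.mem_ball_self (hε ⟨K, hK⟩)⟩
  obtain ⟨t, ht⟩ := hF.elim_finite_subcover _ hopen hcover
  refine ⟨⋃ K ∈ t, Metric.closedBall (x K) (ε K), ?_, ?_, ?_⟩
  · exact isClosed_biUnion_finset fun K _ => Metric.isClosed_closedBall
  · exact iUnion₂_subset fun K _ => hball K
  · intro K hK
    have := ht hK
    simp only [mem_iUnion, Set.mem_setOf_eq] at this
    obtain ⟨L, hLt, y, hyK, hyL⟩ := this
    exact ⟨y, hyK, mem_iUnion₂.mpr ⟨L, hLt, Metric.ball_subset_closedBall hyL⟩⟩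
end

section
/- Let F be a finite subset of the Hilbert cube [0,1]^ω. For every separable metrizable space X with |X| ≥ |F| there exists a topological embedding f : X ↪ [0,1]^ω such that F ⊆ f[X]. -/
open Topology TopologicalSpace Set

noncomputable section Stmt11Aux

namespace Stmt11Aux

/-! ### A convenient metric on the Hilbert cube -/

lemma unit_abs_le_one (s t : unitInterval) : |(s : ℝ) - (t : ℝ)| ≤ 1 := by
  have h1 := s.2.1; have h2 := s.2.2; have h3 := t.2.1; have h4 := t.2.2
  rw [abs_le]; constructor <;> nlinarith

/-- A metric-like distance on the Hilbert cube, compatible with the product topology. -/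
def dH (x y : HilbertCube) : ℝ := ∑' k, (1/2 : ℝ) ^ k * |(x k : ℝ) - (y k : ℝ)|

lemma summable_dH (x y : HilbertCube) :
    Summable fun k => (1/2 : ℝ) ^ k * |(x k : ℝ) - (y k : ℝ)| := by
  refine Summable.of_nonneg_of_le (fun k => by positivity) (fun k => ?_) summable_geometric_two
  exact mul_le_of_le_one_right (by positivity) (unit_abs_le_one _ _)

lemma dH_nonneg (x y : HilbertCube) : 0 ≤ dH x y :=
  tsum_nonneg fun k => by positivity

lemma dH_self (x : HilbertCube) : dH x x = 0 := by
  simp [dH]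

lemma dH_symm (x y : HilbertCube) : dH x y = dH y x := by
  unfold dH
  congr 1; funext k; rw [abs_sub_comm]

lemma dH_coord_le (x y : HilbertCube) (k : ℕ) :
    (1/2 : ℝ) ^ k * |(x k : ℝ) - (y k : ℝ)| ≤ dH x y :=
  Summable.le_tsum (summable_dH x y) k fun j _ => by positivity

lemma dH_eq_zero {x y : HilbertCube} (h : dH x y = 0) : x = y := by
  funext k
  apply Subtype.ext
  have h1 := dH_coord_le x y k
  rw [h] at h1
  have h2 : (0:ℝ) < (1/2 : ℝ) ^ k := by positivity
  have h3 : |(x k : ℝ) - (y k : ℝ)| = 0 := by nlinarith [abs_nonneg ((x k : ℝ) - (y k : ℝ))]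
  have := abs_eq_zero.mp h3
  linarith [sub_eq_zero.mp this, le_refl (0:ℝ)]

lemma dH_triangle (x y w : HilbertCube) : dH x w ≤ dH x y + dH y w := by
  unfold dH
  rw [← Summable.tsum_add (summable_dH x y) (summable_dH y w)]
  refine Summable.tsum_le_tsum (fun k => ?_) (summable_dH x w) ((summable_dH x y).add (summable_dH y w))
  rw [← mul_add]
  exact mul_le_mul_of_nonneg_left (abs_sub_le _ _ _) (by positivity)

lemma dH_continuous (c : HilbertCube) : Continuous fun x => dH x c := by
  refine continuous_tsum (fun k => ?_) summable_geometric_two (fun k x => ?_)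
  · exact continuous_const.mul (((continuous_apply k).subtype_val.sub continuous_const).abs)
  · rw [Real.norm_eq_abs, abs_of_nonneg (by positivity)]
    exact mul_le_of_le_one_right (by positivity) (unit_abs_le_one _ _)

/-! ### Bump functions -/

def lamF (c : HilbertCube) (δ : ℝ) (x : HilbertCube) : ℝ := max 0 (1 - dH x c / δ)

def lamF' (c : HilbertCube) (δ : ℝ) (x : HilbertCube) : ℝ := min 1 (max 0 (2 - dH x c / δ))

lemma lamF_nonneg (c : HilbertCube) (δ : ℝ) (x : HilbertCube) : 0 ≤ lamF c δ x :=
  le_max_left _ _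

lemma lamF_le_one {c : HilbertCube} {δ : ℝ} (hδ : 0 < δ) (x : HilbertCube) : lamF c δ x ≤ 1 := by
  refine max_le zero_le_one ?_
  have : 0 ≤ dH x c / δ := div_nonneg (dH_nonneg _ _) hδ.le
  linarith

lemma lamF_ne {c : HilbertCube} {δ : ℝ} (hδ : 0 < δ) {x : HilbertCube}
    (h : lamF c δ x ≠ 0) : dH x c < δ := by
  by_contra hc
  push_neg at hc
  apply h
  have h1 : 1 ≤ dH x c / δ := (le_div_iff₀ hδ).mpr (by linarith)
  exact max_eq_left (by linarith)

lemma lamF_at_self (c : HilbertCube) {δ : ℝ} (hδ : 0 < δ) : lamF c δ c = 1 := by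
  unfold lamF
  rw [dH_self, zero_div, sub_zero]
  exact max_eq_right zero_le_one

lemma lamF_eq_one_imp {c : HilbertCube} {δ : ℝ} (hδ : 0 < δ) {x : HilbertCube}
    (h : lamF c δ x = 1) : x = c := by
  unfold lamF at h
  rcases le_or_gt (1 - dH x c / δ) 0 with h1 | h1
  · rw [max_eq_left h1] at h; norm_num at h
  · rw [max_eq_right h1.le] at h
    have : dH x c / δ = 0 := by linarith
    exact dH_eq_zero ((div_eq_zero_iff.mp this).resolve_right hδ.ne')

lemma lamF'_mem (c : HilbertCube) (δ : ℝ) (x : HilbertCube) : lamF' c δ x ∈ Icc (0:ℝ) 1 :=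
  ⟨le_min zero_le_one (le_max_left _ _), min_le_left _ _⟩

lemma lamF'_eq_one {c : HilbertCube} {δ : ℝ} (hδ : 0 < δ) {x : HilbertCube}
    (h : dH x c ≤ δ) : lamF' c δ x = 1 := by
  unfold lamF'
  refine min_eq_left (le_max_of_le_right ?_)
  have : dH x c / δ ≤ 1 := (div_le_one hδ).mpr h
  linarith

lemma lamF'_eq_zero {c : HilbertCube} {δ : ℝ} (hδ : 0 < δ) {x : HilbertCube}
    (h : 2 * δ ≤ dH x c) : lamF' c δ x = 0 := by
  unfold lamF'
  have h1 : 2 ≤ dH x c / δ := (le_div_iff₀ hδ).mpr (by linarith)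
  rw [max_eq_left (by linarith)]
  exact min_eq_right zero_le_one

lemma lamF'_ne {c : HilbertCube} {δ : ℝ} (hδ : 0 < δ) {x : HilbertCube}
    (h : lamF' c δ x ≠ 0) : dH x c < 2 * δ := by
  by_contra hc
  push_neg at hc
  exact h (lamF'_eq_zero hδ hc)

lemma lamF_le_lamF' (c : HilbertCube) {δ : ℝ} (hδ : 0 < δ) (x : HilbertCube) :
    lamF c δ x ≤ lamF' c δ x := by
  refine le_min (lamF_le_one hδ x) (max_le_max le_rfl (by linarith [le_refl (dH x c / δ)]))

lemma continuous_lamF (c : HilbertCube) (δ : ℝ) : Continuous (lamF c δ) :=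
  continuous_const.max (continuous_const.sub ((dH_continuous c).div_const δ))

lemma continuous_lamF' (c : HilbertCube) (δ : ℝ) : Continuous (lamF' c δ) :=
  continuous_const.min (continuous_const.max (continuous_const.sub ((dH_continuous c).div_const δ)))


/-! ### Generic center -/

open Polynomial in
lemma exists_generic {n m : ℕ} (hm : 2 ≤ m) (w : Fin n → Fin m → ℝ)
    (hw : ∀ i j : Fin n, i ≠ j → ∃ k, w i k ≠ w j k) :
    ∃ Z : Fin m → ℝ, (∀ k, Z k ∈ Set.Icc (0:ℝ) 1) ∧ (∀ i, ∃ k, w i k - Z k ≠ 0) ∧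
      ∀ i j, i ≠ j → ∀ p q : ℝ, p ≠ 0 →
        ¬ ∀ k, p * (w i k - Z k) = q * (w j k - Z k) := by
  classical
  have hmpos : 0 < m := by omega
  have key : ∀ i j : Fin n, (∃ k, w i k ≠ w j k) → ∃ bad : Set ℝ, bad.Finite ∧
      ∀ t ∉ bad, ∀ p q : ℝ, p ≠ 0 →
        ¬ ∀ k : Fin m, p * (w i k - t ^ ((k:ℕ)+1)) = q * (w j k - t ^ ((k:ℕ)+1)) := by
    intro i j hij
    obtain ⟨k₀, hk₀⟩ := hij
    set v : Fin m → ℝ := fun k => w i k - w j k with hv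
    have hv0 : v k₀ ≠ 0 := sub_ne_zero_of_ne hk₀
    set k₁ : Fin m := ⟨if (k₀:ℕ) = 0 then 1 else 0, by split <;> omega⟩ with hk₁
    have hne : k₁ ≠ k₀ := by
      apply Fin.ne_of_val_ne
      simp only [hk₁]
      split <;> omega
    set Acoef : Fin m → ℝ :=
      fun k => (if k = k₀ then -(v k₁) else 0) + (if k = k₁ then v k₀ else 0) with hA
    have hsum : ∀ xx : Fin m → ℝ,
        ∑ k, Acoef k * xx k = -(v k₁) * xx k₀ + v k₀ * xx k₁ := by
      intro xx
      have hterm : ∀ k, Acoef k * xx k =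
          (if k = k₀ then -(v k₁) * xx k else 0) + (if k = k₁ then v k₀ * xx k else 0) := by
        intro k
        simp only [hA, add_mul, ite_mul, zero_mul]
      rw [Finset.sum_congr rfl fun k _ => hterm k, Finset.sum_add_distrib,
        Finset.sum_ite_eq', Finset.sum_ite_eq']
      simp
    set b : ℝ := -(v k₁) * w i k₀ + v k₀ * w i k₁ with hb
    have hwi : ∑ k, Acoef k * w i k = b := hsum (w i)
    have hwj : ∑ k, Acoef k * w j k = b := by
      rw [hsum (w j), hb]
      simp only [hv]
      ring
    set p : Polynomial ℝ := (∑ k : Fin m, C (Acoef k) * X ^ ((k:ℕ)+1)) - C b with hp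
    have hpne : p ≠ 0 := by
      intro h0
      have hterm : ∀ k : Fin m, (C (Acoef k) * X ^ ((k:ℕ)+1)).coeff ((k₁:ℕ)+1)
          = if k = k₁ then Acoef k else 0 := by
        intro k
        rw [coeff_C_mul, coeff_X_pow]
        by_cases hkk : k = k₁
        · subst hkk; simp
        · have hval : ((k₁:ℕ)+1) ≠ ((k:ℕ)+1) := by
            intro hh; exact hkk (Fin.ext (by omega))
          simp [hval, hkk, Fin.val_inj, Ne.symm hkk]
      have hcoeff : p.coeff ((k₁:ℕ)+1) = Acoef k₁ := by
        rw [hp, coeff_sub, finset_sum_coeff,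
          Finset.sum_congr rfl fun k _ => hterm k, Finset.sum_ite_eq']
        simp [coeff_C]
      have hA1 : Acoef k₁ = v k₀ := by
        simp [hA, hne, hne.symm]
      rw [h0] at hcoeff
      simp only [coeff_zero] at hcoeff
      exact hv0 (by rw [← hA1, ← hcoeff])
    refine ⟨{t | p.IsRoot t}, p.finite_setOf_isRoot hpne, ?_⟩
    intro t ht pp qq hpp hc
    have heval : p.eval t = (∑ k : Fin m, Acoef k * t ^ ((k:ℕ)+1)) - b := by
      simp [hp, eval_finset_sum]
    set ζ : ℝ := ∑ k : Fin m, Acoef k * t ^ ((k:ℕ)+1) with hζ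
    have hLi : ∑ k, Acoef k * (w i k - t ^ ((k:ℕ)+1)) = b - ζ := by
      simp only [mul_sub, Finset.sum_sub_distrib, hwi, hζ]
    have hLj : ∑ k, Acoef k * (w j k - t ^ ((k:ℕ)+1)) = b - ζ := by
      simp only [mul_sub, Finset.sum_sub_distrib, hwj, hζ]
    have hmain : pp * (b - ζ) = qq * (b - ζ) := by
      have hstep : pp * (∑ k, Acoef k * (w i k - t ^ ((k:ℕ)+1)))
          = qq * (∑ k, Acoef k * (w j k - t ^ ((k:ℕ)+1))) := ?_
      · rw [hLi, hLj] at hstep; exact hstep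
      rw [Finset.mul_sum, Finset.mul_sum]
      refine Finset.sum_congr rfl fun k _ => ?_
      have := hc k
      calc pp * (Acoef k * (w i k - t ^ ((k:ℕ)+1)))
          = Acoef k * (pp * (w i k - t ^ ((k:ℕ)+1))) := by ring
        _ = Acoef k * (qq * (w j k - t ^ ((k:ℕ)+1))) := by rw [this]
        _ = qq * (Acoef k * (w j k - t ^ ((k:ℕ)+1))) := by ring
    have hbζ : b - ζ ≠ 0 := by
      intro h0
      apply ht
      show p.IsRoot t
      rw [Polynomial.IsRoot, heval]
      linarith [h0]
    have hpq : pp = qq := mul_right_cancel₀ hbζ hmain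
    have := hc k₀
    rw [hpq] at this
    have h2 : w i k₀ - t ^ ((k₀:ℕ)+1) = w j k₀ - t ^ ((k₀:ℕ)+1) := by
      have hqq : qq ≠ 0 := by rw [← hpq]; exact hpp
      exact mul_left_cancel₀ hqq this
    exact hk₀ (by linarith)
  -- assemble the bad set
  set S : Fin n × Fin n → Set ℝ := fun pr =>
    if h : ∃ k, w pr.1 k ≠ w pr.2 k then (key pr.1 pr.2 h).choose else ∅ with hS
  have hSfin : ∀ pr, (S pr).Finite := by
    intro pr
    simp only [hS]
    split
    next h => exact (key pr.1 pr.2 h).choose_spec.1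
    next => exact Set.finite_empty
  have hbadfin : ((⋃ pr : Fin n × Fin n, S pr) ∪ ⋃ i : Fin n, {w i ⟨0, hmpos⟩}).Finite :=
    (Set.finite_iUnion hSfin).union (Set.finite_iUnion fun i => Set.finite_singleton _)
  obtain ⟨t, ht⟩ := ((Set.Icc_infinite zero_lt_one).diff hbadfin).nonempty
  obtain ⟨ht01, htbad⟩ := ht
  refine ⟨fun k => t ^ ((k:ℕ)+1), fun k => ⟨?_, ?_⟩, fun i => ⟨⟨0, hmpos⟩, ?_⟩, ?_⟩
  · exact pow_nonneg ht01.1 _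
  · exact pow_le_one₀ ht01.1 ht01.2
  · intro h0
    apply htbad
    refine Set.mem_union_right _ (Set.mem_iUnion.mpr ⟨i, ?_⟩)
    have : w i ⟨0, hmpos⟩ = t := by
      have := sub_eq_zero.mp h0
      simpa using this
    simp [this]
  · intro i j hij pp qq hpp hc
    have hex := hw i j hij
    have htS : t ∉ S (i, j) := fun hmem =>
      htbad (Set.mem_union_left _ (Set.mem_iUnion.mpr ⟨(i,j), hmem⟩))
    rw [hS] at htS
    simp only [dif_pos hex] at htS
    exact (key i j hex).choose_spec.2 t htS pp qq hpp hc


/-! ### The correction map Φ -/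

section Phi

variable {n m : ℕ} (y a : Fin n → HilbertCube) (Z : Fin m → ℝ) (δ : ℝ)

/-- The real value of the `k`-th coordinate of the correction map. -/
def PhiV (x : HilbertCube) (k : ℕ) : ℝ :=
  (1 - ∑ i, lamF (a i) δ x) *
    (if h : k < m then Z ⟨k, h⟩ + ∑ i, lamF' (a i) δ x * (((y i k : ℝ) - Z ⟨k, h⟩) / 2)
     else ((x (k - m) : ℝ)))
  + ∑ i, lamF (a i) δ x * ((y i k : ℝ))

variable {y a Z δ}
variable (hδ : 0 < δ) (hsep : ∀ i j : Fin n, i ≠ j → 8 * δ ≤ dH (a i) (a j))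

include hδ hsep in
lemma two_balls {x : HilbertCube} {i j : Fin n}
    (hi : dH x (a i) < 2 * δ) (hj : dH x (a j) < 2 * δ) : i = j := by
  by_contra hij
  have h1 := hsep i j hij
  have h2 := dH_triangle (a i) x (a j)
  have h3 := dH_symm (a i) x
  linarith

include hδ hsep in
lemma lam_unique {x : HilbertCube} {i : Fin n} (hi : lamF (a i) δ x ≠ 0)
    {j : Fin n} (hj : j ≠ i) : lamF (a j) δ x = 0 ∧ lamF' (a j) δ x = 0 := by
  have hdi : dH x (a i) < δ := lamF_ne hδ hi
  have hdj : 2 * δ ≤ dH x (a j) := by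
    by_contra hcon
    push_neg at hcon
    exact hj (two_balls hδ hsep hcon (by linarith))
  have h2 := lamF'_eq_zero hδ hdj
  refine ⟨le_antisymm ?_ (lamF_nonneg _ _ _), h2⟩
  calc lamF (a j) δ x ≤ lamF' (a j) δ x := lamF_le_lamF' _ hδ _
    _ = 0 := h2

include hδ hsep in
lemma sum_lam_g {x : HilbertCube} {i : Fin n} (hi : lamF (a i) δ x ≠ 0) (g : Fin n → ℝ) :
    ∑ j, lamF (a j) δ x * g j = lamF (a i) δ x * g i :=
  Finset.sum_eq_single_of_mem i (Finset.mem_univ i) fun j _ hj => by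
    rw [(lam_unique hδ hsep hi hj).1, zero_mul]

include hδ hsep in
lemma sum_lam {x : HilbertCube} {i : Fin n} (hi : lamF (a i) δ x ≠ 0) :
    ∑ j, lamF (a j) δ x = lamF (a i) δ x :=
  Finset.sum_eq_single_of_mem i (Finset.mem_univ i) fun j _ hj =>
    (lam_unique hδ hsep hi hj).1

include hδ hsep in
lemma sum_lam' {x : HilbertCube} {j : Fin n} (hj : lamF' (a j) δ x ≠ 0) (g : Fin n → ℝ) :
    ∑ i, lamF' (a i) δ x * g i = lamF' (a j) δ x * g j :=
  Finset.sum_eq_single_of_mem j (Finset.mem_univ j) fun i _ hij => by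
    have h0 : lamF' (a i) δ x = 0 := by
      by_contra hcon
      exact hij (two_balls hδ hsep (lamF'_ne hδ hcon) (lamF'_ne hδ hj))
    rw [h0, zero_mul]

lemma sum_lam_zero {x : HilbertCube} (h0 : ∀ i, lamF (a i) δ x = 0) :
    (∑ j, lamF (a j) δ x) = 0 ∧ ∀ g : Fin n → ℝ, ∑ j, lamF (a j) δ x * g j = 0 :=
  ⟨Finset.sum_eq_zero fun i _ => h0 i,
   fun g => Finset.sum_eq_zero fun i _ => by rw [h0 i, zero_mul]⟩

lemma convex01 {u v s : ℝ} (hu : u ∈ Icc (0:ℝ) 1) (hv : v ∈ Icc (0:ℝ) 1)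
    (hs : s ∈ Icc (0:ℝ) 1) : (1 - s) * u + s * v ∈ Icc (0:ℝ) 1 := by
  obtain ⟨hu1, hu2⟩ := hu; obtain ⟨hv1, hv2⟩ := hv; obtain ⟨hs1, hs2⟩ := hs
  constructor <;> nlinarith

variable (hZ : ∀ k : Fin m, Z k ∈ Icc (0:ℝ) 1)

include hδ hsep hZ in
lemma E_mem (x : HilbertCube) (k : ℕ) :
    (if h : k < m then Z ⟨k, h⟩ + ∑ i, lamF' (a i) δ x * (((y i k : ℝ) - Z ⟨k, h⟩) / 2)
     else ((x (k - m) : ℝ))) ∈ Icc (0:ℝ) 1 := by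
  split
  next h =>
    by_cases hex : ∃ j, lamF' (a j) δ x ≠ 0
    · obtain ⟨j, hj⟩ := hex
      rw [sum_lam' hδ hsep hj]
      set γ := lamF' (a j) δ x with hγ
      have hγm := lamF'_mem (a j) δ x
      have hrw : Z ⟨k, h⟩ + γ * (((y j k : ℝ) - Z ⟨k, h⟩) / 2)
          = (1 - γ/2) * Z ⟨k, h⟩ + (γ/2) * (y j k : ℝ) := by ring
      rw [hrw]
      exact convex01 (hZ ⟨k, h⟩) (y j k).2 ⟨by linarith [hγm.1], by linarith [hγm.2]⟩
    · push_neg at hex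
      have : ∑ i, lamF' (a i) δ x * (((y i k : ℝ) - Z ⟨k, h⟩) / 2) = 0 :=
        Finset.sum_eq_zero fun i _ => by rw [hex i, zero_mul]
      rw [this, add_zero]
      exact hZ ⟨k, h⟩
  next h => exact (x (k - m)).2

include hδ hsep hZ in
lemma phi_mem (x : HilbertCube) (k : ℕ) : PhiV y a Z δ x k ∈ Icc (0:ℝ) 1 := by
  unfold PhiV
  have hE := E_mem (y := y) hδ hsep hZ x k
  by_cases hex : ∃ i, lamF (a i) δ x ≠ 0
  · obtain ⟨i, hi⟩ := hex
    rw [sum_lam hδ hsep hi, sum_lam_g hδ hsep hi]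
    exact convex01 hE (y i k).2 ⟨lamF_nonneg _ _ _, lamF_le_one hδ _⟩
  · push_neg at hex
    obtain ⟨h1, h2⟩ := sum_lam_zero hex
    rw [h1, h2]
    simpa using hE

include hδ hsep in
lemma phi_anchor (i : Fin n) (k : ℕ) : PhiV y a Z δ (a i) k = (y i k : ℝ) := by
  unfold PhiV
  have hi : lamF (a i) δ (a i) ≠ 0 := by rw [lamF_at_self _ hδ]; norm_num
  rw [sum_lam hδ hsep hi, sum_lam_g hδ hsep hi, lamF_at_self _ hδ]
  ring

lemma phi_cont (k : ℕ) : Continuous fun x => PhiV y a Z δ x k := by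
  unfold PhiV
  have hc1 : Continuous fun x : HilbertCube => ∑ i, lamF (a i) δ x :=
    continuous_finset_sum _ fun i _ => continuous_lamF (a i) δ
  have hc2 : Continuous fun x : HilbertCube => ∑ i, lamF (a i) δ x * ((y i k : ℝ)) :=
    continuous_finset_sum _ fun i _ => (continuous_lamF (a i) δ).mul continuous_const
  by_cases h : k < m
  · simp only [dif_pos h]
    exact (((continuous_const.sub hc1).mul (continuous_const.add
      (continuous_finset_sum _ fun i _ => (continuous_lamF' (a i) δ).mul continuous_const)))).add hc2
  · simp only [dif_neg h]
    exact (((continuous_const.sub hc1).mul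
      ((continuous_apply (k - m)).subtype_val))).add hc2

/-! Slot and tail forms -/

lemma PhiV_slot (x : HilbertCube) (κ : Fin m) :
    PhiV y a Z δ x (κ : ℕ) =
      (1 - ∑ i, lamF (a i) δ x) *
        (Z κ + ∑ i, lamF' (a i) δ x * (((y i (κ : ℕ) : ℝ) - Z κ) / 2))
      + ∑ i, lamF (a i) δ x * ((y i (κ : ℕ) : ℝ)) := by
  unfold PhiV
  rw [dif_pos κ.isLt]

lemma PhiV_tail (x : HilbertCube) (k : ℕ) :
    PhiV y a Z δ x (m + k) =
      (1 - ∑ i, lamF (a i) δ x) * ((x k : ℝ))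
      + ∑ i, lamF (a i) δ x * ((y i (m + k) : ℝ)) := by
  unfold PhiV
  rw [dif_neg (by omega), Nat.add_sub_cancel_left]

variable (hr : ∀ i : Fin n, ∃ κ : Fin m, (y i (κ:ℕ) : ℝ) - Z κ ≠ 0)
variable (hgen : ∀ i j : Fin n, i ≠ j → ∀ p q : ℝ, p ≠ 0 →
  ¬ ∀ κ : Fin m, p * ((y i (κ:ℕ) : ℝ) - Z κ) = q * ((y j (κ:ℕ) : ℝ) - Z κ))

include hδ hsep in
lemma slot_active {x : HilbertCube} {i : Fin n} (hi : lamF (a i) δ x ≠ 0) (κ : Fin m) :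
    PhiV y a Z δ x (κ : ℕ) =
      (1 - lamF (a i) δ x) * (Z κ + ((y i (κ : ℕ) : ℝ) - Z κ) / 2)
      + lamF (a i) δ x * ((y i (κ : ℕ) : ℝ)) := by
  rw [PhiV_slot, sum_lam hδ hsep hi, sum_lam_g hδ hsep hi]
  have h1 : lamF' (a i) δ x = 1 := lamF'_eq_one hδ (lamF_ne hδ hi).le
  have hcol : ∑ j, lamF' (a j) δ x * (((y j (κ : ℕ) : ℝ) - Z κ) / 2)
      = lamF' (a i) δ x * (((y i (κ : ℕ) : ℝ) - Z κ) / 2) := by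
    refine sum_lam' hδ hsep ?_ _
    rw [h1]; norm_num
  rw [hcol, h1, one_mul]

include hδ hsep hr hgen in
lemma phi_inj : ∀ u v : HilbertCube,
    (∀ k, PhiV y a Z δ u k = PhiV y a Z δ v k) → u = v := by
  have contra : ∀ u v : HilbertCube, (∀ k, PhiV y a Z δ u k = PhiV y a Z δ v k) →
      ∀ i, lamF (a i) δ u ≠ 0 → (∀ j, lamF (a j) δ v = 0) → False := by
    intro u v h i hi hv
    set s := lamF (a i) δ u with hs
    have hs0 : 0 < s := lt_of_le_of_ne (lamF_nonneg _ _ _) (Ne.symm hi)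
    obtain ⟨hv1, hv2⟩ := sum_lam_zero hv
    by_cases hv' : ∃ j, lamF' (a j) δ v ≠ 0
    · obtain ⟨j, hj⟩ := hv'
      set γ := lamF' (a j) δ v with hγ
      have hγm := lamF'_mem (a j) δ v
      have hslot : ∀ κ : Fin m,
          ((1 + s)/2) * ((y i (κ:ℕ) : ℝ) - Z κ) = (γ/2) * ((y j (κ:ℕ) : ℝ) - Z κ) := by
        intro κ
        have hκ := h (κ : ℕ)
        rw [slot_active hδ hsep hi, PhiV_slot, hv1, hv2, sum_lam' hδ hsep hj] at hκ
        linear_combination hκ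
      by_cases hij : i = j
      · subst hij
        obtain ⟨κ₀, hκ₀⟩ := hr i
        have := hslot κ₀
        have heq : (1 + s)/2 = γ/2 := mul_right_cancel₀ hκ₀ this
        linarith [hγm.2]
      · exact hgen i j hij ((1+s)/2) (γ/2) (by positivity) hslot
    · push_neg at hv'
      obtain ⟨κ₀, hκ₀⟩ := hr i
      have hκ := h (κ₀ : ℕ)
      have hzero : ∑ j, lamF' (a j) δ v * (((y j (κ₀:ℕ) : ℝ) - Z κ₀) / 2) = 0 :=
        Finset.sum_eq_zero fun j _ => by rw [hv' j, zero_mul]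
      rw [slot_active hδ hsep hi, PhiV_slot, hv1, hv2, hzero] at hκ
      have : ((1 + s)/2) * ((y i (κ₀:ℕ) : ℝ) - Z κ₀) = 0 := by linear_combination hκ
      rcases mul_eq_zero.mp this with h1 | h1
      · linarith
      · exact hκ₀ h1
  intro u v h
  by_cases hu : ∃ i, lamF (a i) δ u ≠ 0
  · obtain ⟨i, hi⟩ := hu
    by_cases hvx : ∃ j, lamF (a j) δ v ≠ 0
    · obtain ⟨j, hj⟩ := hvx
      set s := lamF (a i) δ u with hs
      set t := lamF (a j) δ v with ht
      have hs0 : 0 < s := lt_of_le_of_ne (lamF_nonneg _ _ _) (Ne.symm hi)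
      have ht0 : 0 < t := lt_of_le_of_ne (lamF_nonneg _ _ _) (Ne.symm hj)
      have hslot : ∀ κ : Fin m,
          ((1 + s)/2) * ((y i (κ:ℕ) : ℝ) - Z κ) = ((1 + t)/2) * ((y j (κ:ℕ) : ℝ) - Z κ) := by
        intro κ
        have hκ := h (κ : ℕ)
        rw [slot_active hδ hsep hi, slot_active hδ hsep hj] at hκ
        linear_combination hκ
      by_cases hij : i = j
      · subst hij
        obtain ⟨κ₀, hκ₀⟩ := hr i
        have heq : (1 + s)/2 = (1 + t)/2 := mul_right_cancel₀ hκ₀ (hslot κ₀)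
        have hst : s = t := by linarith
        rcases eq_or_lt_of_le (lamF_le_one hδ u : s ≤ 1) with h1 | h1
        · have hu1 : u = a i := lamF_eq_one_imp hδ (by rw [← hs, ← h1])
          have hv1 : v = a i := lamF_eq_one_imp hδ (by rw [← ht, ← hst, ← h1])
          rw [hu1, hv1]
        · funext k
          apply Subtype.ext
          have hκ := h (m + k)
          rw [PhiV_tail, PhiV_tail, sum_lam hδ hsep hi, sum_lam_g hδ hsep hi,
            sum_lam hδ hsep hj, sum_lam_g hδ hsep hj, ← hs, ← ht, ← hst] at hκ
          have h2 : (1 - s) * ((u k : ℝ)) = (1 - s) * ((v k : ℝ)) := by linarith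
          exact mul_left_cancel₀ (by linarith) h2
      · exact absurd hslot (hgen i j hij ((1+s)/2) ((1+t)/2) (by positivity))
    · push_neg at hvx
      exact absurd (contra u v h i hi hvx) (by simp)
  · push_neg at hu
    by_cases hvx : ∃ j, lamF (a j) δ v ≠ 0
    · obtain ⟨j, hj⟩ := hvx
      exact absurd (contra v u (fun k => (h k).symm) j hj hu) (by simp)
    · push_neg at hvx
      funext k
      apply Subtype.ext
      have hκ := h (m + k)
      obtain ⟨hu1, hu2⟩ := sum_lam_zero hu
      obtain ⟨hv1, hv2⟩ := sum_lam_zero hvx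
      rw [PhiV_tail, PhiV_tail, hu1, hu2, hv1, hv2] at hκ
      linarith

end Phi


/-! ### Embedding a separable metrizable space into the Hilbert cube -/

lemma exists_embedding_HC (X : Type*) [TopologicalSpace X] [MetrizableSpace X]
    [SeparableSpace X] : ∃ e : X → HilbertCube, IsEmbedding e := by
  cases isEmpty_or_nonempty X with
  | inl h =>
    exact ⟨fun x => (h.false x).elim, Topology.IsEmbedding.of_subsingleton _⟩
  | inr h =>
    letI : MetricSpace X := TopologicalSpace.metrizableSpaceMetric X
    obtain ⟨u, hu⟩ := TopologicalSpace.exists_dense_seq X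
    set e : X → HilbertCube := fun x k =>
      ⟨min (dist x (u k)) 1, ⟨le_min dist_nonneg zero_le_one, min_le_right _ _⟩⟩ with he
    have hecont : Continuous e := by
      refine continuous_pi fun k => Continuous.subtype_mk ?_ _
      exact (continuous_id.dist continuous_const).min continuous_const
    have hind : IsInducing e := by
      rw [isInducing_iff_nhds]
      intro x
      refine le_antisymm ((hecont.tendsto x).le_comap) ?_
      rw [Filter.le_def]
      intro V hV
      obtain ⟨ε, hε, hball⟩ := Metric.mem_nhds_iff.mp hV
      set μ := min ε 1 / 3 with hμ
      have hμpos : 0 < μ := by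
        have : (0:ℝ) < min ε 1 := lt_min hε one_pos
        positivity
      obtain ⟨k, hk⟩ := hu.exists_dist_lt x hμpos
      have hμ1 : 3 * μ ≤ ε := by
        have : min ε 1 ≤ ε := min_le_left _ _
        simp only [hμ]; linarith
      have hμ2 : 3 * μ ≤ 1 := by
        have : min ε 1 ≤ 1 := min_le_right _ _
        simp only [hμ]; linarith
      have hWmem : ((fun w : HilbertCube => w k) ⁻¹' Metric.ball (e x k) μ) ∈ 𝓝 (e x) :=
        (Metric.isOpen_ball.preimage (continuous_apply k)).mem_nhds
          (by simpa [Metric.mem_ball, dist_self] using hμpos)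
      refine Filter.mem_of_superset (Filter.preimage_mem_comap hWmem) ?_
      · intro x' hx'
        simp only [Set.mem_preimage, Metric.mem_ball] at hx'
        apply hball
        simp only [Metric.mem_ball]
        have hdk : dist (e x' k) (e x k) < μ := hx'
        rw [Subtype.dist_eq] at hdk
        simp only [he] at hdk
        have h1 : min (dist x (u k)) 1 = dist x (u k) := min_eq_left (by linarith)
        rw [Real.dist_eq, h1] at hdk
        have h2 : min (dist x' (u k)) 1 < dist x (u k) + μ := by
          cases abs_sub_lt_iff.mp hdk with
          | intro hl hr => linarith
        have h3 : dist x (u k) + μ < 1 := by linarith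
        have h4 : min (dist x' (u k)) 1 = dist x' (u k) := by
          rcases min_cases (dist x' (u k)) 1 with ⟨hm, _⟩ | ⟨hm, hge⟩
          · exact hm
          · linarith [hm, h2]
        rw [h4] at h2
        calc dist x' x ≤ dist x' (u k) + dist (u k) x := dist_triangle _ _ _
          _ = dist x' (u k) + dist x (u k) := by rw [dist_comm (u k) x]
          _ < (dist x (u k) + μ) + dist x (u k) := by linarith
          _ < ε := by linarith
    exact ⟨e, hind.isEmbedding⟩


/-! ### The main lemma: an injective continuous self-map of the Hilbert cube with
finitely many prescribed values -/

lemma exists_prescribed (n : ℕ) (y z : Fin n → HilbertCube)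
    (hy : Function.Injective y) (hz : Function.Injective z) :
    ∃ Ψ : HilbertCube → HilbertCube,
      Continuous Ψ ∧ Function.Injective Ψ ∧ ∀ i, Ψ (z i) = y i := by
  classical
  rcases Nat.eq_zero_or_pos n with hn | hn
  · subst hn
    exact ⟨id, continuous_id, Function.injective_id, fun i => i.elim0⟩
  -- Step 1: a block of coordinates separating the y's
  set g : Fin n × Fin n → ℕ := fun pr =>
    if h : ∃ k, y pr.1 k ≠ y pr.2 k then h.choose else 0 with hgdef
  set m : ℕ := 2 + Finset.univ.sup g with hmdef
  have hm2 : 2 ≤ m := Nat.le_add_right 2 _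
  have hsepm : ∀ i j : Fin n, i ≠ j →
      ∃ k : Fin m, ((y i (k:ℕ) : ℝ)) ≠ ((y j (k:ℕ) : ℝ)) := by
    intro i j hij
    have hyij : ∃ k, y i k ≠ y j k := Function.ne_iff.mp (hy.ne hij)
    have hlt : g (i, j) < m := by
      have := Finset.le_sup (f := g) (Finset.mem_univ (i, j))
      omega
    have hgv : g (i, j) = hyij.choose := by
      rw [hgdef]; exact dif_pos hyij
    refine ⟨⟨g (i, j), hlt⟩, fun hc => ?_⟩
    have := hyij.choose_spec
    rw [← hgv] at this
    exact this (Subtype.ext hc)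
  -- Step 2: generic center
  obtain ⟨Z, hZmem, hZr, hZgen⟩ :=
    exists_generic hm2 (fun i (k : Fin m) => (y i (k:ℕ) : ℝ)) hsepm
  -- Step 3: the separation radius for the z's
  set D : Finset ℝ :=
    (Finset.univ.offDiag).image (fun pr : Fin n × Fin n => dH (z pr.1) (z pr.2)) with hD
  have hDne : (insert (1:ℝ) D).Nonempty := ⟨1, Finset.mem_insert_self _ _⟩
  set δ₀ : ℝ := (insert (1:ℝ) D).min' hDne / 2 with hδ₀
  have hposall : ∀ r ∈ insert (1:ℝ) D, 0 < r := by
    intro r hr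
    rcases Finset.mem_insert.mp hr with h1 | h1
    · rw [h1]; norm_num
    · rw [hD] at h1
      obtain ⟨pr, hpr, rfl⟩ := Finset.mem_image.mp h1
      have hne : pr.1 ≠ pr.2 := (Finset.mem_offDiag.mp hpr).2.2
      refine lt_of_le_of_ne (dH_nonneg _ _) fun h0 => ?_
      exact hne (hz (dH_eq_zero h0.symm))
  have hδ₀pos : 0 < δ₀ := by
    rw [hδ₀]
    have := hposall _ (Finset.min'_mem _ hDne)
    linarith
  have hδ₀sep : ∀ i j : Fin n, i ≠ j → 2 * δ₀ ≤ dH (z i) (z j) := by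
    intro i j hij
    have hmem : dH (z i) (z j) ∈ insert (1:ℝ) D := by
      refine Finset.mem_insert_of_mem ?_
      rw [hD]
      exact Finset.mem_image.mpr ⟨(i, j),
        Finset.mem_offDiag.mpr ⟨Finset.mem_univ _, Finset.mem_univ _, hij⟩, rfl⟩
    have := Finset.min'_le _ _ hmem
    rw [hδ₀]; linarith
  -- Step 4: the first-coordinate marking map A
  set tv : Fin n → ℝ := fun i => (((i:ℕ):ℝ) + 1) / ((n:ℝ) + 1) with htv
  have htv01 : ∀ i, tv i ∈ Icc (0:ℝ) 1 := by
    intro i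
    constructor
    · rw [htv]; positivity
    · rw [htv, div_le_one (by positivity)]
      have : ((i:ℕ):ℝ) ≤ (n:ℝ) := by
        exact_mod_cast le_of_lt i.isLt
      linarith
  have htvsep : ∀ i j : Fin n, i ≠ j → 1 / ((n:ℝ) + 1) ≤ |tv i - tv j| := by
    intro i j hij
    have h1 : tv i - tv j = ((((i:ℕ):ℝ)) - (((j:ℕ):ℝ))) / ((n:ℝ) + 1) := by
      rw [htv, div_sub_div_same]
      ring_nf
    have hne : ((i:ℕ):ℤ) ≠ ((j:ℕ):ℤ) := by
      exact_mod_cast fun hh => hij (Fin.ext hh)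
    have h3 : (1:ℤ) ≤ |((i:ℕ):ℤ) - ((j:ℕ):ℤ)| := Int.one_le_abs (sub_ne_zero_of_ne hne)
    have h4 : (1:ℝ) ≤ |(((i:ℕ):ℝ)) - (((j:ℕ):ℝ))| := by
      have h5 : ((1:ℤ):ℝ) ≤ ((|((i:ℕ):ℤ) - ((j:ℕ):ℤ)|:ℤ):ℝ) := Int.cast_le.mpr h3
      push_cast at h5
      exact h5
    rw [h1, abs_div, abs_of_pos (by positivity : (0:ℝ) < (n:ℝ) + 1)]
    gcongr
  -- the marking function
  set alpha : HilbertCube → ℝ :=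
    fun x => min 1 (∑ i, tv i * max 0 (1 - dH x (z i) / δ₀)) with halpha
  have halpha01 : ∀ x, alpha x ∈ Icc (0:ℝ) 1 := by
    intro x
    refine ⟨le_min zero_le_one ?_, min_le_left _ _⟩
    exact Finset.sum_nonneg fun i _ => mul_nonneg (htv01 i).1 (le_max_left _ _)
  have halphacont : Continuous alpha := by
    refine continuous_const.min (continuous_finset_sum _ fun i _ => ?_)
    exact continuous_const.mul
      (continuous_const.max (continuous_const.sub ((dH_continuous (z i)).div_const δ₀)))
  have halphaz : ∀ i, alpha (z i) = tv i := by
    intro i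
    have hsum : ∑ j, tv j * max 0 (1 - dH (z i) (z j) / δ₀) = tv i := by
      rw [Finset.sum_eq_single_of_mem i (Finset.mem_univ i) ?_]
      · rw [dH_self, zero_div, sub_zero, max_eq_right zero_le_one, mul_one]
      · intro j _ hji
        have h2 : 2 * δ₀ ≤ dH (z i) (z j) := by
          rw [dH_symm]
          exact hδ₀sep j i hji
        have h3 : 1 - dH (z i) (z j) / δ₀ ≤ 0 := by
          rw [sub_nonpos, le_div_iff₀ hδ₀pos]
          linarith
        rw [max_eq_left h3, mul_zero]
    rw [halpha]
    simp only
    rw [hsum]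
    exact min_eq_right (htv01 i).2
  set A : HilbertCube → HilbertCube := fun x k =>
    Nat.casesOn k (⟨alpha x, halpha01 x⟩ : unitInterval) (fun k' => x k') with hA
  have hAcont : Continuous A := by
    refine continuous_pi fun k => ?_
    cases k with
    | zero => exact Continuous.subtype_mk halphacont _
    | succ k' => exact continuous_apply k'
  have hAinj : Function.Injective A := by
    intro x x' hxx
    funext k
    exact congrFun hxx (k + 1)
  set a : Fin n → HilbertCube := fun i => A (z i) with ha
  have ha0 : ∀ i, ((a i 0 : ℝ)) = tv i := by
    intro i
    rw [ha]
    simp only [hA]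
    exact halphaz i
  -- Step 5: anchor separation
  set δ : ℝ := 1 / (8 * ((n:ℝ) + 1)) with hδdef
  have hδpos : 0 < δ := by rw [hδdef]; positivity
  have hasep : ∀ i j : Fin n, i ≠ j → 8 * δ ≤ dH (a i) (a j) := by
    intro i j hij
    have hcoord := dH_coord_le (a i) (a j) 0
    rw [pow_zero, one_mul, ha0 i, ha0 j] at hcoord
    have h1 := htvsep i j hij
    have h2 : 8 * δ = 1 / ((n:ℝ) + 1) := by
      rw [hδdef]
      field_simp
    linarith
  -- Step 6: assemble
  have hr : ∀ i : Fin n, ∃ κ : Fin m, ((y i (κ:ℕ) : ℝ)) - Z κ ≠ 0 := hZr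
  have hgen : ∀ i j : Fin n, i ≠ j → ∀ p q : ℝ, p ≠ 0 →
      ¬ ∀ κ : Fin m, p * (((y i (κ:ℕ) : ℝ)) - Z κ) = q * (((y j (κ:ℕ) : ℝ)) - Z κ) := hZgen
  set Phi : HilbertCube → HilbertCube :=
    fun x k => ⟨PhiV y a Z δ x k, phi_mem hδpos hasep hZmem x k⟩ with hPhi
  refine ⟨fun x => Phi (A x), ?_, ?_, ?_⟩
  · have hPc : Continuous Phi :=
      continuous_pi fun k => Continuous.subtype_mk (phi_cont k) _
    exact hPc.comp hAcont
  · intro x x' hxx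
    refine hAinj (phi_inj hδpos hasep hr hgen (A x) (A x') fun k => ?_)
    have := congrFun hxx k
    rw [hPhi] at this
    exact congrArg Subtype.val this
  · intro i
    have : Phi (a i) = y i := by
      funext k
      apply Subtype.ext
      exact phi_anchor hδpos hasep i k
    show Phi (A (z i)) = y i
    exact this

end Stmt11Aux

end Stmt11Aux

theorem stmt11 (F : Set HilbertCube) (hF : F.Finite) {X : Type*}
    [TopologicalSpace X] [MetrizableSpace X] [SeparableSpace X]
    (hcard : ∃ g : F → X, Function.Injective g) :
    ∃ f : X → HilbertCube, IsEmbedding f ∧ F ⊆ Set.range f := by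
  classical
  obtain ⟨g, hg⟩ := hcard
  obtain ⟨e, he⟩ := Stmt11Aux.exists_embedding_HC X
  letI : Fintype ↥F := hF.fintype
  set n := Fintype.card ↥F with hn
  set eqv : ↥F ≃ Fin n := Fintype.equivFin ↥F with heqv
  set yv : Fin n → HilbertCube := fun i => ((eqv.symm i : ↥F) : HilbertCube) with hyv
  have hyinj : Function.Injective yv :=
    Subtype.val_injective.comp eqv.symm.injective
  set zv : Fin n → HilbertCube := fun i => e (g (eqv.symm i)) with hzv
  have hzinj : Function.Injective zv :=
    he.injective.comp (hg.comp eqv.symm.injective)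
  obtain ⟨Ψ, hΨc, hΨi, hΨv⟩ := Stmt11Aux.exists_prescribed n yv zv hyinj hzinj
  refine ⟨Ψ ∘ e, ?_, ?_⟩
  · exact (hΨc.isClosedEmbedding hΨi).toIsEmbedding.comp he
  · intro p hp
    refine ⟨g (eqv.symm (eqv ⟨p, hp⟩)), ?_⟩
    have h1 := hΨv (eqv ⟨p, hp⟩)
    have h2 : yv (eqv ⟨p, hp⟩) = p := by
      rw [hyv]
      simp only [Equiv.symm_apply_apply]
    calc (Ψ ∘ e) (g (eqv.symm (eqv ⟨p, hp⟩))) = Ψ (zv (eqv ⟨p, hp⟩)) := rfl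
      _ = yv (eqv ⟨p, hp⟩) := h1
      _ = p := h2
end

section
/- The set of all subsets of [0,1]^ω homeomorphic to [0,1]^ω is dense in C([0,1]^ω) \ {∅}, the hyperspace of nonempty subcontinua of the Hilbert cube with the Vietoris topology. -/
open Topology TopologicalSpace Set

/-- A basic "cylinder is path connected" fact, giving local path connectedness. -/
lemma hc_segment {x : HilbertCube} {I : Finset ℕ} {ε : ℕ → ℝ}
    {y z : HilbertCube} (hy : ∀ k ∈ I, dist (y k) (x k) < ε k)
    (hz : ∀ k ∈ I, dist (z k) (x k) < ε k) :
    JoinedIn {w : HilbertCube | ∀ k ∈ I, dist (w k) (x k) < ε k} y z := by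
  refine ⟨⟨⟨fun t k => ⟨(1 - t.1) * (y k).1 + t.1 * (z k).1, ?_⟩, ?_⟩, ?_, ?_⟩, ?_⟩
  · exact (convex_Icc (0:ℝ) 1) (y k).2 (z k).2 (by simp [sub_nonneg]; exact t.2.2)
      t.2.1 (by ring)
  · exact continuous_pi fun k => Continuous.subtype_mk
      (((continuous_const.sub continuous_subtype_val).mul continuous_const).add
        (continuous_subtype_val.mul continuous_const)) _
  · ext k; simp
  · ext k; simp
  · intro t k hk
    have h1 : dist (((1 - t.1) * (y k).1 + t.1 * (z k).1 : ℝ)) (x k).1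
        ≤ (1 - t.1) * dist (y k).1 (x k).1 + t.1 * dist (z k).1 (x k).1 := by
      rw [Real.dist_eq, Real.dist_eq, Real.dist_eq]
      have : (1 - t.1) * (y k).1 + t.1 * (z k).1 - (x k).1
          = (1 - t.1) * ((y k).1 - (x k).1) + t.1 * ((z k).1 - (x k).1) := by ring
      rw [this]
      refine (abs_add_le _ _).trans ?_
      rw [abs_mul, abs_mul, abs_of_nonneg (by simp [sub_nonneg]; exact t.2.2),
        abs_of_nonneg t.2.1]
    have hyk := hy k hk
    have hzk := hz k hk
    rw [Subtype.dist_eq] at hyk hzk ⊢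
    calc dist (((1 - t.1) * (y k).1 + t.1 * (z k).1 : ℝ)) (x k).1
        ≤ (1 - t.1) * dist (y k).1 (x k).1 + t.1 * dist (z k).1 (x k).1 := h1
      _ < ε k := by
          rcases eq_or_lt_of_le t.2.1 with h0 | h0
          · rw [← h0]; simpa using hyk
          · nlinarith [mul_pos h0 (sub_pos.2 hzk),
              mul_nonneg (sub_nonneg.2 t.2.2) (sub_nonneg.2 hyk.le)]

instance hc_locPathConnected : LocallyPathConnectedSpace HilbertCube := by
  rw [locPathConnectedSpace_iff_pathComponentIn_mem_nhds]
  intro x u hu hxu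
  obtain ⟨I, v, hv, hvu⟩ := isOpen_pi_iff.1 hu x hxu
  choose ε hε hball using fun k (hk : k ∈ I) =>
    Metric.isOpen_iff.1 (hv k hk).1 (x k) (hv k hk).2
  classical
  set ε' : ℕ → ℝ := fun k => if hk : k ∈ I then ε k hk else 1 with hε'
  set s : Set HilbertCube := {w | ∀ k ∈ I, dist (w k) (x k) < ε' k} with hs
  have hs_open : IsOpen s := by
    have : s = ⋂ k ∈ I, (fun w : HilbertCube => w k) ⁻¹' Metric.ball (x k) (ε' k) := by
      ext w; simp [hs, Metric.mem_ball]
    rw [this]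
    exact isOpen_biInter_finset fun k hk =>
      (Metric.isOpen_ball).preimage (continuous_apply k)
  have hxs : x ∈ s := fun k hk => by
    rw [show ε' k = ε k hk from dif_pos hk]; simpa using hε k hk
  have hsu : s ⊆ u := by
    intro w hw
    refine hvu fun k hk => hball k hk ?_
    have h := hw k hk
    rw [show ε' k = ε k hk from dif_pos hk] at h
    exact Metric.mem_ball.2 h
  have hs_pc : IsPathConnected s :=
    ⟨x, hxs, fun {y} hy => hc_segment hxs hy⟩
  exact Filter.mem_of_superset (hs_open.mem_nhds hxs)
    (hs_pc.subset_pathComponentIn hxs hsu)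

/-- A point of an open set has a whole cylinder (fixing finitely many coordinates)
inside the open set. -/
lemma cylinder_mem {W : Set HilbertCube} (hW : IsOpen W) {x : HilbertCube} (hx : x ∈ W) :
    ∃ N, ∀ z : HilbertCube, (∀ k < N, z k = x k) → z ∈ W := by
  obtain ⟨I, u, hu, huW⟩ := isOpen_pi_iff.1 hW x hx
  refine ⟨I.sup id + 1, fun z hz => huW fun a ha => ?_⟩
  rw [hz a (Nat.lt_succ_of_le (Finset.le_sup (f := id) ha))]
  exact (hu a ha).2

/-- Uniform version over a compact set. -/
lemma cylinder_subset_compact {K U : Set HilbertCube} (hK : IsCompact K) (hU : IsOpen U)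
    (hKU : K ⊆ U) : ∃ N, ∀ y ∈ K, ∀ z : HilbertCube, (∀ k < N, z k = y k) → z ∈ U := by
  choose I u hu huU using fun (y : K) => isOpen_pi_iff.1 hU y.1 (hKU y.2)
  have hcov : K ⊆ ⋃ y : K, (I y : Set ℕ).pi (u y) := fun y hy =>
    Set.mem_iUnion.2 ⟨⟨y, hy⟩, fun a ha => (hu ⟨y, hy⟩ a ha).2⟩
  obtain ⟨t, ht⟩ := hK.elim_finite_subcover (fun y : K => (I y : Set ℕ).pi (u y))
    (fun y => isOpen_set_pi (Finset.finite_toSet _) (fun a ha => (hu y a ha).1)) hcov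
  classical
  refine ⟨(t.sup fun y => (I y).sup id) + 1, fun y hy z hz => ?_⟩
  obtain ⟨i, hit, hyi⟩ := Set.mem_iUnion₂.1 (ht hy)
  refine huU i fun a ha => ?_
  rw [hz a (Nat.lt_succ_of_le ((Finset.le_sup (f := id) ha).trans
    (Finset.le_sup (f := fun y => (I y).sup id) hit)))]
  exact hyi a ha

/-- Points of a preconnected subset of an open set are joined inside the open set. -/
lemma joinedIn_of_preconnected {A U : Set HilbertCube} (hA : IsPreconnected A)
    (hAU : A ⊆ U) (hU : IsOpen U) {x y : HilbertCube} (hx : x ∈ A) (hy : y ∈ A) :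
    JoinedIn U x y := by
  set P := pathComponentIn U x with hP
  have hPopen : IsOpen P := hU.pathComponentIn x
  have hQopen : IsOpen (U \ P) := by
    rw [isOpen_iff_mem_nhds]
    intro z hz
    refine Filter.mem_of_superset ((hU.pathComponentIn z).mem_nhds
      (mem_pathComponentIn_self hz.1)) fun w hw => ⟨pathComponentIn_subset hw, fun hwP => ?_⟩
    have heq : pathComponentIn U z = pathComponentIn U x :=
      (pathComponentIn_congr hw).symm.trans (pathComponentIn_congr hwP)
    exact hz.2 (by rw [hP, ← heq]; exact mem_pathComponentIn_self hz.1)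
  have hdisj : Disjoint P (U \ P) := Set.disjoint_sdiff_right.mono_left le_rfl
  have hsub : A ⊆ P ∪ (U \ P) := fun w hw => by
    by_cases h : w ∈ P
    · exact Or.inl h
    · exact Or.inr ⟨hAU hw, h⟩
  have hxP : (A ∩ P).Nonempty := ⟨x, hx, mem_pathComponentIn_self (hAU hx)⟩
  have : A ⊆ P := hA.subset_left_of_subset_union hPopen hQopen hdisj hsub hxP
  exact this hy

/-- A loop through finitely many points, inside an open set. -/
lemma visit_loop {U : Set HilbertCube} {a : HilbertCube}
    (ha : a ∈ U) (l : List HilbertCube) (hl : ∀ y ∈ l, JoinedIn U a y) :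
    ∃ γ : Path a a, (∀ t, γ t ∈ U) ∧ ∀ y ∈ l, y ∈ Set.range γ := by
  induction l with
  | nil => exact ⟨Path.refl a, fun t => by simpa using ha, by simp⟩
  | cons y l ih =>
    obtain ⟨γ, hγU, hγl⟩ := ih fun z hz => hl z (List.mem_cons_of_mem _ hz)
    obtain ⟨δ, hδU⟩ := hl y List.mem_cons_self
    refine ⟨(δ.trans δ.symm).trans γ, fun t => ?_, fun z hz => ?_⟩
    · have hr : Set.range ((δ.trans δ.symm).trans γ) ⊆ U := by
        rw [Path.trans_range, Path.trans_range, Path.symm_range]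
        rintro w (( ⟨s, rfl⟩ | ⟨s, rfl⟩) | ⟨s, rfl⟩)
        · exact hδU s
        · exact hδU s
        · exact hγU s
      exact hr ⟨t, rfl⟩
    · rw [Path.trans_range, Path.trans_range, Path.symm_range]
      rcases List.mem_cons.1 hz with rfl | hz
      · exact Or.inl (Or.inl ⟨1, by simp⟩)
      · exact Or.inr (hγl z hz)

/-- The Hilbert cube is homeomorphic to `[0,1] ×` itself. -/
def consHomeo : unitInterval × HilbertCube ≃ₜ HilbertCube where
  toFun p := fun n => Nat.casesOn n p.1 p.2
  invFun x := (x 0, fun n => x (n + 1))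
  left_inv p := rfl
  right_inv x := by funext n; cases n <;> rfl
  continuous_toFun := continuous_pi fun n => by
    cases n with
    | zero => exact continuous_fst
    | succ n => exact (continuous_apply n).comp continuous_snd
  continuous_invFun :=
    (continuous_apply 0).prodMk (continuous_pi fun n => continuous_apply (n + 1))

/-- Extraction of a basic Vietoris neighborhood from an open set in the hyperspace. -/
lemma vietoris_basic {X : Type*} [TopologicalSpace X] {𝒰 : Set (Kt X)}
    (hopen : IsOpen 𝒰) {A : Kt X} (hmem : A ∈ 𝒰) :
    ∃ (U : Set X) (𝒱 : Finset (Set X)), IsOpen U ∧ A.1 ⊆ U ∧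
      (∀ V ∈ 𝒱, IsOpen V ∧ (A.1 ∩ V).Nonempty) ∧
      ∀ B : Kt X, B.1 ⊆ U → (∀ V ∈ 𝒱, (B.1 ∩ V).Nonempty) → B ∈ 𝒰 := by
  classical
  have h : TopologicalSpace.GenerateOpen
      ({S | ∃ U : Set X, IsOpen U ∧ S = {A : Kt X | A.1 ⊆ U}} ∪
       {S | ∃ U : Set X, IsOpen U ∧ S = {A : Kt X | (A.1 ∩ U).Nonempty}}) 𝒰 := hopen
  clear hopen
  induction h with
  | @basic S hS =>
    rcases hS with ⟨U, hU, rfl⟩ | ⟨U, hU, rfl⟩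
    · exact ⟨U, ∅, hU, hmem, by simp, fun B hB _ => hB⟩
    · exact ⟨Set.univ, {U}, isOpen_univ, Set.subset_univ _,
        by simpa using ⟨hU, hmem⟩, fun B _ h => by simpa using h U (Finset.mem_singleton_self U)⟩
  | univ => exact ⟨Set.univ, ∅, isOpen_univ, Set.subset_univ _, by simp, by simp⟩
  | inter s t _ _ ihs iht =>
    obtain ⟨U₁, 𝒱₁, hU₁, hAU₁, h𝒱₁, hB₁⟩ := ihs hmem.1
    obtain ⟨U₂, 𝒱₂, hU₂, hAU₂, h𝒱₂, hB₂⟩ := iht hmem.2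
    refine ⟨U₁ ∩ U₂, 𝒱₁ ∪ 𝒱₂, hU₁.inter hU₂, Set.subset_inter hAU₁ hAU₂, ?_, ?_⟩
    · intro V hV
      rcases Finset.mem_union.1 hV with h | h
      · exact h𝒱₁ V h
      · exact h𝒱₂ V h
    · intro B hB hBV
      exact ⟨hB₁ B (hB.trans Set.inter_subset_left)
          (fun V hV => hBV V (Finset.mem_union_left _ hV)),
        hB₂ B (hB.trans Set.inter_subset_right)
          (fun V hV => hBV V (Finset.mem_union_right _ hV))⟩
  | sUnion T _ ihT =>
    obtain ⟨t, htT, hAt⟩ := hmem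
    obtain ⟨U, 𝒱, hU, hAU, h𝒱, hB⟩ := ihT t htT hAt
    exact ⟨U, 𝒱, hU, hAU, h𝒱, fun B h1 h2 => ⟨t, htT, hB B h1 h2⟩⟩

theorem stmt12 (A : Kt HilbertCube) (hA : IsConnected A.1)
    (𝒰 : Set (Kt HilbertCube)) (hopen : IsOpen 𝒰) (hmem : A ∈ 𝒰) :
    ∃ B ∈ 𝒰, IsConnected B.1 ∧ Nonempty (↥B.1 ≃ₜ HilbertCube) := by
  classical
  obtain ⟨U, 𝒱, hUopen, hAU, h𝒱, hBmem⟩ := vietoris_basic hopen hmem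
  obtain ⟨a, ha⟩ := hA.nonempty
  set f : Set HilbertCube → HilbertCube :=
    fun V => if h : (A.1 ∩ V).Nonempty then h.choose else a with hfdef
  have hf : ∀ V ∈ 𝒱, f V ∈ A.1 ∩ V := by
    intro V hV
    simp only [hfdef, dif_pos (h𝒱 V hV).2]
    exact (h𝒱 V hV).2.choose_spec
  have hl : ∀ y ∈ 𝒱.toList.map f, JoinedIn U a y := by
    intro y hy
    obtain ⟨V, hV, rfl⟩ := List.mem_map.1 hy
    exact joinedIn_of_preconnected hA.isPreconnected hAU hUopen ha
      (hf V (Finset.mem_toList.1 hV)).1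
  obtain ⟨γ, hγU, hγl⟩ := visit_loop (hAU ha) (𝒱.toList.map f) hl
  have hK : IsCompact (Set.range γ) := isCompact_range γ.continuous
  have hKU : Set.range γ ⊆ U := by rintro _ ⟨t, rfl⟩; exact hγU t
  obtain ⟨N₀, hN₀⟩ := cylinder_subset_compact hK hUopen hKU
  set g : Set HilbertCube → ℕ := fun V =>
    if h : ∃ N, ∀ z : HilbertCube, (∀ k < N, z k = f V k) → z ∈ V then h.choose else 0
    with hgdef
  have hg : ∀ V ∈ 𝒱, ∀ z : HilbertCube, (∀ k < g V, z k = f V k) → z ∈ V := by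
    intro V hV
    have hex := cylinder_mem (h𝒱 V hV).1 (hf V hV).2
    simp only [hgdef, dif_pos hex]
    exact hex.choose_spec
  set N : ℕ := max N₀ (𝒱.sup g) with hNdef
  set F : unitInterval × HilbertCube → HilbertCube :=
    fun p k => if k < N then γ p.1 k else if k = N then p.1 else p.2 (k - N - 1) with hFdef
  have hFc : Continuous F := by
    refine continuous_pi fun k => ?_
    by_cases h1 : k < N
    · simp only [hFdef, if_pos h1]
      exact (continuous_apply k).comp (γ.continuous.comp continuous_fst)
    · by_cases h2 : k = N
      · simp only [hFdef, if_neg h1, if_pos h2]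
        exact continuous_fst
      · simp only [hFdef, if_neg h1, if_neg h2]
        exact (continuous_apply _).comp continuous_snd
  have hFinj : Function.Injective F := by
    intro p q hpq
    have ht : p.1 = q.1 := by
      have h := congrFun hpq N
      simpa [hFdef, lt_irrefl] using h
    have hx : p.2 = q.2 := by
      funext j
      have h := congrFun hpq (N + 1 + j)
      have h1 : ¬ (N + 1 + j < N) := by omega
      have h2 : N + 1 + j ≠ N := by omega
      simpa [hFdef, h1, h2, show N + 1 + j - N - 1 = j by omega] using h
    exact Prod.ext ht hx
  have hemb := hFc.isClosedEmbedding hFinj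
  refine ⟨⟨Set.range F, isCompact_range hFc⟩, ?_, ?_, ?_⟩
  · refine hBmem _ ?_ ?_
    · rintro _ ⟨p, rfl⟩
      refine hN₀ (γ p.1) ⟨p.1, rfl⟩ _ fun k hk => ?_
      simp only [hFdef]; exact if_pos (show k < N from lt_of_lt_of_le hk (le_max_left _ _))
    · intro V hV
      obtain ⟨t, ht⟩ := hγl (f V) (List.mem_map.2 ⟨V, Finset.mem_toList.2 hV, rfl⟩)
      refine ⟨F (t, fun _ => 0), ⟨(t, fun _ => 0), rfl⟩, ?_⟩
      refine hg V hV _ fun k hk => ?_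
      have hkN : k < N := lt_of_lt_of_le hk
        ((Finset.le_sup (f := g) hV).trans (le_max_right _ _))
      simp only [hFdef, if_pos hkN]
      exact congrFun ht k
  · exact isConnected_range hFc
  · exact ⟨(Topology.IsEmbedding.toHomeomorph hemb.toIsEmbedding).symm.trans consHomeo⟩
end

section
/- For every type t in the type poset T ∪ {∞}, the family U_t ∩ K(X) = {K ∈ K(X) : t(K) ≥ t} is a Gδ subset of the hyperspace K(X) for every metrizable space X. -/
open Topology TopologicalSpace Set

section aux
variable {X : Type*} [TopologicalSpace X]

def upperS (U : Set X) : Set (Kt X) := {A : Kt X | A.1 ⊆ U}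
def lowerS (U : Set X) : Set (Kt X) := {A : Kt X | (A.1 ∩ U).Nonempty}

lemma isOpen_upperS {U : Set X} (hU : IsOpen U) : IsOpen (upperS U) :=
  TopologicalSpace.GenerateOpen.basic _ (Or.inl ⟨U, hU, rfl⟩)

lemma isOpen_lowerS {U : Set X} (hU : IsOpen U) : IsOpen (lowerS U) :=
  TopologicalSpace.GenerateOpen.basic _ (Or.inr ⟨U, hU, rfl⟩)

/-- `K` admits a cover by `m` disjoint open sets, each meeting `K`, such that for `i < n`
the `i`-th piece contains at least `k` points of `K`. -/
def piecesO (X : Type*) [TopologicalSpace X] (m n k : ℕ) : Set (Kt X) :=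
  {K | ∃ U : Fin m → Set X, (∀ i, IsOpen (U i)) ∧ Pairwise (Function.onFun Disjoint U) ∧
    K.1 ⊆ ⋃ i, U i ∧ (∀ i, (K.1 ∩ U i).Nonempty) ∧
    ∀ i : Fin m, (i : ℕ) < n → ∃ T : Finset X, ↑T ⊆ K.1 ∩ U i ∧ k ≤ T.card}

/-- Finitely many points with assigned open neighborhoods can be separated by
pairwise disjoint open sets. -/
lemma finset_point_sep [T2Space X] (F : Finset X) (U : X → Set X)
    (hUo : ∀ x ∈ F, IsOpen (U x)) (hxU : ∀ x ∈ F, x ∈ U x) :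
    ∃ V : X → Set X, (∀ x ∈ F, IsOpen (V x) ∧ x ∈ V x ∧ V x ⊆ U x) ∧
      Set.Pairwise ↑F (Function.onFun Disjoint V) := by
  classical
  induction F using Finset.induction_on with
  | empty => exact ⟨U, by simp, by simp⟩
  | insert _ _ ha ih =>
    rename_i a F
    obtain ⟨V, hV, hVp⟩ := ih (fun x hx => hUo x (Finset.mem_insert_of_mem hx))
      (fun x hx => hxU x (Finset.mem_insert_of_mem hx))
    have hsep : ∀ x : X, ∃ p : Set X × Set X, IsOpen p.1 ∧ IsOpen p.2 ∧ a ∈ p.1 ∧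
        (x ∈ F → x ∈ p.2 ∧ Disjoint p.1 p.2) := by
      intro x
      by_cases hx : x ∈ F
      · obtain ⟨A, B, hA, hB, haA, hxB, hd⟩ :=
          t2_separation (show a ≠ x by rintro rfl; exact ha hx)
        exact ⟨(A, B), hA, hB, haA, fun _ => ⟨hxB, hd⟩⟩
      · exact ⟨(univ, univ), isOpen_univ, isOpen_univ, mem_univ _, fun h => absurd h hx⟩
    choose p hp1 hp2 hpa hpF using hsep
    refine ⟨fun y => if y = a then U a ∩ ⋂ x ∈ F, (p x).1 else V y ∩ (p y).2, ?_, ?_⟩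
    · intro x hx0
      by_cases hxa : x = a
      · subst hxa
        simp only [if_pos rfl]
        refine ⟨(hUo x hx0).inter (isOpen_biInter_finset fun y _ => hp1 y), ⟨hxU x hx0, ?_⟩,
          inter_subset_left⟩
        exact mem_iInter₂.2 fun y _ => hpa y
      · have hx : x ∈ F := (Finset.mem_insert.1 hx0).resolve_left hxa
        simp only [if_neg hxa]
        exact ⟨(hV x hx).1.inter (hp2 x), ⟨(hV x hx).2.1, (hpF x hx).1⟩,
          (inter_subset_left).trans (hV x hx).2.2⟩
    · rw [Finset.coe_insert]
      refine @Set.pairwise_insert_of_symm _ _ _ _ ⟨fun _ _ h => Disjoint.symm h⟩ |>.2 ⟨?_, ?_⟩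
      · intro x hx y hy hxy
        have hxa : x ≠ a := by rintro rfl; exact ha hx
        have hya : y ≠ a := by rintro rfl; exact ha hy
        simp only [Function.onFun, if_neg hxa, if_neg hya]
        exact ((hVp hx hy hxy).mono inter_subset_left inter_subset_left)
      · intro x hx _
        have hxa : x ≠ a := by rintro rfl; exact ha hx
        simp only [Function.onFun, if_pos rfl, if_neg hxa]
        refine Disjoint.mono ?_ inter_subset_right ((hpF x hx).2)
        exact inter_subset_right.trans (biInter_subset_of_mem hx)

end aux
section aux2
variable {X : Type*} [TopologicalSpace X]

lemma isOpen_piecesO [T2Space X] (m n k : ℕ) : IsOpen (piecesO X m n k) := by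
  classical
  rw [isOpen_iff_forall_mem_open]
  rintro K ⟨U, hUo, hUd, hcov, hne, hbig⟩
  have hT : ∀ i : Fin m, ∃ T : Finset X, ↑T ⊆ K.1 ∩ U i ∧ ((i : ℕ) < n → k ≤ T.card) := by
    intro i
    by_cases hi : (i : ℕ) < n
    · obtain ⟨T, hT1, hT2⟩ := hbig i hi
      exact ⟨T, hT1, fun _ => hT2⟩
    · exact ⟨∅, by simp, fun h => absurd h hi⟩
  choose T hTsub hTcard using hT
  set F : Finset X := Finset.univ.biUnion T with hF
  set Uf : X → Set X := fun x => ⋂ j ∈ Finset.univ.filter (fun i => x ∈ U i), U j with hUf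
  have hUfo : ∀ x ∈ F, IsOpen (Uf x) := fun x _ =>
    isOpen_biInter_finset fun j _ => hUo j
  have hUfm : ∀ x ∈ F, x ∈ Uf x := by
    intro x _
    exact mem_iInter₂.2 fun j hj => (Finset.mem_filter.1 hj).2
  have hUfsub : ∀ (x : X) (i : Fin m), x ∈ U i → Uf x ⊆ U i := by
    intro x i hx
    exact biInter_subset_of_mem (Finset.mem_filter.2 ⟨Finset.mem_univ i, hx⟩)
  obtain ⟨V, hV, hVp⟩ := finset_point_sep F Uf hUfo hUfm
  refine ⟨upperS (⋃ i, U i) ∩ (⋂ i, lowerS (U i)) ∩ ⋂ i, ⋂ x ∈ T i, lowerS (V x), ?_, ?_, ?_⟩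
  · -- W ⊆ piecesO
    rintro A ⟨⟨hA1, hA2⟩, hA3⟩
    simp only [mem_iInter, mem_setOf_eq] at hA2 hA3
    refine ⟨U, hUo, hUd, hA1, hA2, ?_⟩
    intro i hi
    have hmemF : ∀ x ∈ T i, x ∈ F := by
      intro x hx
      exact Finset.mem_biUnion.2 ⟨i, Finset.mem_univ i, hx⟩
    have hsel : ∀ x ∈ T i, ∃ y, y ∈ A.1 ∩ V x := fun x hx => hA3 i x hx
    choose g hg using hsel
    refine ⟨(T i).attach.image (fun x => g x.1 x.2), ?_, ?_⟩
    · intro y hy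
      simp only [Finset.coe_image, Set.mem_image, Finset.mem_coe, Finset.mem_attach] at hy
      obtain ⟨⟨x, hx⟩, -, rfl⟩ := hy
      have hxU : x ∈ U i := (hTsub i hx).2
      exact ⟨(hg x hx).1, hUfsub x i hxU ((hV x (hmemF x hx)).2.2 (hg x hx).2)⟩
    · rw [Finset.card_image_of_injective _ ?_, Finset.card_attach]
      · exact hTcard i hi
      · rintro ⟨x, hx⟩ ⟨y, hy⟩ hxy
        by_contra hne'
        have hxyne : x ≠ y := fun h => hne' (by simpa using h)
        have := hVp (hmemF x hx) (hmemF y hy) hxyne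
        exact (this.ne_of_mem (hg x hx).2 (hg y hy).2) hxy
  · -- open
    refine IsOpen.inter (IsOpen.inter (isOpen_upperS (isOpen_iUnion hUo)) ?_) ?_
    · exact isOpen_iInter_of_finite fun i => isOpen_lowerS (hUo i)
    · exact isOpen_iInter_of_finite fun i => isOpen_biInter_finset fun x _ =>
        isOpen_lowerS (hV x (Finset.mem_biUnion.2 ⟨i, Finset.mem_univ i, ‹x ∈ T i›⟩)).1
  · -- K ∈ W
    refine ⟨⟨hcov, ?_⟩, ?_⟩
    · exact mem_iInter.2 hne
    · refine mem_iInter.2 fun i => mem_iInter₂.2 fun x hx => ?_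
      have hxF : x ∈ F := Finset.mem_biUnion.2 ⟨i, Finset.mem_univ i, hx⟩
      exact ⟨x, (hTsub i hx).1, (hV x hxF).2.1⟩

end aux2
section aux3
variable {Y : Type*} [TopologicalSpace Y] [T2Space Y] [CompactSpace Y]

lemma exists_clopen_sep {x y : Y} (h : y ∉ connectedComponent x) :
    ∃ Z : Set Y, IsClopen Z ∧ x ∈ Z ∧ y ∉ Z := by
  rw [connectedComponent_eq_iInter_isClopen, mem_iInter] at h
  push_neg at h
  obtain ⟨⟨Z, hZ, hxZ⟩, hyZ⟩ := h
  exact ⟨Z, hZ, hxZ, hyZ⟩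

lemma exists_clopen_partition {m : ℕ} (hm : 0 < m) (G : Fin m → Finset Y)
    (hcross : ∀ i j, i ≠ j → ∀ x ∈ G i, ∀ y ∈ G j, y ∉ connectedComponent x) :
    ∃ P : Fin m → Set Y, (∀ i, IsClopen (P i)) ∧ Pairwise (Function.onFun Disjoint P) ∧
      (⋃ i, P i) = univ ∧ ∀ i, ↑(G i) ⊆ P i := by
  classical
  -- a clopen set around `x` avoiding `y`, whenever possible
  have hZ : ∀ x y : Y, ∃ Z : Set Y, IsClopen Z ∧ x ∈ Z ∧ (y ∉ connectedComponent x → y ∉ Z) := by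
    intro x y
    by_cases h : y ∉ connectedComponent x
    · obtain ⟨Z, h1, h2, h3⟩ := exists_clopen_sep h
      exact ⟨Z, h1, h2, fun _ => h3⟩
    · exact ⟨univ, isClopen_univ, mem_univ _, fun h' => absurd h' h⟩
  choose Z hZc hZx hZy using hZ
  set Oth : Fin m → Finset Y := fun i => (Finset.univ.filter (· ≠ i)).biUnion G with hOth
  set C : Fin m → Y → Set Y := fun i x => ⋂ y ∈ Oth i, Z x y with hC
  have hCc : ∀ i x, IsClopen (C i x) := by
    intro i x
    exact Set.Finite.isClopen_biInter (Finset.finite_toSet _) fun y _ => hZc x y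
  have hCx : ∀ i x, x ∈ C i x := fun i x => mem_iInter₂.2 fun y _ => hZx x y
  have hCavoid : ∀ i j, i ≠ j → ∀ x ∈ G i, ∀ y ∈ G j, y ∉ C i x := by
    intro i j hij x hx y hy hmem
    have hyO : y ∈ Oth i := Finset.mem_biUnion.2
      ⟨j, Finset.mem_filter.2 ⟨Finset.mem_univ j, Ne.symm hij⟩, hy⟩
    exact hZy x y (hcross i j hij x hx y hy) (mem_iInter₂.1 hmem y hyO)
  set Q : Fin m → Set Y := fun i => ⋃ x ∈ G i, C i x with hQ
  have hQc : ∀ i, IsClopen (Q i) :=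
    fun i => Set.Finite.isClopen_biUnion (Finset.finite_toSet _) fun x _ => hCc i x
  have hGQ : ∀ i, ∀ x ∈ G i, x ∈ Q i := fun i x hx => mem_biUnion hx (hCx i x)
  have hGQ' : ∀ i j, i ≠ j → ∀ x ∈ G i, x ∉ Q j := by
    intro i j hij x hx hmem
    obtain ⟨y, hy, hmem⟩ := mem_iUnion₂.1 hmem
    exact hCavoid j i (Ne.symm hij) y hy x hx hmem
  set R : Fin m → Set Y := fun i => Q i \ ⋃ j ∈ Finset.univ.filter (· < i), Q j with hR
  have hRc : ∀ i, IsClopen (R i) := by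
    intro i
    exact (hQc i).diff (Set.Finite.isClopen_biUnion (Finset.finite_toSet _) fun j _ => hQc j)
  have hRd : Pairwise (Function.onFun Disjoint R) := by
    intro i j hij
    rcases lt_or_gt_of_ne hij with h | h
    · refine Set.disjoint_left.2 fun z hzi hzj => ?_
      exact hzj.2 (mem_biUnion (Finset.mem_filter.2 ⟨Finset.mem_univ i, h⟩) hzi.1)
    · refine Set.disjoint_left.2 fun z hzi hzj => ?_
      exact hzi.2 (mem_biUnion (Finset.mem_filter.2 ⟨Finset.mem_univ j, h⟩) hzj.1)
  have hRcup : (⋃ i, R i) = ⋃ i, Q i := by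
    apply Subset.antisymm (iUnion_mono fun i => diff_subset)
    rintro z hz
    have hnonempty : (Finset.univ.filter (fun i => z ∈ Q i)).Nonempty := by
      obtain ⟨i, hi⟩ := mem_iUnion.1 hz
      exact ⟨i, Finset.mem_filter.2 ⟨Finset.mem_univ i, hi⟩⟩
    set i₀ := (Finset.univ.filter (fun i => z ∈ Q i)).min' hnonempty with hi₀
    have hzi₀ : z ∈ Q i₀ := (Finset.mem_filter.1 ((Finset.univ.filter _).min'_mem hnonempty)).2
    refine mem_iUnion.2 ⟨i₀, hzi₀, fun hmem => ?_⟩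
    obtain ⟨j, hj, hzj⟩ := mem_iUnion₂.1 hmem
    have hji : j < i₀ := (Finset.mem_filter.1 hj).2
    exact absurd (Finset.min'_le _ j (Finset.mem_filter.2 ⟨Finset.mem_univ j, hzj⟩))
      (not_le.2 hji)
  set last : Fin m := ⟨m - 1, by omega⟩ with hlast
  set P : Fin m → Set Y := fun i => R i ∪ (if i = last then (⋃ j, Q j)ᶜ else ∅) with hP
  have hQcUnion : IsClopen (⋃ j, Q j) := by
    rw [← biUnion_univ]
    exact Set.Finite.isClopen_biUnion finite_univ fun j _ => hQc j
  refine ⟨P, ?_, ?_, ?_, ?_⟩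
  · intro i
    by_cases hi : i = last
    · simp only [hP, if_pos hi]
      exact (hRc i).union hQcUnion.compl
    · simp only [hP, if_neg hi]
      exact (hRc i).union isClopen_empty
  · intro i j hij
    have hRsub : ∀ l, R l ⊆ Q l := fun l => diff_subset
    have hd1 : Disjoint (R i) ((⋃ j, Q j)ᶜ) :=
      Set.disjoint_left.2 fun z hz hz' => hz' (mem_iUnion.2 ⟨i, hRsub i hz⟩)
    have hd2 : Disjoint ((⋃ j, Q j)ᶜ) (R j) :=
      Set.disjoint_left.2 fun z hz' hz => hz' (mem_iUnion.2 ⟨j, hRsub j hz⟩)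
    simp only [Function.onFun, hP]
    by_cases hi : i = last <;> by_cases hj : j = last
    · exact absurd (hi.trans hj.symm) hij
    · simp only [if_pos hi, if_neg hj, union_empty]
      exact Disjoint.union_left (hRd hij) hd2
    · simp only [if_neg hi, if_pos hj, union_empty]
      exact Disjoint.union_right (hRd hij) hd1
    · simp only [if_neg hi, if_neg hj, union_empty]
      exact hRd hij
  · apply Subset.antisymm (subset_univ _)
    intro z _
    by_cases hz : z ∈ ⋃ j, Q j
    · rw [← hRcup] at hz
      obtain ⟨i, hi⟩ := mem_iUnion.1 hz
      exact mem_iUnion.2 ⟨i, Or.inl hi⟩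
    · refine mem_iUnion.2 ⟨last, Or.inr ?_⟩
      simp only [if_pos rfl]
      exact hz
  · intro i x hx
    refine Or.inl ⟨hGQ i x hx, fun hmem => ?_⟩
    obtain ⟨j, hj, hzj⟩ := mem_iUnion₂.1 hmem
    have hji : j < i := (Finset.mem_filter.1 hj).2
    exact hGQ' i j (ne_of_gt hji) x hx hzj

end aux3
section aux4
variable {X : Type*} [TopologicalSpace X]

lemma exists_open_sep_family [T2Space X] {m : ℕ} (P : Fin m → Set X)
    (hP : ∀ i, IsCompact (P i)) (hd : Pairwise (Function.onFun Disjoint P)) :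
    ∃ U : Fin m → Set X, (∀ i, IsOpen (U i)) ∧ (∀ i, P i ⊆ U i) ∧
      Pairwise (Function.onFun Disjoint U) := by
  classical
  have hsep : ∀ p : Fin m × Fin m, ∃ W : Set X × Set X, IsOpen W.1 ∧ IsOpen W.2 ∧
      (p.1 ≠ p.2 → P p.1 ⊆ W.1 ∧ P p.2 ⊆ W.2 ∧ Disjoint W.1 W.2) := by
    rintro ⟨i, j⟩
    by_cases hij : i = j
    · exact ⟨(univ, univ), isOpen_univ, isOpen_univ, fun h => absurd hij h⟩
    · obtain ⟨A, B, hA, hB, hPA, hPB, hAB⟩ :=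
        SeparatedNhds.of_isCompact_isCompact (hP i) (hP j) (hd hij)
      exact ⟨(A, B), hA, hB, fun _ => ⟨hPA, hPB, hAB⟩⟩
  choose W hW1 hW2 hW3 using hsep
  refine ⟨fun i => ⋂ j ∈ Finset.univ.filter (· ≠ i), ((W (i, j)).1 ∩ (W (j, i)).2), ?_, ?_, ?_⟩
  · intro i
    exact isOpen_biInter_finset fun j _ => (hW1 _).inter (hW2 _)
  · intro i
    refine subset_iInter₂ fun j hj => ?_
    have hij : i ≠ j := (Ne.symm (Finset.mem_filter.1 hj).2)
    exact subset_inter (hW3 (i, j) hij).1 (hW3 (j, i) (Ne.symm hij)).2.1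
  · intro i j hij
    have hj' : j ∈ Finset.univ.filter (· ≠ i) :=
      Finset.mem_filter.2 ⟨Finset.mem_univ j, hij.symm⟩
    have hi' : i ∈ Finset.univ.filter (· ≠ j) :=
      Finset.mem_filter.2 ⟨Finset.mem_univ i, hij⟩
    have h1 : (⋂ l ∈ Finset.univ.filter (· ≠ i), ((W (i, l)).1 ∩ (W (l, i)).2)) ⊆ (W (i, j)).1 :=
      (biInter_subset_of_mem hj').trans inter_subset_left
    have h2 : (⋂ l ∈ Finset.univ.filter (· ≠ j), ((W (j, l)).1 ∩ (W (l, j)).2)) ⊆ (W (i, j)).2 :=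
      (biInter_subset_of_mem hi').trans inter_subset_right
    exact ((hW3 (i, j) hij).2.2).mono h1 h2

/-- If `K` carries points `e i j` such that points with different first index lie in
different connected components of `K`, and `e i` is injective for `i < n`,
then `K ∈ piecesO X m n k`. -/
lemma mem_piecesO [T2Space X] (K : Kt X) (m n k : ℕ) (hm : 0 < m) (hk : 0 < k)
    (e : Fin m → Fin k → ↥K.1)
    (hcross : ∀ i j i' j', i ≠ i' → (e i' j' : ↥K.1) ∉ connectedComponent (e i j))
    (hinj : ∀ i : Fin m, (i : ℕ) < n → Function.Injective (e i)) :
    K ∈ piecesO X m n k := by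
  classical
  haveI : CompactSpace ↥K.1 := isCompact_iff_compactSpace.1 K.2
  set G : Fin m → Finset ↥K.1 := fun i => Finset.univ.image (e i) with hG
  have hGcross : ∀ i j, i ≠ j → ∀ x ∈ G i, ∀ y ∈ G j, y ∉ connectedComponent x := by
    intro i j hij x hx y hy
    obtain ⟨jx, -, rfl⟩ := Finset.mem_image.1 hx
    obtain ⟨jy, -, rfl⟩ := Finset.mem_image.1 hy
    exact hcross i jx j jy hij
  obtain ⟨P, hPc, hPd, hPcov, hPG⟩ := exists_clopen_partition hm G hGcross
  have hPcomp : ∀ i, IsCompact (Subtype.val '' P i) :=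
    fun i => ((hPc i).isClosed.isCompact).image continuous_subtype_val
  obtain ⟨U, hUo, hUsub, hUd⟩ := exists_open_sep_family (fun i => Subtype.val '' P i)
    hPcomp (fun i j hij => (Set.disjoint_image_iff Subtype.val_injective).2 (hPd hij))
  refine ⟨U, hUo, hUd, ?_, ?_, ?_⟩
  · intro x hx
    have : (⟨x, hx⟩ : ↥K.1) ∈ ⋃ i, P i := by rw [hPcov]; trivial
    obtain ⟨i, hi⟩ := mem_iUnion.1 this
    exact mem_iUnion.2 ⟨i, hUsub i ⟨⟨x, hx⟩, hi, rfl⟩⟩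
  · intro i
    refine ⟨((e i ⟨0, hk⟩ : ↥K.1) : X), (e i ⟨0, hk⟩).2, ?_⟩
    exact hUsub i ⟨e i ⟨0, hk⟩, hPG i (Finset.mem_image.2 ⟨⟨0, hk⟩, Finset.mem_univ _, rfl⟩), rfl⟩
  · intro i hi
    refine ⟨Finset.univ.image (fun j => (e i j : X)), ?_, ?_⟩
    · intro y hy
      simp only [Finset.coe_image, Set.mem_image, Finset.coe_univ, Set.image_univ,
        Set.mem_range] at hy
      obtain ⟨j, rfl⟩ := hy
      exact ⟨(e i j).2,
        hUsub i ⟨e i j, hPG i (Finset.mem_image.2 ⟨j, Finset.mem_univ _, rfl⟩), rfl⟩⟩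
    · rw [Finset.card_image_of_injective _ (fun a b hab => hinj i hi (Subtype.val_injective hab)),
        Finset.card_univ, Fintype.card_fin]

end aux4
section aux5
variable {X : Type*} [TopologicalSpace X]

lemma piece_facts [T2Space X] {K : Kt X} {m : ℕ} (U : Fin m → Set X)
    (hUo : ∀ i, IsOpen (U i)) (hUd : Pairwise (Function.onFun Disjoint U))
    (hcov : K.1 ⊆ ⋃ i, U i) :
    (∀ i, IsClopen (Subtype.val ⁻¹' U i : Set ↥K.1)) ∧
    (∀ i j, i ≠ j → ∀ x ∈ (Subtype.val ⁻¹' U i : Set ↥K.1),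
      ∀ y ∈ (Subtype.val ⁻¹' U j : Set ↥K.1),
      ConnectedComponents.mk x ≠ ConnectedComponents.mk y) := by
  classical
  set A : Fin m → Set ↥K.1 := fun i => Subtype.val ⁻¹' U i with hA
  have hAo : ∀ i, IsOpen (A i) := fun i => (hUo i).preimage continuous_subtype_val
  have hAd : ∀ i j, i ≠ j → Disjoint (A i) (A j) :=
    fun i j hij => Disjoint.preimage _ (hUd hij)
  have hAc : ∀ i, IsClopen (A i) := by
    intro i
    refine ⟨?_, hAo i⟩
    have hcompl : (A i)ᶜ = ⋃ j ∈ Finset.univ.filter (· ≠ i), A j := by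
      apply Subset.antisymm
      · intro x hx
        have : (x : X) ∈ ⋃ j, U j := hcov x.2
        obtain ⟨j, hj⟩ := mem_iUnion.1 this
        have hji : j ≠ i := by rintro rfl; exact hx hj
        exact mem_biUnion (Finset.mem_filter.2 ⟨Finset.mem_univ j, hji⟩) hj
      · intro x hx
        obtain ⟨j, hj, hxj⟩ := mem_iUnion₂.1 hx
        have hji : j ≠ i := (Finset.mem_filter.1 hj).2
        exact fun hxi => (hAd j i hji).ne_of_mem hxj hxi rfl
    rw [← isOpen_compl_iff, hcompl]
    exact isOpen_biUnion fun j _ => hAo j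
  refine ⟨hAc, fun i j hij x hx y hy heq => ?_⟩
  have : x ∈ connectedComponent y := ConnectedComponents.coe_eq_coe'.1 heq
  have hxAj : x ∈ A j := (hAc j).connectedComponent_subset hy this
  exact (hAd i j hij).ne_of_mem hx hxAj rfl

lemma card_components_ge [T2Space X] {K : Kt X} {m n k : ℕ}
    [Finite (ConnectedComponents ↥K.1)]
    (hK : K ∈ piecesO X m n k) :
    m ≤ Nat.card (ConnectedComponents ↥K.1) := by
  obtain ⟨U, hUo, hUd, hcov, hne, -⟩ := hK
  obtain ⟨hAc, hAne⟩ := piece_facts U hUo hUd hcov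
  have hy : ∀ i : Fin m, ∃ y : ↥K.1, (y : X) ∈ U i := by
    intro i
    obtain ⟨x, hx1, hx2⟩ := hne i
    exact ⟨⟨x, hx1⟩, hx2⟩
  choose y hyU using hy
  have hinj : Function.Injective (fun i => ConnectedComponents.mk (y i)) := by
    intro i j hij
    by_contra hne'
    exact hAne i j hne' (y i) (hyU i) (y j) (hyU j) hij
  calc m = Nat.card (Fin m) := by simp
    _ ≤ Nat.card (ConnectedComponents ↥K.1) := Nat.card_le_card_of_injective _ hinj

lemma card_nondeg_ge [T2Space X] {K : Kt X} {m n : ℕ} (hnm : n ≤ m)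
    [Finite (ConnectedComponents ↥K.1)]
    (hK : K ∈ piecesO X m n (Nat.card (ConnectedComponents ↥K.1) + 1)) :
    n ≤ Nat.card {c : ConnectedComponents ↥K.1 |
      ¬ ({x : ↥K.1 | ConnectedComponents.mk x = c} : Set ↥K.1).Subsingleton} := by
  classical
  obtain ⟨U, hUo, hUd, hcov, hne, hbig⟩ := hK
  obtain ⟨hAc, hAne⟩ := piece_facts U hUo hUd hcov
  set c := Nat.card (ConnectedComponents ↥K.1) with hc
  have hch : ∀ i : Fin m, (i : ℕ) < n → ∃ cc : ConnectedComponents ↥K.1,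
      ¬ ({x : ↥K.1 | ConnectedComponents.mk x = cc} : Set ↥K.1).Subsingleton ∧
      ∃ z : ↥K.1, ConnectedComponents.mk z = cc ∧ (z : X) ∈ U i := by
    intro i hi
    obtain ⟨T, hTsub, hTcard⟩ := hbig i hi
    have hmapsto : ∀ t : {x // x ∈ T}, (t : X) ∈ K.1 ∩ U i := fun t => hTsub t.2
    set h : {x // x ∈ T} → ↥K.1 := fun t => ⟨t.1, (hmapsto t).1⟩ with hh
    letI : Fintype (ConnectedComponents ↥K.1) := Fintype.ofFinite _
    have hcard : Fintype.card (ConnectedComponents ↥K.1) < Fintype.card {x // x ∈ T} := by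
      rw [Fintype.card_coe, ← Nat.card_eq_fintype_card, ← hc]
      omega
    obtain ⟨t1, t2, ht12, heq⟩ :=
      Fintype.exists_ne_map_eq_of_card_lt (fun t => ConnectedComponents.mk (h t)) hcard
    have hne12 : h t1 ≠ h t2 := by
      intro hcon
      have hval : (t1 : X) = (t2 : X) := congrArg (fun a : ↥K.1 => (a : X)) hcon
      exact ht12 (Subtype.ext hval)
    refine ⟨ConnectedComponents.mk (h t1), ?_, h t1, rfl, (hmapsto t1).2⟩
    intro hsub
    exact hne12 (hsub (by exact rfl) (by exact heq.symm))
  have hch' : ∀ i : Fin n, ∃ cc : ConnectedComponents ↥K.1,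
      ¬ ({x : ↥K.1 | ConnectedComponents.mk x = cc} : Set ↥K.1).Subsingleton ∧
      ∃ z : ↥K.1, ConnectedComponents.mk z = cc ∧ (z : X) ∈ U ⟨i, lt_of_lt_of_le i.2 hnm⟩ :=
    fun i => hch ⟨i, lt_of_lt_of_le i.2 hnm⟩ i.2
  choose cc hccn z hz hzU using hch'
  have hinj : Function.Injective (fun i : Fin n =>
      (⟨cc i, hccn i⟩ : {c : ConnectedComponents ↥K.1 |
        ¬ ({x : ↥K.1 | ConnectedComponents.mk x = c} : Set ↥K.1).Subsingleton})) := by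
    intro i j hij
    simp only [Subtype.mk.injEq] at hij
    by_contra hne'
    have hij' : (⟨i, lt_of_lt_of_le i.2 hnm⟩ : Fin m) ≠ ⟨j, lt_of_lt_of_le j.2 hnm⟩ := by
      intro hcon
      exact hne' (Fin.ext (by simpa using congrArg (fun x : Fin m => (x : ℕ)) hcon))
    exact hAne _ _ hij' (z i) (hzU i) (z j) (hzU j) (by rw [hz i, hz j, hij])
  calc n = Nat.card (Fin n) := by simp
    _ ≤ _ := Nat.card_le_card_of_injective _ hinj

end aux5
section aux6

lemma not_mem_connectedComponent_of_mk_ne {Y : Type*} [TopologicalSpace Y] {x y : Y}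
    (h : ConnectedComponents.mk x ≠ ConnectedComponents.mk y) :
    x ∉ connectedComponent y :=
  fun hmem => h (ConnectedComponents.coe_eq_coe'.2 hmem)

lemma exists_e_infinite {Y : Type*} [TopologicalSpace Y]
    (h : Infinite (ConnectedComponents Y)) (m k : ℕ) :
    ∃ e : Fin m → Fin k → Y,
      (∀ i j i' j', i ≠ i' → e i' j' ∉ connectedComponent (e i j)) ∧
      (∀ i, Function.Injective (e i)) := by
  classical
  set f : Fin m × Fin k ↪ ConnectedComponents Y :=
    (finProdFinEquiv.toEmbedding).trans (Fin.valEmbedding.trans (Infinite.natEmbedding _)) with hf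
  have hrep : ∀ p : Fin m × Fin k, ∃ y : Y, ConnectedComponents.mk y = f p :=
    fun p => ConnectedComponents.surjective_coe (f p)
  choose x hx using hrep
  refine ⟨fun i j => x (i, j), ?_, ?_⟩
  · intro i j i' j' hii'
    apply not_mem_connectedComponent_of_mk_ne
    rw [hx (i', j'), hx (i, j)]
    exact fun hcon => hii' (congrArg Prod.fst (f.injective hcon)).symm
  · intro i j j' hjj'
    have hxeq : x (i, j) = x (i, j') := hjj'
    have : f (i, j) = f (i, j') := by
      rw [← hx (i, j), ← hx (i, j'), hxeq]
    exact congrArg Prod.snd (f.injective this)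

lemma exists_inj_with_mem {β : Type*} [Finite β] (A : Set β) {m n : ℕ} (hnm : n ≤ m)
    (hm : m ≤ Nat.card β) (hn : n ≤ Nat.card ↥A) :
    ∃ g : Fin m → β, Function.Injective g ∧ ∀ i : Fin m, (i : ℕ) < n → g i ∈ A := by
  classical
  letI : Fintype β := Fintype.ofFinite β
  have hA : n ≤ A.toFinset.card := by
    rw [Set.toFinset_card, ← Nat.card_eq_fintype_card]
    exact hn
  obtain ⟨s, hsA, hscard⟩ := Finset.exists_subset_card_eq hA
  have ht0 : m - n ≤ (Finset.univ \ s).card := by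
    rw [Finset.card_sdiff_of_subset (Finset.subset_univ s), Finset.card_univ, hscard]
    rw [← Nat.card_eq_fintype_card]
    omega
  obtain ⟨t, hts, htcard⟩ := Finset.exists_subset_card_eq ht0
  set es := s.equivFin with hes
  set et := t.equivFin with het
  refine ⟨fun i => if h : (i : ℕ) < n then
      (es.symm (Fin.cast hscard.symm ⟨i, h⟩) : β)
    else (et.symm (Fin.cast htcard.symm ⟨(i : ℕ) - n, by omega⟩) : β), ?_, ?_⟩
  · intro i j hij
    by_cases hi : (i : ℕ) < n <;> by_cases hj : (j : ℕ) < n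
    · simp only [dif_pos hi, dif_pos hj] at hij
      have := es.symm.injective (Subtype.val_injective hij)
      have := congrArg Fin.val this
      simp only [Fin.coe_cast] at this
      exact Fin.ext this
    · simp only [dif_pos hi, dif_neg hj] at hij
      exfalso
      have h1 : (es.symm (Fin.cast hscard.symm ⟨i, hi⟩) : β) ∈ s :=
        (es.symm _).2
      have h2 : (et.symm (Fin.cast htcard.symm ⟨(j : ℕ) - n, by omega⟩) : β) ∈ t :=
        (et.symm _).2
      rw [hij] at h1
      exact (Finset.mem_sdiff.1 (hts h2)).2 h1
    · simp only [dif_neg hi, dif_pos hj] at hij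
      exfalso
      have h1 : (es.symm (Fin.cast hscard.symm ⟨j, hj⟩) : β) ∈ s :=
        (es.symm _).2
      have h2 : (et.symm (Fin.cast htcard.symm ⟨(i : ℕ) - n, by omega⟩) : β) ∈ t :=
        (et.symm _).2
      rw [hij] at h2
      exact (Finset.mem_sdiff.1 (hts h2)).2 h1
    · simp only [dif_neg hi, dif_neg hj] at hij
      have := et.symm.injective (Subtype.val_injective hij)
      have := congrArg Fin.val this
      simp only [Fin.coe_cast] at this
      exact Fin.ext (by omega)
  · intro i hi
    simp only [dif_pos hi]
    exact Set.mem_toFinset.1 (hsA (es.symm _).2)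

lemma nondeg_fiber_infinite {Y : Type*} [TopologicalSpace Y] [T1Space Y]
    {c : ConnectedComponents Y}
    (h : ¬ ({x : Y | ConnectedComponents.mk x = c} : Set Y).Subsingleton) :
    ({x : Y | ConnectedComponents.mk x = c} : Set Y).Infinite := by
  have hnt : ({x : Y | ConnectedComponents.mk x = c} : Set Y).Nontrivial :=
    Set.not_subsingleton_iff.1 h
  obtain ⟨x, hx, -, -, -⟩ := id hnt
  have hSc : ({y : Y | ConnectedComponents.mk y = c} : Set Y) = connectedComponent x := by
    ext y
    rw [Set.mem_setOf_eq, ← hx]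
    exact ConnectedComponents.coe_eq_coe'
  rw [hSc] at hnt ⊢
  exact isPreconnected_connectedComponent.infinite_of_nontrivial hnt

end aux6
section aux7
variable {X : Type*} [TopologicalSpace X]

lemma mem_piecesO_of_counts [T2Space X] (K : Kt X) {m n k : ℕ} (hm : 0 < m) (hnm : n ≤ m)
    (h : (¬ Finite (ConnectedComponents ↥K.1)) ∨
      (Finite (ConnectedComponents ↥K.1) ∧ m ≤ Nat.card (ConnectedComponents ↥K.1) ∧
       n ≤ Nat.card {c : ConnectedComponents ↥K.1 |
         ¬ ({x : ↥K.1 | ConnectedComponents.mk x = c} : Set ↥K.1).Subsingleton})) :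
    K ∈ piecesO X m n (k + 1) := by
  classical
  haveI : CompactSpace ↥K.1 := isCompact_iff_compactSpace.1 K.2
  rcases h with h | ⟨hfin, hcm, hcn⟩
  · haveI hinf := not_finite_iff_infinite.1 h
    obtain ⟨e, hcross, hinj⟩ := exists_e_infinite hinf m (k + 1)
    exact mem_piecesO K m n (k + 1) hm (Nat.succ_pos k) e hcross (fun i _ => hinj i)
  · haveI := hfin
    obtain ⟨g, hginj, hgA⟩ := exists_inj_with_mem
      {c : ConnectedComponents ↥K.1 |
        ¬ ({x : ↥K.1 | ConnectedComponents.mk x = c} : Set ↥K.1).Subsingleton} hnm hcm hcn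
    have hei : ∀ i : Fin m, ∃ ei : Fin (k + 1) → ↥K.1,
        (∀ j, ConnectedComponents.mk (ei j) = g i) ∧
        ((i : ℕ) < n → Function.Injective ei) := by
      intro i
      by_cases hi : (i : ℕ) < n
      · have hinf := nondeg_fiber_infinite (hgA i hi)
        obtain ⟨F, hFsub, hFcard⟩ := hinf.exists_subset_card_eq (k + 1)
        set ef := F.equivFin with hef
        refine ⟨fun j => (ef.symm (Fin.cast hFcard.symm j) : ↥K.1), fun j => ?_, fun _ => ?_⟩
        · exact hFsub (ef.symm _).2
        · intro j j' hjj'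
          have h1 := ef.symm.injective (Subtype.val_injective hjj')
          have h2 := congrArg Fin.val h1
          simp only [Fin.coe_cast] at h2
          exact Fin.ext h2
      · obtain ⟨z, hz⟩ := ConnectedComponents.surjective_coe (g i)
        exact ⟨fun _ => z, fun _ => hz, fun hin => absurd hin hi⟩
    choose e he heinj using hei
    apply mem_piecesO K m n (k + 1) hm (Nat.succ_pos k) e
    · intro i j i' j' hii'
      apply not_mem_connectedComponent_of_mk_ne
      rw [he i' j', he i j]
      exact fun hcon => hii' (hginj hcon).symm
    · exact heinj

end aux7

theorem stmt14 (o : Option (ℕ × ℕ)) (ho : isType o) {X : Type*}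
    [TopologicalSpace X] [MetrizableSpace X] :
    IsGδ {K : Kt X | tle o (typeOf ↥K.1)} := by
  classical
  rcases o with _ | ⟨m, n⟩
  · -- o = ∞
    have hset : {K : Kt X | tle none (typeOf ↥K.1)} = ⋂ (m : ℕ), piecesO X (m + 1) 0 1 := by
      ext K
      simp only [mem_setOf_eq, mem_iInter]
      constructor
      · intro h m
        have hnf : ¬ Finite (ConnectedComponents ↥K.1) := by
          intro hf
          rw [typeOf, if_pos hf] at h
          exact h
        exact mem_piecesO_of_counts K (Nat.succ_pos m) (Nat.zero_le _) (Or.inl hnf)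
      · intro h
        have hnf : ¬ Finite (ConnectedComponents ↥K.1) := by
          intro hf
          haveI := hf
          have := card_components_ge (h (Nat.card (ConnectedComponents ↥K.1)))
          omega
        rw [typeOf, if_neg hnf]
        trivial
    rw [hset]
    exact IsGδ.iInter fun m => (isOpen_piecesO (m + 1) 0 1).isGδ
  · by_cases hm : m = 0
    · -- type (0,0)
      subst hm
      have hn : n = 0 := Nat.le_zero.1 ho
      subst hn
      have hset : {K : Kt X | tle (some (0, 0)) (typeOf ↥K.1)} = upperS (∅ : Set X) := by
        ext K
        simp only [mem_setOf_eq, upperS, subset_empty_iff]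
        constructor
        · intro h
          by_contra hne
          obtain ⟨x, hx⟩ := Set.nonempty_iff_ne_empty.2 hne
          haveI : Nonempty ↥K.1 := ⟨⟨x, hx⟩⟩
          haveI : Nonempty (ConnectedComponents ↥K.1) :=
            ⟨ConnectedComponents.mk ⟨x, hx⟩⟩
          by_cases hf : Finite (ConnectedComponents ↥K.1)
          · haveI := hf
            rw [typeOf, if_pos hf] at h
            rcases h with ⟨-, hq⟩ | ⟨h0, -⟩
            · have : Nat.card (ConnectedComponents ↥K.1) = 0 :=
                congrArg Prod.fst hq
              have := Nat.card_pos (α := ConnectedComponents ↥K.1)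
              omega
            · exact absurd h0 (lt_irrefl 0)
          · rw [typeOf, if_neg hf] at h
            exact absurd h (lt_irrefl 0)
        · intro h
          haveI hYe : IsEmpty ↥K.1 := by
            rw [h]
            exact Set.isEmpty_coe_sort.2 rfl
          haveI hCe : IsEmpty (ConnectedComponents ↥K.1) :=
            ⟨fun c => by
              obtain ⟨y, -⟩ := ConnectedComponents.surjective_coe c
              exact isEmptyElim y⟩
          have hfe : Finite (ConnectedComponents ↥K.1) := inferInstance
          rw [typeOf, if_pos hfe]
          refine Or.inl ⟨rfl, ?_⟩
          simp [Nat.card_of_isEmpty]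
      rw [hset]
      exact (isOpen_upperS isOpen_empty).isGδ
    · -- positive finite type
      have hm' : 0 < m := Nat.pos_of_ne_zero hm
      have hnm : n ≤ m := ho
      have hset : {K : Kt X | tle (some (m, n)) (typeOf ↥K.1)} =
          ⋂ (k : ℕ), piecesO X m n (k + 1) := by
        ext K
        simp only [mem_setOf_eq, mem_iInter]
        constructor
        · intro h k
          by_cases hf : Finite (ConnectedComponents ↥K.1)
          · haveI := hf
            rw [typeOf, if_pos hf] at h
            rcases h with ⟨hp, -⟩ | ⟨-, h1, h2⟩
            · exact absurd (congrArg Prod.fst hp) (by simpa using hm)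
            · exact mem_piecesO_of_counts K hm' hnm (Or.inr ⟨hf, h1, h2⟩)
          · exact mem_piecesO_of_counts K hm' hnm (Or.inl hf)
        · intro h
          by_cases hf : Finite (ConnectedComponents ↥K.1)
          · haveI := hf
            rw [typeOf, if_pos hf]
            refine Or.inr ⟨hm', ?_, ?_⟩
            · exact card_components_ge (h 0)
            · exact card_nondeg_ge hnm (h (Nat.card (ConnectedComponents ↥K.1)))
          · rw [typeOf, if_neg hf]
            exact hm'
      rw [hset]
      exact IsGδ.iInter fun k => (isOpen_piecesO m n (k + 1)).isGδ
end

section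
/- Let X be a metrizable space and s : I → ℕ₊ a finite function. A compact set K ⊆ X has a Vietoris neighborhood of the shape s in K(X) if and only if K admits a decomposition into pairwise disjoint clopen sets {K_i : i ∈ I} with |K_i| ≥ s(i) for all i ∈ I. Consequently, the family O_s ∩ K(X) of all such compacta is open in K(X). -/
open Topology TopologicalSpace Set

/-- `𝒰 ⊆ K(X)` is of the shape `s`: there are pairwise disjoint open sets `U i`
and pairwise disjoint open sets `V i j ⊆ U i` for `j < s i` such that
`𝒰 = (⋃ i, U i)⁺ ∩ ⋂ i j, (V i j)⁻`. -/
def HasShapeS {X : Type*} [TopologicalSpace X] {I : Type*} (s : I → ℕ)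
    (𝒰 : Set (Kt X)) : Prop :=
  ∃ U : I → Set X, (∀ i, IsOpen (U i)) ∧ Pairwise (Function.onFun Disjoint U) ∧
    ∃ V : (i : I) → Fin (s i) → Set X,
      (∀ i j, IsOpen (V i j)) ∧ (∀ i j, V i j ⊆ U i) ∧
      (∀ i, Pairwise (Function.onFun Disjoint (V i))) ∧
      𝒰 = {A : Kt X | A.1 ⊆ (⋃ i, U i) ∧ ∀ i j, (A.1 ∩ V i j).Nonempty}

/-- `A` admits a decomposition into pairwise disjoint relatively clopen sets indexed by `I`
with the `i`-th piece of cardinality at least `s i`. -/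
def MemOs {X : Type*} [TopologicalSpace X] {I : Type*} (s : I → ℕ) (A : Set X) : Prop :=
  ∃ P : I → Set ↥A, (∀ i, IsClopen (P i)) ∧ Pairwise (Function.onFun Disjoint P) ∧
    (⋃ i, P i) = Set.univ ∧ ∀ i, (s i : ℕ∞) ≤ (P i).encard


/-- Pairwise disjoint compact sets in a T2 space can be separated by pairwise
disjoint open sets. -/
lemma aux_sep {X : Type*} [TopologicalSpace X] [T2Space X] {ι : Type*} [Finite ι]
    {K : ι → Set X} (hK : ∀ i, IsCompact (K i))
    (hd : Pairwise (Function.onFun Disjoint K)) :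
    ∃ U : ι → Set X, (∀ i, IsOpen (U i)) ∧ (∀ i, K i ⊆ U i) ∧
      Pairwise (Function.onFun Disjoint U) := by
  have h : ∀ i j : ι, ∃ A B : Set X, IsOpen A ∧ IsOpen B ∧ K i ⊆ A ∧ K j ⊆ B ∧
      (i ≠ j → Disjoint A B) := by
    intro i j
    by_cases hij : i = j
    · exact ⟨univ, univ, isOpen_univ, isOpen_univ, subset_univ _, subset_univ _,
        fun h => absurd hij h⟩
    · obtain ⟨A, B, hA, hB, hKA, hKB, hAB⟩ :=
        SeparatedNhds.of_isCompact_isCompact (hK i) (hK j) (hd hij)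
      exact ⟨A, B, hA, hB, hKA, hKB, fun _ => hAB⟩
  choose A B hA hB hKA hKB hAB using h
  refine ⟨fun i => ⋂ j, (A i j ∩ B j i), fun i =>
    isOpen_iInter_of_finite fun j => (hA i j).inter (hB j i), fun i =>
    subset_iInter fun j => subset_inter (hKA i j) (hKB j i), fun i j hij => ?_⟩
  have h1 : (⋂ k, (A i k ∩ B k i)) ⊆ A i j := fun x hx => (mem_iInter.1 hx j).1
  have h2 : (⋂ k, (A j k ∩ B k j)) ⊆ B i j := fun x hx => (mem_iInter.1 hx i).2
  exact ((hAB i j hij).mono h1 h2)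

/-- Any set of shape `s` (over a finite index type) is open in the Vietoris topology. -/
lemma aux_open {X : Type*} [TopologicalSpace X] {I : Type*} [Finite I] {s : I → ℕ}
    {𝒰 : Set (Kt X)} (h : HasShapeS s 𝒰) : IsOpen 𝒰 := by
  obtain ⟨U, hU, -, V, hV, -, -, rfl⟩ := h
  have : {A : Kt X | A.1 ⊆ (⋃ i, U i) ∧ ∀ i j, (A.1 ∩ V i j).Nonempty} =
      {A : Kt X | A.1 ⊆ (⋃ i, U i)} ∩ ⋂ (p : Σ i, Fin (s i)),
        {A : Kt X | (A.1 ∩ V p.1 p.2).Nonempty} := by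
    ext A
    simp only [mem_inter_iff, mem_iInter, mem_setOf_eq, Sigma.forall]
  rw [this]
  refine IsOpen.inter ?_ (isOpen_iInter_of_finite fun p => ?_)
  · exact TopologicalSpace.isOpen_generateFrom_of_mem
      (Or.inl ⟨⋃ i, U i, isOpen_iUnion hU, rfl⟩)
  · exact TopologicalSpace.isOpen_generateFrom_of_mem
      (Or.inr ⟨V p.1 p.2, hV p.1 p.2, rfl⟩)


theorem stmt15 {X : Type*} [TopologicalSpace X] [MetrizableSpace X] {I : Type*}
    [Finite I] (s : I → ℕ) (hs : ∀ i, 0 < s i) :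
    (∀ K : Kt X, (∃ 𝒰 : Set (Kt X), K ∈ 𝒰 ∧ HasShapeS s 𝒰) ↔ MemOs s K.1) ∧
    IsOpen {K : Kt X | MemOs s K.1} := by
  have key : ∀ K : Kt X, (∃ 𝒰 : Set (Kt X), K ∈ 𝒰 ∧ HasShapeS s 𝒰) ↔ MemOs s K.1 := by
    intro K
    constructor
    · rintro ⟨𝒰, hK𝒰, U, hUo, hUd, V, hVo, hVU, hVd, rfl⟩
      obtain ⟨hKU, hKV⟩ := hK𝒰
      classical
      refine ⟨fun i => (fun x : ↥K.1 => (x : X)) ⁻¹' U i, fun i => ?_, ?_, ?_, ?_⟩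
      · constructor
        · -- closed: complement is union of the others
          rw [← isOpen_compl_iff]
          have : ((fun x : ↥K.1 => (x : X)) ⁻¹' U i)ᶜ =
              ⋃ j ∈ ({i}ᶜ : Set I), (fun x : ↥K.1 => (x : X)) ⁻¹' U j := by
            ext x
            simp only [mem_compl_iff, mem_preimage, mem_iUnion, mem_singleton_iff]
            constructor
            · intro hx
              obtain ⟨j, hj⟩ := mem_iUnion.1 (hKU x.2)
              exact ⟨j, fun hji => hx (hji ▸ hj), hj⟩
            · rintro ⟨j, hji, hj⟩ hx
              exact (hUd (Ne.symm hji)).le_bot ⟨hx, hj⟩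
          rw [this]
          exact isOpen_biUnion fun j _ => (hUo j).preimage continuous_subtype_val
        · exact (hUo i).preimage continuous_subtype_val
      · intro i j hij
        exact Disjoint.preimage _ (hUd hij)
      · ext x
        simp only [mem_iUnion, mem_preimage, mem_univ, iff_true]
        exact mem_iUnion.1 (hKU x.2)
      · intro i
        choose y hy using hKV i
        have hinj : Function.Injective fun j : Fin (s i) =>
            (⟨y j, (hy j).1⟩ : ↥K.1) := by
          intro j j' h
          by_contra hne
          have h' : y j = y j' := congrArg Subtype.val h
          exact Set.disjoint_left.1 (hVd i hne) (hy j).2 (by rw [h']; exact (hy j').2)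
        have hrange : Set.range (fun j : Fin (s i) => (⟨y j, (hy j).1⟩ : ↥K.1)) ⊆
            (fun x : ↥K.1 => (x : X)) ⁻¹' U i := by
          rintro x ⟨j, rfl⟩
          exact hVU i j (hy j).2
        calc (s i : ℕ∞) = (Set.range fun j : Fin (s i) => (⟨y j, (hy j).1⟩ : ↥K.1)).encard := by
              rw [← Set.image_univ, Set.InjOn.encard_image (hinj.injOn),
                Set.encard_univ, ENat.card_eq_coe_fintype_card, Fintype.card_fin]
          _ ≤ _ := Set.encard_le_encard hrange
    · rintro ⟨P, hPc, hPd, hPu, hPe⟩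
      classical
      -- the compact pieces in X
      set Ki : I → Set X := fun i => (fun x : ↥K.1 => (x : X)) '' P i with hKi
      have hKicomp : ∀ i, IsCompact (Ki i) := by
        intro i
        have : CompactSpace ↥K.1 := isCompact_iff_compactSpace.1 K.2
        exact ((hPc i).1.isCompact).image continuous_subtype_val
      have hKid : Pairwise (Function.onFun Disjoint Ki) := by
        intro i j hij
        refine Set.disjoint_image_image fun b hb c hc h => ?_
        exact Set.disjoint_left.1 (hPd hij) hb ((Subtype.coe_injective h).symm ▸ hc)
      obtain ⟨U, hUo, hKU, hUd⟩ := aux_sep hKicomp hKid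
      -- pick s i distinct points in each piece
      have hpts : ∀ i, ∃ x : Fin (s i) → X, Function.Injective x ∧
          ∀ j, x j ∈ Ki i := by
        intro i
        obtain ⟨t, hts, hte⟩ := Set.exists_subset_encard_eq
          ((hPe i).trans_eq (Set.InjOn.encard_image Subtype.coe_injective.injOn).symm)
        have htf : t.Finite := Set.finite_of_encard_eq_coe hte
        have hcard : Nat.card t = s i := by
          have h2 := htf.encard_eq_coe_toFinset_card
          rw [hte] at h2
          have h3 : s i = htf.toFinset.card := by exact_mod_cast h2
          rw [Nat.card_coe_set_eq, Set.ncard_eq_toFinset_card _ htf, ← h3]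
        have hfin := htf.to_subtype
        let e := Finite.equivFinOfCardEq hcard
        exact ⟨fun j => (e.symm j : X), fun j j' h =>
          e.symm.injective (Subtype.coe_injective h), fun j => hts (e.symm j).2⟩
      choose x hxinj hxmem using hpts
      -- separate the points within each piece
      have hWi : ∀ i, ∃ W : Fin (s i) → Set X, (∀ j, IsOpen (W j)) ∧
          (∀ j, x i j ∈ W j) ∧ Pairwise (Function.onFun Disjoint W) := by
        intro i
        obtain ⟨W, hWo, hWm, hWd⟩ := aux_sep (K := fun j : Fin (s i) => {x i j})
          (fun j => isCompact_singleton)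
          (fun j j' hjj' => by
            simp only [Function.onFun, Set.disjoint_singleton]
            exact fun h => hjj' (hxinj i h))
        exact ⟨W, hWo, fun j => hWm j rfl, hWd⟩
      choose W hWo hWm hWd using hWi
      refine ⟨{A : Kt X | A.1 ⊆ (⋃ i, U i) ∧ ∀ i j, (A.1 ∩ W i j ∩ U i).Nonempty},
        ⟨?_, ?_⟩, U, hUo, hUd, fun i j => W i j ∩ U i,
        fun i j => (hWo i j).inter (hUo i), fun i j => inter_subset_right,
        fun i => fun j j' hjj' => ((hWd i hjj').mono inter_subset_left inter_subset_left),
        by ext A; simp [Set.inter_assoc]⟩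
      · intro a ha
        obtain ⟨i, hi⟩ := mem_iUnion.1 (hPu ▸ Set.mem_univ (⟨a, ha⟩ : ↥K.1))
        exact mem_iUnion.2 ⟨i, hKU i ⟨⟨a, ha⟩, hi, rfl⟩⟩
      · intro i j
        have hx1 : x i j ∈ K.1 := by
          obtain ⟨b, -, hb⟩ := hxmem i j
          exact hb ▸ b.2
        exact ⟨x i j, ⟨hx1, hWm i j⟩, hKU i (hxmem i j)⟩
  refine ⟨key, ?_⟩
  have : {K : Kt X | MemOs s K.1} = ⋃₀ {𝒰 : Set (Kt X) | HasShapeS s 𝒰} := by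
    ext K
    simp only [mem_setOf_eq, mem_sUnion]
    rw [← key K]
    exact ⟨fun ⟨𝒰, h1, h2⟩ => ⟨𝒰, h2, h1⟩, fun ⟨𝒰, h1, h2⟩ => ⟨𝒰, h2, h1⟩⟩
  rw [this]
  exact isOpen_sUnion fun 𝒰 h => aux_open h
end

section
/- Let s : I → ℕ₊ be a finite function and enumerate I = {i_k : k < |I|} so that k ↦ s(i_k) is increasing; let n(s) = |{i : s(i) > 1}|. For n ≤ n(s) set t_{s,n} = (n + Σ_{k < |I| - n} s(i_k), n). Then a metrizable compactum K admits a clopen decomposition {K_i : i ∈ I} with |K_i| ≥ s(i) for all i if and only if t(K) ≥ t_{s,n} for some n ≤ n(s). Moreover R_s = {t_{s,n} : n ≤ n(s)} is an antichain in the type poset. -/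
open Topology TopologicalSpace Set

/-- `K` admits a decomposition into pairwise disjoint clopen sets indexed by `I`
with the `i`-th piece of cardinality at least `s i`. -/
def HasDecomp (K : Type*) [TopologicalSpace K] {I : Type*} (s : I → ℕ) : Prop :=
  ∃ P : I → Set K, (∀ i, IsClopen (P i)) ∧ Pairwise (Function.onFun Disjoint P) ∧
    (⋃ i, P i) = Set.univ ∧ ∀ i, (s i : ℕ∞) ≤ (P i).encard

/-- `n(s)`: the number of indices with `s i > 1`. -/
noncomputable def nS {I : Type*} (s : I → ℕ) : ℕ := Nat.card {i : I // 1 < s i}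

/-- The type `t_{s,n} = (n + Σ_{k < |I| - n} s(i_k), n)`. -/
def tsn {I : Type*} {N : ℕ} (e : Fin N ≃ I) (s : I → ℕ) (n : ℕ) : ℕ × ℕ :=
  (n + ∑ k ∈ Finset.univ.filter (fun k : Fin N => (k : ℕ) < N - n), s (e k), n)

universe u


namespace Stmt16Aux
open Set Function


section FinCombinatorics

lemma filter_lt_eq_map {N M : ℕ} (h : M ≤ N) :
    (Finset.univ.filter fun k : Fin N => (k : ℕ) < M) =
      Finset.map (Fin.castLEEmb h) Finset.univ := by
  ext k
  simp only [Finset.mem_filter, Finset.mem_univ, true_and, Finset.mem_map, true_and]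
  constructor
  · intro hk; exact ⟨⟨(k : ℕ), hk⟩, by ext; simp⟩
  · rintro ⟨j, rfl⟩; simp

lemma card_filter_lt {N M : ℕ} (h : M ≤ N) :
    (Finset.univ.filter fun k : Fin N => (k : ℕ) < M).card = M := by
  rw [filter_lt_eq_map h]; simp

lemma strictMono_fin_le {M N : ℕ} {g : Fin M → Fin N} (hg : StrictMono g) :
    ∀ (a : ℕ) (h : a < M), a ≤ (g ⟨a, h⟩ : ℕ) := by
  intro a
  induction a with
  | zero => intro h; exact Nat.zero_le _
  | succ a ih =>
    intro h
    have h' : a < M := Nat.lt_of_succ_lt h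
    have h1 := Fin.lt_def.mp (hg (show (⟨a, h'⟩ : Fin M) < ⟨a + 1, h⟩ by simp [Fin.lt_def]))
    have h2 := ih h'
    omega

lemma sum_filter_le_sum_of_monotone {N : ℕ} {f : Fin N → ℕ} (hf : Monotone f)
    (B : Finset (Fin N)) :
    ∑ k ∈ Finset.univ.filter (fun k : Fin N => (k : ℕ) < B.card), f k ≤ ∑ k ∈ B, f k := by
  have hM : B.card ≤ N := by simpa using Finset.card_le_univ B
  set g := B.orderEmbOfFin rfl with hg
  have hsum : ∑ k ∈ B, f k = ∑ j : Fin B.card, f (g j) := by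
    refine (Finset.sum_bij (fun (j : Fin B.card) _ => g j) ?_ ?_ ?_ ?_).symm
    · intro j _; exact Finset.orderEmbOfFin_mem B rfl j
    · intro j _ j' _ hjj'; exact g.injective hjj'
    · intro k hk
      have : k ∈ Set.range g := by rw [Finset.range_orderEmbOfFin]; exact hk
      obtain ⟨j, hj⟩ := this; exact ⟨j, Finset.mem_univ _, hj⟩
    · intro j _; rfl
  rw [hsum, filter_lt_eq_map hM, Finset.sum_map]
  apply Finset.sum_le_sum
  intro j _
  apply hf
  show Fin.castLE hM j ≤ g j
  rw [Fin.le_def]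
  simpa using strictMono_fin_le g.strictMono (j : ℕ) j.2

end FinCombinatorics


section Topology
variable {K : Type u} [TopologicalSpace K]

lemma carrier_mk_eq (y : K) :
    {x : K | ConnectedComponents.mk x = ConnectedComponents.mk y} = connectedComponent y := by
  ext x
  exact ConnectedComponents.coe_eq_coe'

lemma le_encard_of_inj {α : Type*} {S : Set α} {n : ℕ} (g : Fin n → α)
    (hginj : Function.Injective g) (hgS : ∀ t, g t ∈ S) : (n : ℕ∞) ≤ S.encard := by
  classical
  have h1 : ((Finset.univ.image g : Finset α) : Set α) ⊆ S := by
    intro a ha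
    simp only [Finset.coe_image, Finset.coe_univ, Set.image_univ, Set.mem_range] at ha
    obtain ⟨t, rfl⟩ := ha; exact hgS t
  calc (n : ℕ∞) = ((Finset.univ.image g).card : ℕ∞) := by
        rw [Finset.card_image_of_injective _ hginj, Finset.card_univ, Fintype.card_fin]
    _ = ((Finset.univ.image g : Finset α) : Set α).encard :=
        (Set.encard_coe_eq_coe_finsetCard _).symm
    _ ≤ S.encard := Set.encard_mono h1

lemma exists_inj_of_le_encard {α : Type*} {S : Set α} {n : ℕ} (h : (n : ℕ∞) ≤ S.encard) :
    ∃ g : Fin n → α, Function.Injective g ∧ ∀ t, g t ∈ S := by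
  classical
  obtain ⟨t, htS, htcard⟩ := Set.exists_subset_encard_eq h
  have hfin : t.Finite := Set.finite_of_encard_eq_coe htcard
  haveI := hfin.fintype
  have hcard : t.toFinset.card = n := by
    have := (Set.encard_eq_coe_toFinset_card t).symm.trans htcard
    exact_mod_cast this
  refine ⟨fun j => (t.toFinset.equivFin.symm (Fin.cast hcard.symm j) : α), ?_, ?_⟩
  · intro a b hab
    have := t.toFinset.equivFin.symm.injective (Subtype.val_injective hab)
    simpa [Fin.ext_iff] using congrArg Fin.val this
  · intro j
    exact htS (Set.mem_toFinset.mp (t.toFinset.equivFin.symm (Fin.cast hcard.symm j)).2)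

variable [CompactSpace K] [T2Space K]

lemma exists_clopen_partition_points :
    ∀ (m : ℕ) (x : Fin (m + 1) → K),
      (∀ j l, j ≠ l → connectedComponent (x j) ≠ connectedComponent (x l)) →
      ∃ U : Fin (m + 1) → Set K, (∀ j, IsClopen (U j)) ∧
        Pairwise (Function.onFun Disjoint U) ∧ (⋃ j, U j) = Set.univ ∧ ∀ j, x j ∈ U j := by
  intro m
  induction m with
  | zero =>
    intro x _
    exact ⟨fun _ => Set.univ, fun _ => isClopen_univ,
      fun a b hab => absurd (Fin.ext (by omega)) hab, by
        rw [Set.iUnion_const], fun j => trivial⟩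
  | succ m ih =>
    intro x hx
    have hsep : ∀ j : Fin (m + 1), ∃ V : Set K, IsClopen V ∧
        x (Fin.last (m + 1)) ∈ V ∧ x j.castSucc ∉ V := by
      intro j
      have hne : x j.castSucc ∉ connectedComponent (x (Fin.last (m + 1))) := by
        intro hmem
        exact hx (Fin.last (m + 1)) j.castSucc (Fin.ne_of_gt (Fin.castSucc_lt_last j))
          (connectedComponent_eq hmem)
      rw [connectedComponent_eq_iInter_isClopen] at hne
      simp only [Set.mem_iInter, not_forall] at hne
      obtain ⟨⟨V, hV, hxV⟩, hnot⟩ := hne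
      exact ⟨V, hV, hxV, hnot⟩
    choose V hVclopen hVmem hVnot using hsep
    obtain ⟨U', hU'clopen, hU'disj, hU'cover, hU'mem⟩ :=
      ih (fun j => x j.castSucc)
        (fun j l hjl => hx j.castSucc l.castSucc (fun h => hjl (Fin.castSucc_injective _ h)))
    set W : Set K := ⋂ j, V j with hW
    have hWclopen : IsClopen W :=
      ⟨isClosed_iInter fun j => (hVclopen j).isClosed,
       isOpen_iInter_of_finite fun j => (hVclopen j).isOpen⟩
    refine ⟨Fin.lastCases W (fun j => U' j \ W), ?_, ?_, ?_, ?_⟩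
    · intro j
      induction j using Fin.lastCases with
      | last => simpa using hWclopen
      | cast j => simpa using (hU'clopen j).diff hWclopen
    · intro a b hab
      induction a using Fin.lastCases with
      | last =>
        induction b using Fin.lastCases with
        | last => exact absurd rfl hab
        | cast b =>
          simp only [Function.onFun, Fin.lastCases_last, Fin.lastCases_castSucc]
          exact Set.disjoint_sdiff_right
      | cast a =>
        induction b using Fin.lastCases with
        | last =>
          simp only [Function.onFun, Fin.lastCases_last, Fin.lastCases_castSucc]
          exact Set.disjoint_sdiff_left
        | cast b =>
          simp only [Function.onFun, Fin.lastCases_castSucc]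
          have hab' : a ≠ b := fun h => hab (by rw [h])
          exact (hU'disj hab').mono Set.diff_subset Set.diff_subset
    · ext p
      simp only [Set.mem_iUnion, Set.mem_univ, iff_true]
      by_cases hp : p ∈ W
      · exact ⟨Fin.last (m + 1), by simpa using hp⟩
      · have : p ∈ ⋃ j, U' j := by rw [hU'cover]; trivial
        obtain ⟨j, hj⟩ := Set.mem_iUnion.mp this
        exact ⟨j.castSucc, by simpa using ⟨hj, hp⟩⟩
    · intro j
      induction j using Fin.lastCases with
      | last =>
        simp only [Fin.lastCases_last]
        exact Set.mem_iInter.mpr fun j => hVmem j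
      | cast j =>
        simp only [Fin.lastCases_castSucc]
        refine ⟨hU'mem j, fun hmem => hVnot j ?_⟩
        exact Set.mem_iInter.mp hmem j

lemma exists_clopen_partition {J : Type} [Fintype J] [Nonempty J]
    (c : J → ConnectedComponents K) (hc : Function.Injective c) :
    ∃ U : J → Set K, (∀ j, IsClopen (U j)) ∧ Pairwise (Function.onFun Disjoint U) ∧
      (⋃ j, U j) = Set.univ ∧ ∀ j, {x : K | ConnectedComponents.mk x = c j} ⊆ U j := by
  obtain ⟨m, hm⟩ : ∃ m, Fintype.card J = m + 1 :=
    ⟨Fintype.card J - 1, by have := Fintype.card_pos (α := J); omega⟩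
  have eqv : J ≃ Fin (m + 1) := Fintype.equivFinOfCardEq hm
  have hy : ∀ j : J, ∃ y : K, ConnectedComponents.mk y = c j :=
    fun j => ConnectedComponents.surjective_coe (c j)
  choose y hy using hy
  obtain ⟨U', hU'clopen, hU'disj, hU'cover, hU'mem⟩ :=
    exists_clopen_partition_points m (fun t => y (eqv.symm t)) (by
      intro t t' htt' hcc
      apply htt'
      have : ConnectedComponents.mk (y (eqv.symm t)) = ConnectedComponents.mk (y (eqv.symm t')) :=
        ConnectedComponents.coe_eq_coe.mpr hcc
      rw [hy, hy] at this
      exact eqv.symm.injective (hc this))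
  refine ⟨fun j => U' (eqv j), fun j => hU'clopen _, ?_, ?_, ?_⟩
  · intro a b hab
    exact hU'disj (fun h => hab (eqv.injective h))
  · ext p
    simp only [Set.mem_iUnion, Set.mem_univ, iff_true]
    have : p ∈ ⋃ t, U' t := by rw [hU'cover]; trivial
    obtain ⟨t, ht⟩ := Set.mem_iUnion.mp this
    exact ⟨eqv.symm t, by simpa using ht⟩
  · intro j
    have h1 : {x : K | ConnectedComponents.mk x = c j} = connectedComponent (y j) := by
      rw [← hy j]; exact carrier_mk_eq (y j)
    rw [h1]
    have hmem : y j ∈ U' (eqv j) := by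
      have := hU'mem (eqv j)
      simpa using this
    exact (hU'clopen (eqv j)).connectedComponent_subset hmem

end Topology






lemma assemble {K : Type u} [TopologicalSpace K] [CompactSpace K] [T2Space K]
    {I : Type*} {N : ℕ} (e : Fin N ≃ I) (s : I → ℕ) (hs : ∀ i, 0 < s i) (n : ℕ) (hN : 0 < N)
    (c : (Σ k : {k : Fin N // (k : ℕ) < N - n}, Fin (s (e k.1))) ⊕
        {k : Fin N // ¬ (k : ℕ) < N - n} → ConnectedComponents K)
    (hcinj : Function.Injective c)
    (hnd : ∀ j, ¬ ({x : K | ConnectedComponents.mk x = c (Sum.inr j)} : Set K).Subsingleton) :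
    HasDecomp K s := by
  classical
  haveI : Nonempty ((Σ k : {k : Fin N // (k : ℕ) < N - n}, Fin (s (e k.1))) ⊕
      {k : Fin N // ¬ (k : ℕ) < N - n}) := by
    by_cases h0 : (0 : ℕ) < N - n
    · exact ⟨Sum.inl ⟨⟨⟨0, hN⟩, h0⟩, ⟨0, hs _⟩⟩⟩
    · exact ⟨Sum.inr ⟨⟨0, hN⟩, h0⟩⟩
  obtain ⟨U, hUclopen, hUdisj, hUcover, hUsub⟩ := exists_clopen_partition c hcinj
  set Q : Fin N → Set K := fun k =>
    if h : (k : ℕ) < N - n then ⋃ t : Fin (s (e k)), U (Sum.inl ⟨⟨k, h⟩, t⟩)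
    else U (Sum.inr ⟨k, h⟩) with hQ
  have hQclopen : ∀ k, IsClopen (Q k) := by
    intro k
    simp only [hQ]
    by_cases h : (k : ℕ) < N - n
    · rw [dif_pos h]
      exact ⟨isClosed_iUnion_of_finite fun t => (hUclopen _).isClosed,
        isOpen_iUnion fun t => (hUclopen _).isOpen⟩
    · rw [dif_neg h]; exact hUclopen _
  have hQdisj : ∀ k k', k ≠ k' → Disjoint (Q k) (Q k') := by
    intro k k' hkk'
    simp only [hQ]
    by_cases h : (k : ℕ) < N - n <;> by_cases h' : (k' : ℕ) < N - n
    · rw [dif_pos h, dif_pos h']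
      refine Set.disjoint_iUnion_left.mpr fun t => Set.disjoint_iUnion_right.mpr fun t' => ?_
      refine hUdisj fun heq => hkk' ?_
      exact congrArg Subtype.val (congrArg Sigma.fst (Sum.inl.inj heq))
    · rw [dif_pos h, dif_neg h']
      refine Set.disjoint_iUnion_left.mpr fun t => ?_
      exact hUdisj (by simp)
    · rw [dif_neg h, dif_pos h']
      refine Set.disjoint_iUnion_right.mpr fun t' => ?_
      exact hUdisj (by simp)
    · rw [dif_neg h, dif_neg h']
      refine hUdisj fun heq => hkk' ?_
      exact congrArg Subtype.val (Sum.inr.inj heq)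
  have hQcover : (⋃ k, Q k) = Set.univ := by
    ext p
    simp only [Set.mem_iUnion, Set.mem_univ, iff_true]
    have : p ∈ ⋃ j, U j := by rw [hUcover]; trivial
    obtain ⟨j, hj⟩ := Set.mem_iUnion.mp this
    rcases j with ⟨⟨k, hk⟩, t⟩ | ⟨k, hk⟩
    · refine ⟨k, ?_⟩
      simp only [hQ]
      rw [dif_pos hk]
      exact Set.mem_iUnion.mpr ⟨t, hj⟩
    · refine ⟨k, ?_⟩
      simp only [hQ]
      rw [dif_neg hk]
      exact hj
  have hQcard : ∀ k, (s (e k) : ℕ∞) ≤ (Q k).encard := by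
    intro k
    by_cases h : (k : ℕ) < N - n
    · have hyex : ∀ t : Fin (s (e k)), ∃ y : K,
          ConnectedComponents.mk y = c (Sum.inl ⟨⟨k, h⟩, t⟩) :=
        fun t => ConnectedComponents.surjective_coe _
      choose y hy using hyex
      refine le_encard_of_inj y ?_ ?_
      · intro t t' htt'
        by_contra hne
        have hdisj : Disjoint (U (Sum.inl ⟨⟨k, h⟩, t⟩)) (U (Sum.inl ⟨⟨k, h⟩, t'⟩)) := by
          refine hUdisj fun heq => hne ?_
          have := Sum.inl.inj heq
          simpa using this
        have m1 : y t ∈ U (Sum.inl ⟨⟨k, h⟩, t⟩) := hUsub _ (hy t)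
        have m2 : y t ∈ U (Sum.inl ⟨⟨k, h⟩, t'⟩) := by rw [htt']; exact hUsub _ (hy t')
        exact Set.disjoint_left.mp hdisj m1 m2
      · intro t
        simp only [hQ]
        rw [dif_pos h]
        exact Set.mem_iUnion.mpr ⟨t, hUsub _ (hy t)⟩
    · obtain ⟨y, hy⟩ := ConnectedComponents.surjective_coe (c (Sum.inr ⟨k, h⟩))
      have hcarrier : {x : K | ConnectedComponents.mk x = c (Sum.inr ⟨k, h⟩)} =
          connectedComponent y := by rw [← hy]; exact carrier_mk_eq y
      have hinf : (connectedComponent y).Infinite := by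
        refine isPreconnected_connectedComponent.infinite_of_nontrivial ?_
        rw [← hcarrier]
        exact Set.not_subsingleton_iff.mp (hnd ⟨k, h⟩)
      have hsub2 : connectedComponent y ⊆ Q k := by
        rw [← hcarrier]
        simp only [hQ]
        rw [dif_neg h]
        exact hUsub _
      have : (Q k).Infinite := hinf.mono hsub2
      rw [this.encard_eq]
      exact le_top
  refine ⟨fun i => Q (e.symm i), fun i => hQclopen _, ?_, ?_, ?_⟩
  · intro a b hab
    exact hQdisj _ _ (fun h => hab (e.symm.injective h))
  · ext p
    simp only [Set.mem_iUnion, Set.mem_univ, iff_true]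
    have : p ∈ ⋃ k, Q k := by rw [hQcover]; trivial
    obtain ⟨k, hk⟩ := Set.mem_iUnion.mp this
    exact ⟨e k, by simpa using hk⟩
  · intro i
    have := hQcard (e.symm i)
    rwa [Equiv.apply_symm_apply] at this









lemma nS_le_N {I : Type*} {N : ℕ} (e : Fin N ≃ I) (s : I → ℕ) : nS s ≤ N := by
  classical
  haveI : Fintype I := Fintype.ofEquiv _ e
  have h1 : nS s ≤ Nat.card I :=
    Nat.card_le_card_of_injective (Subtype.val : {i : I // 1 < s i} → I) Subtype.val_injective
  rwa [Nat.card_eq_fintype_card, Fintype.card_congr e.symm, Fintype.card_fin] at h1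

lemma backward {K : Type u} [TopologicalSpace K] [CompactSpace K] [T2Space K]
    {I : Type*} {N : ℕ} (e : Fin N ≃ I) (s : I → ℕ) (hs : ∀ i, 0 < s i)
    (n : ℕ) (hn : n ≤ nS s) (ht : tle (some (tsn e s n)) (typeOf K)) : HasDecomp K s := by
  classical
  haveI : Fintype I := Fintype.ofEquiv _ e
  have hnN : n ≤ N := le_trans hn (nS_le_N e s)
  set SL : ℕ := ∑ k ∈ Finset.univ.filter (fun k : Fin N => (k : ℕ) < N - n), s (e k) with hSL
  by_cases hfin : Finite (ConnectedComponents K)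
  · rw [typeOf, if_pos hfin] at ht
    rcases ht with ⟨h00, hK00⟩ | ⟨hpos, hle1, hle2⟩
    · -- degenerate case : K is empty and N = 0
      have h0 : n = 0 ∧ SL = 0 := by
        have := congrArg Prod.fst h00
        have h2 := congrArg Prod.snd h00
        simp only [tsn] at this h2
        constructor
        · exact h2
        · omega
      obtain ⟨hn0, hS0⟩ := h0
      have hN0 : N = 0 := by
        by_contra hNne
        have hNpos : 0 < N := Nat.pos_of_ne_zero hNne
        have hmem : (⟨0, hNpos⟩ : Fin N) ∈
            Finset.univ.filter (fun k : Fin N => (k : ℕ) < N - n) := by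
          simp only [Finset.mem_filter, Finset.mem_univ, true_and]
          omega
        have hposum : 0 < ∑ k ∈ Finset.univ.filter (fun k : Fin N => (k : ℕ) < N - n), s (e k) :=
          Finset.sum_pos' (fun k _ => Nat.zero_le _) ⟨⟨0, hNpos⟩, hmem, hs (e ⟨0, hNpos⟩)⟩
        omega
      subst hN0
      haveI : IsEmpty I := e.symm.isEmpty
      have hmK : Nat.card (ConnectedComponents K) = 0 := congrArg Prod.fst hK00
      haveI : IsEmpty (ConnectedComponents K) := by
        rcases Nat.card_eq_zero.mp hmK with h | h
        · exact h
        · exact absurd hfin h.not_finite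
      haveI : IsEmpty K := ⟨fun x => IsEmpty.false (ConnectedComponents.mk x)⟩
      refine ⟨fun _ => ∅, fun i => isClopen_empty, fun a b hab => (IsEmpty.false a).elim, ?_,
        fun i => (IsEmpty.false i).elim⟩
      rw [Set.iUnion_of_empty]
      exact (Set.univ_eq_empty_iff.mpr ‹IsEmpty K›).symm
    · -- main case
      simp only [tsn] at hpos hle1 hle2
      have hN : 0 < N := by
        by_contra hNne
        have hN0 : N = 0 := by omega
        subst hN0
        haveI : IsEmpty I := e.symm.isEmpty
        have hnS0 : nS s = 0 := by
          rw [nS, Nat.card_eq_zero]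
          exact Or.inl (by infer_instance)
        rw [Finset.univ_eq_empty, Finset.filter_empty, Finset.sum_empty] at hpos
        omega
      -- cardinalities
      haveI := Fintype.ofFinite (ConnectedComponents K)
      set ND : Set (ConnectedComponents K) :=
        {c : ConnectedComponents K |
          ¬ ({x : K | ConnectedComponents.mk x = c} : Set K).Subsingleton} with hND
      have cardJhigh : Fintype.card {k : Fin N // ¬ (k : ℕ) < N - n} = n := by
        rw [Fintype.card_subtype]
        have h1 := Finset.card_filter_add_card_filter_not
          (s := (Finset.univ : Finset (Fin N))) (p := fun k : Fin N => (k : ℕ) < N - n)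
        rw [card_filter_lt (Nat.sub_le N n)] at h1
        simp only [Finset.card_univ, Fintype.card_fin] at h1
        omega
      have cardJlow : Fintype.card (Σ k : {k : Fin N // (k : ℕ) < N - n}, Fin (s (e k.1))) =
          SL := by
        rw [Fintype.card_sigma]
        simp only [Fintype.card_fin]
        rw [hSL]
        exact (Finset.sum_subtype (p := fun k : Fin N => (k : ℕ) < N - n)
          (Finset.univ.filter (fun k : Fin N => (k : ℕ) < N - n))
          (by simp) (fun k => s (e k))).symm
      -- embedding of Jhigh into nondegenerate components
      obtain ⟨al⟩ : Nonempty ({k : Fin N // ¬ (k : ℕ) < N - n} ↪ ↥ND) := by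
        apply Function.Embedding.nonempty_of_card_le
        rw [cardJhigh, ← Nat.card_eq_fintype_card]
        exact hle2
      set avoid : Set (ConnectedComponents K) := Set.range (fun j => (al j : ConnectedComponents K))
        with havoid
      have havoidcard : Nat.card ↥avoid = n := by
        rw [havoid, Nat.card_range_of_injective
            (f := fun j => (al j : ConnectedComponents K))
            (fun a b hab => al.injective (Subtype.val_injective hab)),
          Nat.card_eq_fintype_card, cardJhigh]
      have hcomplcard : Nat.card ↥(avoidᶜ) = Nat.card (ConnectedComponents K) - n := by
        have h1 := Set.ncard_add_ncard_compl avoid (Set.toFinite avoid)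
        rw [← Nat.card_coe_set_eq, ← Nat.card_coe_set_eq, havoidcard] at h1
        omega
      obtain ⟨be⟩ : Nonempty ((Σ k : {k : Fin N // (k : ℕ) < N - n}, Fin (s (e k.1))) ↪
          ↥(avoidᶜ)) := by
        apply Function.Embedding.nonempty_of_card_le
        rw [cardJlow, ← Nat.card_eq_fintype_card, hcomplcard]
        omega
      refine assemble e s hs n hN
        (Sum.elim (fun j => (be j : ConnectedComponents K))
          (fun j => (al j : ConnectedComponents K))) ?_ ?_
      · rintro (j | j) (j' | j') heq
        · simp only [Sum.elim_inl] at heq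
          rw [be.injective (Subtype.val_injective heq)]
        · exfalso
          simp only [Sum.elim_inl, Sum.elim_inr] at heq
          exact (be j).2 (heq ▸ Set.mem_range_self j')
        · exfalso
          simp only [Sum.elim_inl, Sum.elim_inr] at heq
          exact (be j').2 (heq ▸ Set.mem_range_self j)
        · simp only [Sum.elim_inr] at heq
          rw [al.injective (Subtype.val_injective heq)]
      · intro j
        exact (al j).2
  · -- infinитe case
    rw [typeOf, if_neg hfin] at ht
    have ht' : 0 < (tsn e s n).1 := ht
    simp only [tsn] at ht'
    haveI : Infinite (ConnectedComponents K) := not_finite_iff_infinite.mp hfin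
    have hN : 0 < N := by
      by_contra hNne
      have hN0 : N = 0 := by omega
      subst hN0
      haveI : IsEmpty I := e.symm.isEmpty
      rw [Finset.univ_eq_empty, Finset.filter_empty, Finset.sum_empty] at ht'
      have hnS0 : nS s = 0 := by
        rw [nS, Nat.card_eq_zero]
        exact Or.inl (by infer_instance)
      omega
    haveI : IsEmpty {k : Fin N // ¬ (k : ℕ) < N - 0} :=
      ⟨fun j => j.2 (by omega)⟩
    obtain ⟨emb⟩ : Nonempty ((Σ k : {k : Fin N // (k : ℕ) < N - 0}, Fin (s (e k.1))) ↪
        ConnectedComponents K) := by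
      exact ⟨((Fintype.equivFin _).toEmbedding.trans Fin.valEmbedding).trans
        (Infinite.natEmbedding (ConnectedComponents K))⟩
    refine assemble e s hs 0 hN (Sum.elim (fun j => emb j) (fun j => (IsEmpty.false j).elim))
      ?_ ?_
    · rintro (j | j) (j' | j') heq
      · simp only [Sum.elim_inl] at heq
        rw [emb.injective heq]
      · exact (IsEmpty.false j').elim
      · exact (IsEmpty.false j).elim
      · exact (IsEmpty.false j).elim
    · intro j
      exact (IsEmpty.false j).elim










lemma forward {K : Type u} [TopologicalSpace K] [CompactSpace K] [T2Space K]
    {I : Type*} {N : ℕ} (e : Fin N ≃ I) (s : I → ℕ) (hs : ∀ i, 0 < s i)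
    (hmono : Monotone fun k => s (e k)) (h : HasDecomp K s) :
    ∃ n ≤ nS s, tle (some (tsn e s n)) (typeOf K) := by
  classical
  haveI : Fintype I := Fintype.ofEquiv _ e
  obtain ⟨P, hPclopen, hPdisj, hPcover, hPcard⟩ := h
  have hsub : ∀ (i : I) (x : K), x ∈ P i → connectedComponent x ⊆ P i :=
    fun i x hx => (hPclopen i).connectedComponent_subset hx
  have huniq : ∀ (i i' : I) (x x' : K), x ∈ P i → x' ∈ P i' →
      ConnectedComponents.mk x = ConnectedComponents.mk x' → i = i' := by
    intro i i' x x' hx hx' hmk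
    by_contra hne
    have h1 : connectedComponent x' = connectedComponent x :=
      (ConnectedComponents.coe_eq_coe.mp hmk).symm
    have h2 : x' ∈ P i := hsub i x hx (h1 ▸ mem_connectedComponent)
    exact Set.disjoint_left.mp (hPdisj hne) h2 hx'
  by_cases hfin : Finite (ConnectedComponents K)
  · rw [typeOf, if_pos hfin]
    by_cases hN0 : N = 0
    · subst hN0
      haveI : IsEmpty I := e.symm.isEmpty
      haveI : IsEmpty K := by
        have h1 := hPcover
        rw [Set.iUnion_of_empty] at h1
        exact Set.univ_eq_empty_iff.mp h1.symm
      haveI : IsEmpty (ConnectedComponents K) :=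
        ⟨fun c => by
          obtain ⟨x, -⟩ := ConnectedComponents.surjective_coe c
          exact IsEmpty.false x⟩
      refine ⟨0, Nat.zero_le _, Or.inl ⟨?_, ?_⟩⟩
      · simp [tsn]
      · have h1 : Nat.card (ConnectedComponents K) = 0 := Nat.card_of_isEmpty
        have h2 : Nat.card {c : ConnectedComponents K |
            ¬ ({x : K | ConnectedComponents.mk x = c} : Set K).Subsingleton} = 0 :=
          Nat.card_of_isEmpty
        simp [h1, h2]
    · have hN : 0 < N := Nat.pos_of_ne_zero hN0
      set ND : Set (ConnectedComponents K) :=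
        {c : ConnectedComponents K |
          ¬ ({x : K | ConnectedComponents.mk x = c} : Set K).Subsingleton} with hND
      set A : Finset I := Finset.univ.filter
        (fun i => 1 < s i ∧ ∃ c ∈ ND, {x : K | ConnectedComponents.mk x = c} ⊆ P i) with hA
      set n := A.card with hn
      have hnS_eq : nS s = (Finset.univ.filter fun i : I => 1 < s i).card := by
        rw [nS, Nat.card_eq_fintype_card, Fintype.card_subtype]
      have hn_le : n ≤ nS s := by
        rw [hnS_eq, hn]
        apply Finset.card_le_card
        intro i hi
        rw [hA, Finset.mem_filter] at hi
        exact Finset.mem_filter.mpr ⟨Finset.mem_univ _, hi.2.1⟩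
      refine ⟨n, hn_le, ?_⟩
      have hchoose : ∀ i ∈ A, ∃ c ∈ ND, {x : K | ConnectedComponents.mk x = c} ⊆ P i := by
        intro i hi; rw [hA, Finset.mem_filter] at hi; exact hi.2.2
      choose cA hcA1 hcA2 using hchoose
      have hwit : ∀ i (hi : i ∈ A), ∃ x ∈ P i, ConnectedComponents.mk x = cA i hi := by
        intro i hi
        obtain ⟨y, hy⟩ := ConnectedComponents.surjective_coe (cA i hi)
        exact ⟨y, hcA2 i hi hy, hy⟩
      -- n ≤ number of nondegenerate components
      have hd : n ≤ Nat.card ↥ND := by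
        have hinj : Function.Injective
            (fun i : {x // x ∈ A} => (⟨cA i i.2, hcA1 i i.2⟩ : ↥ND)) := by
          intro i i' heq
          obtain ⟨x, hx, hmkx⟩ := hwit i i.2
          obtain ⟨x', hx', hmkx'⟩ := hwit i' i'.2
          have hcc : cA (i : I) i.2 = cA (i' : I) i'.2 := congrArg Subtype.val heq
          exact Subtype.ext (huniq i i' x x' hx hx' (by rw [hmkx, hmkx', hcc]))
        have h1 := Nat.card_le_card_of_injective _ hinj
        rwa [Nat.card_eq_fintype_card (α := {x // x ∈ A}), Fintype.card_coe, ← hn] at h1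
      -- injections from pieces into components
      have hginj : ∀ i : I, ∃ g : Fin (if i ∈ A then 1 else s i) → ConnectedComponents K,
          Function.Injective g ∧ ∀ t, ∃ x ∈ P i, ConnectedComponents.mk x = g t := by
        intro i
        by_cases hi : i ∈ A
        · rw [if_pos hi]
          exact ⟨fun _ => cA i hi, fun a b _ => Subsingleton.elim a b, fun t => hwit i hi⟩
        · rw [if_neg hi]
          obtain ⟨g₀, hg₀inj, hg₀mem⟩ := exists_inj_of_le_encard (hPcard i)
          refine ⟨fun t => ConnectedComponents.mk (g₀ t), ?_, fun t => ⟨g₀ t, hg₀mem t, rfl⟩⟩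
          intro t t' heq
          by_cases hsi : 1 < s i
          · have hnot : ¬ ∃ c ∈ ND, {x : K | ConnectedComponents.mk x = c} ⊆ P i := by
              intro hc
              exact hi (by rw [hA]; exact Finset.mem_filter.mpr ⟨Finset.mem_univ _, hsi, hc⟩)
            have hss : ({x : K | ConnectedComponents.mk x = ConnectedComponents.mk (g₀ t)}
                : Set K).Subsingleton := by
              by_contra hns
              refine hnot ⟨ConnectedComponents.mk (g₀ t), hns, ?_⟩
              rw [carrier_mk_eq]
              exact hsub i (g₀ t) (hg₀mem t)
            exact hg₀inj (hss rfl heq.symm)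
          · exact Fin.ext (by have h1 := t.2; have h2 := t'.2; have h3 := hs i; omega)
      choose g hg_inj hg_wit using hginj
      have hccinj : Function.Injective
          (fun j : Σ i : I, Fin (if i ∈ A then 1 else s i) => g j.1 j.2) := by
        rintro ⟨i, t⟩ ⟨i', t'⟩ hval
        simp only at hval
        obtain ⟨x, hx, hmkx⟩ := hg_wit i t
        obtain ⟨x', hx', hmkx'⟩ := hg_wit i' t'
        have hii' : i = i' := huniq i i' x x' hx hx' (by rw [hmkx, hmkx', hval])
        subst hii'
        have htt' : t = t' := hg_inj i hval
        rw [htt']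
      have hcard1 : (∑ i : I, if i ∈ A then 1 else s i) ≤ Nat.card (ConnectedComponents K) := by
        have h1 := Nat.card_le_card_of_injective _ hccinj
        rwa [Nat.card_eq_fintype_card (α := Σ i : I, Fin (if i ∈ A then 1 else s i)),
          Fintype.card_sigma, Finset.sum_congr rfl (fun i _ => Fintype.card_fin _)] at h1
      -- sum arithmetic
      have hsum1 : (∑ i : I, if i ∈ A then 1 else s i) =
          ∑ k : Fin N, if e k ∈ A then 1 else s (e k) := (Equiv.sum_comp e _).symm
      set B : Finset (Fin N) := Finset.univ.filter (fun k => ¬ e k ∈ A) with hB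
      have h2 : (Finset.univ.filter (fun k : Fin N => e k ∈ A)).card = n := by
        rw [hn]
        refine Finset.card_bij (fun k _ => e k) ?_ ?_ ?_
        · intro k hk; exact (Finset.mem_filter.mp hk).2
        · intro k _ k' _ hkk'; exact e.injective hkk'
        · intro i hi
          exact ⟨e.symm i, Finset.mem_filter.mpr ⟨Finset.mem_univ _, by simpa using hi⟩,
            by simp⟩
      have hcardB : B.card = N - n := by
        have h1 := Finset.card_filter_add_card_filter_not
          (s := (Finset.univ : Finset (Fin N))) (p := fun k : Fin N => e k ∈ A)
        rw [h2] at h1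
        simp only [Finset.card_univ, Fintype.card_fin] at h1
        rw [hB]
        omega
      have ht1 : ∑ k ∈ Finset.univ.filter (fun k : Fin N => e k ∈ A),
          (if e k ∈ A then 1 else s (e k)) = n := by
        rw [Finset.sum_congr rfl (fun k hk => if_pos (Finset.mem_filter.mp hk).2)]
        simp [h2]
      have ht2 : ∑ k ∈ B, (if e k ∈ A then 1 else s (e k)) = ∑ k ∈ B, s (e k) := by
        refine Finset.sum_congr rfl (fun k hk => if_neg ?_)
        rw [hB] at hk
        exact (Finset.mem_filter.mp hk).2
      have ht3 := Finset.sum_filter_add_sum_filter_not Finset.univ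
        (fun k : Fin N => e k ∈ A) (fun k => if e k ∈ A then 1 else s (e k))
      rw [← hB] at ht3
      have hle := sum_filter_le_sum_of_monotone hmono B
      rw [hcardB] at hle
      have hmain : n + ∑ k ∈ Finset.univ.filter (fun k : Fin N => (k : ℕ) < N - n), s (e k)
          ≤ Nat.card (ConnectedComponents K) := by
        rw [hsum1] at hcard1
        omega
      -- positivity
      have hpos : 0 < n + ∑ k ∈ Finset.univ.filter
          (fun k : Fin N => (k : ℕ) < N - n), s (e k) := by
        rcases Nat.eq_zero_or_pos n with hn0 | hnpos
        · have hmem : (⟨0, hN⟩ : Fin N) ∈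
              Finset.univ.filter (fun k : Fin N => (k : ℕ) < N - n) := by
            simp only [Finset.mem_filter, Finset.mem_univ, true_and]
            omega
          have hposum : 0 < ∑ k ∈ Finset.univ.filter
              (fun k : Fin N => (k : ℕ) < N - n), s (e k) :=
            Finset.sum_pos' (fun k _ => Nat.zero_le _) ⟨⟨0, hN⟩, hmem, hs (e ⟨0, hN⟩)⟩
          omega
        · omega
      exact Or.inr ⟨hpos, hmain, hd⟩
  · refine ⟨0, Nat.zero_le _, ?_⟩
    rw [typeOf, if_neg hfin]
    show 0 < (tsn e s 0).1
    have hN : N ≠ 0 := by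
      intro hN0
      subst hN0
      haveI : IsEmpty I := e.symm.isEmpty
      haveI : IsEmpty K := by
        have h1 := hPcover
        rw [Set.iUnion_of_empty] at h1
        exact Set.univ_eq_empty_iff.mp h1.symm
      haveI : IsEmpty (ConnectedComponents K) :=
        ⟨fun c => by
          obtain ⟨x, -⟩ := ConnectedComponents.surjective_coe c
          exact IsEmpty.false x⟩
      exact hfin inferInstance
    have hNpos : 0 < N := Nat.pos_of_ne_zero hN
    simp only [tsn]
    have hmem : (⟨0, hNpos⟩ : Fin N) ∈
        Finset.univ.filter (fun k : Fin N => (k : ℕ) < N - 0) := by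
      simp only [Finset.mem_filter, Finset.mem_univ, true_and]
      omega
    have hposum : 0 < ∑ k ∈ Finset.univ.filter
        (fun k : Fin N => (k : ℕ) < N - 0), s (e k) :=
      Finset.sum_pos' (fun k _ => Nat.zero_le _) ⟨⟨0, hNpos⟩, hmem, hs (e ⟨0, hNpos⟩)⟩
    omega






section Anti
variable {I : Type*} {N : ℕ} (e : Fin N ≃ I) (s : I → ℕ)

lemma nS_eq_filter_card : nS s = (Finset.univ.filter fun k : Fin N => 1 < s (e k)).card := by
  classical
  have h1 : nS s = Nat.card {k : Fin N // 1 < s (e k)} :=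
    Nat.card_congr (Equiv.subtypeEquiv e (fun k => Iff.rfl)).symm
  rw [h1, Nat.card_eq_fintype_card, Fintype.card_subtype]

lemma big_on_high (hs : ∀ i, 0 < s i) (hmono : Monotone fun k => s (e k))
    (k : Fin N) (hk : N - nS s ≤ (k : ℕ)) : 1 < s (e k) := by
  classical
  by_contra hle
  have hone : ∀ k' : Fin N, k' ≤ k → ¬ 1 < s (e k') := by
    intro k' hk' hgt
    exact hle (lt_of_lt_of_le hgt (hmono hk'))
  have hsubset : (Finset.univ.filter fun k' : Fin N => 1 < s (e k')) ⊆
      Finset.univ.filter (fun k' : Fin N => ¬ ((k' : ℕ) < (k : ℕ) + 1)) := by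
    intro k' hk'
    rw [Finset.mem_filter] at hk' ⊢
    refine ⟨Finset.mem_univ _, fun hlt => ?_⟩
    exact hone k' (by rw [Fin.le_def]; omega) hk'.2
  have hc1 := Finset.card_le_card hsubset
  rw [← nS_eq_filter_card e s] at hc1
  have hc2 := Finset.card_filter_add_card_filter_not
    (s := (Finset.univ : Finset (Fin N))) (p := fun k' : Fin N => (k' : ℕ) < (k : ℕ) + 1)
  rw [card_filter_lt (by omega : (k : ℕ) + 1 ≤ N)] at hc2
  simp only [Finset.card_univ, Fintype.card_fin] at hc2
  have hk2 : (k : ℕ) < N := k.2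
  have hnsN := nS_le_N e s
  omega

lemma tsn_step (hs : ∀ i, 0 < s i) (hmono : Monotone fun k => s (e k))
    {j : ℕ} (hj : j < nS s) : (tsn e s (j + 1)).1 < (tsn e s j).1 := by
  classical
  have hnsN := nS_le_N e s
  have hjN : j < N := lt_of_lt_of_le hj hnsN
  have hM : N - j = (N - (j + 1)) + 1 := by omega
  have hmem : (⟨N - (j + 1), by omega⟩ : Fin N) ∉
      Finset.univ.filter (fun k : Fin N => (k : ℕ) < N - (j + 1)) := by
    simp
  have hins : Finset.univ.filter (fun k : Fin N => (k : ℕ) < N - j) =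
      insert (⟨N - (j + 1), by omega⟩ : Fin N)
        (Finset.univ.filter (fun k : Fin N => (k : ℕ) < N - (j + 1))) := by
    ext k'
    simp only [Finset.mem_filter, Finset.mem_univ, true_and, Finset.mem_insert, Fin.ext_iff]
    omega
  have hbig : 1 < s (e ⟨N - (j + 1), by omega⟩) := by
    apply big_on_high e s hs hmono
    simp only []
    omega
  simp only [tsn]
  rw [hins, Finset.sum_insert hmem]
  omega

lemma tsn_strict_anti (hs : ∀ i, 0 < s i) (hmono : Monotone fun k => s (e k)) :
    ∀ b a, a < b → b ≤ nS s → (tsn e s b).1 < (tsn e s a).1 := by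
  intro b
  induction b with
  | zero => omega
  | succ b ih =>
    intro a hab hb
    rcases Nat.lt_or_ge a b with h | h
    · exact lt_trans (tsn_step e s hs hmono (by omega)) (ih a h (by omega))
    · have : a = b := by omega
      subst this
      exact tsn_step e s hs hmono (by omega)

lemma antichain (hs : ∀ i, 0 < s i) (hmono : Monotone fun k => s (e k)) :
    IsAntichain tle {o : Option (ℕ × ℕ) | ∃ n ≤ nS s, o = some (tsn e s n)} := by
  rintro o ⟨a, ha, rfl⟩ o' ⟨b, hb, rfl⟩ hne hle
  rcases hle with ⟨h1, h2⟩ | ⟨hpos, hfst, hsnd⟩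
  · exact hne (by rw [h1, h2])
  · have hsnd' : a ≤ b := hsnd
    rcases Nat.lt_or_ge a b with h | h
    · exact absurd hfst (not_le.mpr (tsn_strict_anti e s hs hmono b a h hb))
    · have : a = b := by omega
      subst this
      exact hne rfl

end Anti

end Stmt16Aux

theorem stmt16 {I : Type*} {N : ℕ} (e : Fin N ≃ I) (s : I → ℕ) (hs : ∀ i, 0 < s i)
    (hmono : Monotone fun k => s (e k)) :
    (∀ (K : Type u) [TopologicalSpace K] [CompactSpace K] [MetrizableSpace K],
        HasDecomp K s ↔ ∃ n ≤ nS s, tle (some (tsn e s n)) (typeOf K)) ∧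
    IsAntichain tle {o : Option (ℕ × ℕ) | ∃ n ≤ nS s, o = some (tsn e s n)} := by
  constructor
  · intro K _ _ _
    constructor
    · exact fun h => Stmt16Aux.forward e s hs hmono h
    · rintro ⟨n, hn, ht⟩
      exact Stmt16Aux.backward e s hs n hn ht
  · exact Stmt16Aux.antichain e s hs hmono
end

section
/- For every type t ∈ T ∪ {∞} and every m ∈ ℕ₊, there exists a finite function s ∈ S_t such that U_t ⊆ O_s ⊆ U_t ∪ U_{(m,0)}, where U_t = {K compact metrizable : t(K) ≥ t}. -/
open Topology TopologicalSpace Set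

/-- `s ∈ S_t`: for `t = (m', n')` the domain has size `m'` and at most `n'` values
exceed `1`; for `t = ∞` the domain is merely nonempty. -/
def Sfit : Option (ℕ × ℕ) → (M : ℕ) → (Fin M → ℕ) → Prop
  | none, M, _ => 0 < M
  | some p, M, s => M = p.1 ∧ Nat.card {i : Fin M // 1 < s i} ≤ p.2

universe u

section Aux
variable {K : Type u} [TopologicalSpace K]

lemma fiber_eq_cc (a : K) :
    {x : K | ConnectedComponents.mk x = ConnectedComponents.mk a} = connectedComponent a := by
  ext x
  exact ConnectedComponents.coe_eq_coe'

lemma mk_inj_of_decomp {M : ℕ} {P : Fin M → Set K} (hc : ∀ i, IsClopen (P i))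
    (hd : Pairwise (Function.onFun Disjoint P)) {x : Fin M → K} (hx : ∀ i, x i ∈ P i) :
    Function.Injective fun i => ConnectedComponents.mk (x i) := by
  intro i j hij
  by_contra hne
  have h1 : x j ∈ connectedComponent (x i) := ConnectedComponents.coe_eq_coe'.1 hij.symm
  have h2 : x j ∈ P i := (hc i).connectedComponent_subset (hx i) h1
  exact Set.disjoint_left.1 (hd hne) h2 (hx j)

variable [CompactSpace K] [T2Space K]

lemma sep_point {a b : K} (h : connectedComponent a ≠ connectedComponent b) :
    ∃ Z : Set K, IsClopen Z ∧ a ∈ Z ∧ b ∉ Z := by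
  have hb : b ∉ connectedComponent a := fun hb => h (connectedComponent_eq hb)
  rw [connectedComponent_eq_iInter_isClopen] at hb
  simp only [Set.mem_iInter, not_forall] at hb
  obtain ⟨⟨Z, hZ, haZ⟩, hbZ⟩ := hb
  exact ⟨Z, hZ, haZ, hbZ⟩

lemma sep_finset (A B : Finset K)
    (h : ∀ a ∈ A, ∀ b ∈ B, connectedComponent a ≠ connectedComponent b) :
    ∃ Z : Set K, IsClopen Z ∧ ↑A ⊆ Z ∧ ∀ b ∈ B, b ∉ Z := by
  classical
  have key : ∀ a b : K, ∃ Z : Set K, IsClopen Z ∧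
      (connectedComponent a ≠ connectedComponent b → a ∈ Z ∧ b ∉ Z) := by
    intro a b
    by_cases hab : connectedComponent a = connectedComponent b
    · exact ⟨Set.univ, isClopen_univ, fun hc => absurd hab hc⟩
    · obtain ⟨Z, h1, h2, h3⟩ := sep_point hab
      exact ⟨Z, h1, fun _ => ⟨h2, h3⟩⟩
  choose f hf1 hf2 using key
  refine ⟨⋃ a ∈ A, ⋂ b ∈ B, f a b, ?_, ?_, ?_⟩
  · exact Set.Finite.isClopen_biUnion A.finite_toSet fun a _ =>
      Set.Finite.isClopen_biInter B.finite_toSet fun b _ => hf1 a b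
  · intro a ha
    have ha' : a ∈ A := ha
    exact Set.mem_biUnion ha' (Set.mem_iInter₂.2 fun b hb => (hf2 a b (h a ha' b hb)).1)
  · intro b hb hbZ
    obtain ⟨a, ha, hmem⟩ := Set.mem_iUnion₂.1 hbZ
    exact (hf2 a b (h a ha b hb)).2 (Set.mem_iInter₂.1 hmem b hb)

lemma exists_partition_aux : ∀ (M : ℕ) (F : Fin (M + 1) → Finset K) (W : Set K),
    IsClopen W → (∀ i, ↑(F i) ⊆ W) →
    (∀ i j, i ≠ j → ∀ a ∈ F i, ∀ b ∈ F j, connectedComponent a ≠ connectedComponent b) →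
    ∃ P : Fin (M + 1) → Set K, (∀ i, IsClopen (P i)) ∧ Pairwise (Function.onFun Disjoint P) ∧
      (⋃ i, P i) = W ∧ ∀ i, ↑(F i) ⊆ P i := by
  intro M
  induction M with
  | zero =>
    intro F W hW hsub _
    refine ⟨fun _ => W, fun _ => hW, ?_, ?_, fun i => hsub i⟩
    · intro i j hij
      exact absurd (Fin.fin_one_eq_zero i |>.trans (Fin.fin_one_eq_zero j).symm) hij
    · exact Set.iUnion_const W
  | succ M ih =>
    intro F W hW hsub hcc
    classical
    set B : Finset K := Finset.univ.biUnion (fun i : Fin (M + 1) => F i.castSucc) with hB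
    have hsep : ∀ a ∈ F (Fin.last (M + 1)), ∀ b ∈ B,
        connectedComponent a ≠ connectedComponent b := by
      intro a ha b hb
      obtain ⟨i, -, hbi⟩ := Finset.mem_biUnion.1 hb
      exact hcc _ _ (Fin.castSucc_lt_last i).ne' a ha b hbi
    obtain ⟨Z, hZ, hAZ, hBZ⟩ := sep_finset _ _ hsep
    obtain ⟨P', hP'c, hP'd, hP'u, hP's⟩ := ih (fun i => F i.castSucc) (W ∩ Zᶜ)
      (hW.inter hZ.compl)
      (fun i => fun x hx => ⟨hsub _ hx, hBZ x (Finset.mem_biUnion.2 ⟨i, Finset.mem_univ i, hx⟩)⟩)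
      (fun i j hij => hcc _ _ (fun hyp => hij (Fin.castSucc_injective _ hyp)))
    have hsubU : ∀ i, P' i ⊆ W ∩ Zᶜ := fun i => hP'u ▸ Set.subset_iUnion P' i
    refine ⟨Fin.snoc P' (W ∩ Z), ?_, ?_, ?_, ?_⟩
    · intro i
      refine Fin.lastCases ?_ ?_ i
      · rw [Fin.snoc_last]; exact hW.inter hZ
      · intro j; rw [Fin.snoc_castSucc]; exact hP'c j
    · have hdisjlast : ∀ j : Fin (M + 1), Disjoint (P' j) (W ∩ Z) := by
        intro j
        rw [Set.disjoint_left]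
        intro x hx hx2
        exact (hsubU j hx).2 hx2.2
      intro i j hij
      rcases Fin.eq_castSucc_or_eq_last i with ⟨i', rfl⟩ | rfl <;>
        rcases Fin.eq_castSucc_or_eq_last j with ⟨j', rfl⟩ | rfl
      · simp only [Function.onFun, Fin.snoc_castSucc]
        exact hP'd (fun hyp => hij (congrArg Fin.castSucc hyp))
      · simp only [Function.onFun, Fin.snoc_last, Fin.snoc_castSucc]
        exact hdisjlast i'
      · simp only [Function.onFun, Fin.snoc_last, Fin.snoc_castSucc]
        exact (hdisjlast j').symm
      · exact absurd rfl hij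
    · have hstep : ⋃ i, (Fin.snoc P' (W ∩ Z) : Fin (M + 2) → Set K) i = (⋃ i : Fin (M + 1), P' i) ∪ (W ∩ Z) := by
        ext x
        simp only [Set.mem_iUnion, Set.mem_union]
        constructor
        · rintro ⟨i, hi⟩
          rcases Fin.eq_castSucc_or_eq_last i with ⟨j, rfl⟩ | rfl
          · exact Or.inl ⟨j, by rwa [Fin.snoc_castSucc] at hi⟩
          · exact Or.inr (by rwa [Fin.snoc_last] at hi)
        · rintro (⟨j, hj⟩ | hx)
          · exact ⟨j.castSucc, by rwa [Fin.snoc_castSucc]⟩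
          · exact ⟨Fin.last _, by rwa [Fin.snoc_last]⟩
      rw [hstep, hP'u, Set.union_comm, Set.inter_union_compl]
    · intro i
      refine Fin.lastCases ?_ ?_ i
      · rw [Fin.snoc_last]
        exact fun x hx => ⟨hsub _ hx, hAZ hx⟩
      · intro j
        rw [Fin.snoc_castSucc]
        exact hP's j

lemma exists_partition (M : ℕ) (hM : 0 < M) (F : Fin M → Finset K)
    (hcc : ∀ i j, i ≠ j → ∀ a ∈ F i, ∀ b ∈ F j, connectedComponent a ≠ connectedComponent b) :
    ∃ P : Fin M → Set K, (∀ i, IsClopen (P i)) ∧ Pairwise (Function.onFun Disjoint P) ∧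
      (⋃ i, P i) = Set.univ ∧ ∀ i, ↑(F i) ⊆ P i := by
  obtain ⟨M₀, rfl⟩ := Nat.exists_eq_succ_of_ne_zero hM.ne'
  exact exists_partition_aux M₀ F Set.univ isClopen_univ (fun i => Set.subset_univ _) hcc

end Aux

section Main

lemma typeOf_eq_some {K : Type u} [TopologicalSpace K] {q : ℕ × ℕ}
    (h : typeOf K = some q) : Finite (ConnectedComponents K) ∧
    q.1 = Nat.card (ConnectedComponents K) ∧
    q.2 = Nat.card {c : ConnectedComponents K |
        ¬ ({x : K | ConnectedComponents.mk x = c} : Set K).Subsingleton} := by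
  by_cases hfin : Finite (ConnectedComponents K)
  · rw [typeOf, if_pos hfin] at h
    obtain rfl := (Option.some_inj.1 h).symm
    exact ⟨hfin, rfl, rfl⟩
  · rw [typeOf, if_neg hfin] at h
    simp at h

lemma typeOf_eq_none {K : Type u} [TopologicalSpace K]
    (h : typeOf K = none) : ¬ Finite (ConnectedComponents K) := by
  intro hfin
  rw [typeOf, if_pos hfin] at h
  simp at h

/-- From a decomposition with nonempty pieces, injectively pick components. -/
lemma decomp_count {K : Type u} [TopologicalSpace K] {M : ℕ} {P : Fin M → Set K}
    (hc : ∀ i, IsClopen (P i)) (hd : Pairwise (Function.onFun Disjoint P))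
    (hne : ∀ i, (P i).Nonempty) [Finite (ConnectedComponents K)] :
    M ≤ Nat.card (ConnectedComponents K) := by
  choose x hx using hne
  have hinj := mk_inj_of_decomp hc hd hx
  have := Nat.card_le_card_of_injective _ hinj
  simpa using this

theorem stmt17' (o : Option (ℕ × ℕ)) (ho : isType o) (m : ℕ) (hm : 0 < m) :
    ∃ (M : ℕ) (s : Fin M → ℕ), (∀ i, 0 < s i) ∧ Sfit o M s ∧
      ∀ (K : Type u) [TopologicalSpace K] [CompactSpace K] [MetrizableSpace K],
        (tle o (typeOf K) → HasDecomp K s) ∧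
        (HasDecomp K s → tle o (typeOf K) ∨ tle (some (m, 0)) (typeOf K)) := by
  classical
  obtain _ | ⟨m', n'⟩ := o
  · -- o = ∞
    refine ⟨m, fun _ => 1, fun _ => one_pos, hm, ?_⟩
    intro K _ _ _
    constructor
    · intro ht
      have hnone : typeOf K = none := by
        cases htk : typeOf K with
        | none => rfl
        | some q => rw [htk] at ht; simp [tle] at ht
      have hinf : Infinite (ConnectedComponents K) :=
        not_finite_iff_infinite.1 (typeOf_eq_none hnone)
      have emb : Fin m ↪ ConnectedComponents K :=
        Fin.valEmbedding.trans (Infinite.natEmbedding _)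
      have hrep : ∀ i : Fin m, ∃ y : K, ConnectedComponents.mk y = emb i := fun i =>
        ConnectedComponents.surjective_coe (emb i)
      choose x hx using hrep
      have hcc : ∀ i j : Fin m, i ≠ j → ∀ a ∈ ({x i} : Finset K), ∀ b ∈ ({x j} : Finset K),
          connectedComponent a ≠ connectedComponent b := by
        intro i j hij a ha b hb hab
        rw [Finset.mem_singleton] at ha hb
        subst ha; subst hb
        exact hij (emb.injective (by rw [← hx i, ← hx j]; exact ConnectedComponents.coe_eq_coe.2 hab))
      obtain ⟨P, hc, hd, hu, hs⟩ := exists_partition m hm (fun i => {x i}) hcc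
      refine ⟨P, hc, hd, hu, fun i => ?_⟩
      rw [Nat.cast_one, Set.one_le_encard_iff_nonempty]
      exact ⟨x i, hs i (Finset.mem_singleton_self _)⟩
    · rintro ⟨P, hc, hd, hu, hcard⟩
      right
      cases htk : typeOf K with
      | none => exact hm
      | some q =>
        obtain ⟨hfin, hq1, hq2⟩ := typeOf_eq_some htk
        have hne : ∀ i, (P i).Nonempty := fun i => by
          rw [← Set.one_le_encard_iff_nonempty, ← Nat.cast_one]
          exact hcard i
        have := decomp_count hc hd hne
        exact Or.inr ⟨hm, hq1 ▸ this, Nat.zero_le _⟩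
  · -- o = (m', n')
    have hn'm' : n' ≤ m' := ho
    rcases Nat.eq_zero_or_pos m' with rfl | hm'
    · -- m' = 0, so n' = 0
      obtain rfl : n' = 0 := Nat.le_zero.1 hn'm'
      refine ⟨0, fun _ => 1, fun _ => one_pos, ⟨rfl, by simp⟩, ?_⟩
      intro K _ _ _
      constructor
      · intro ht
        have hempty : IsEmpty K := by
          cases htk : typeOf K with
          | none => rw [htk] at ht; exact absurd ht (by simp [tle])
          | some q =>
            rw [htk] at ht
            obtain ⟨-, hq⟩ | ⟨h0, -⟩ := ht
            · obtain ⟨hfin, hq1, -⟩ := typeOf_eq_some htk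
              rw [hq] at hq1
              have : IsEmpty (ConnectedComponents K) := by
                rcases Nat.card_eq_zero.1 hq1.symm with h | h
                · exact h
                · exact absurd h (not_infinite_iff_finite.2 hfin)
              exact ⟨fun k => this.elim (ConnectedComponents.mk k)⟩
            · exact absurd h0 (lt_irrefl 0)
        refine ⟨fun i => ∅, fun i => isClopen_empty, fun i j hij => by
          simp [Function.onFun], ?_, fun i => i.elim0⟩
        rw [Set.iUnion_of_empty]
        exact (Set.univ_eq_empty_iff.2 hempty).symm
      · rintro ⟨P, -, -, hu, -⟩
        left
        have hempty : IsEmpty K := by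
          rw [← Set.univ_eq_empty_iff, ← hu, Set.iUnion_of_empty]
        have hccE : IsEmpty (ConnectedComponents K) :=
          ⟨fun c => by obtain ⟨y, -⟩ := ConnectedComponents.surjective_coe c; exact hempty.elim y⟩
        have hfin : Finite (ConnectedComponents K) := Finite.of_subsingleton
        have htk : typeOf K = some (0, 0) := by
          rw [typeOf, if_pos hfin]
          congr 1
          have h1 : Nat.card (ConnectedComponents K) = 0 := by simp
          have h2 : Nat.card {c : ConnectedComponents K |
              ¬ ({x : K | ConnectedComponents.mk x = c} : Set K).Subsingleton} = 0 := by simp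
          rw [h1, h2]
        rw [htk]
        exact Or.inl ⟨rfl, rfl⟩
    · -- 0 < m'
      set mm := max 2 m with hmm
      have hmm2 : 2 ≤ mm := le_max_left _ _
      have hmm1 : 1 < mm := lt_of_lt_of_le one_lt_two hmm2
      have hmmm : m ≤ mm := le_max_right _ _
      set s : Fin m' → ℕ := fun i => if i.1 < n' then mm else 1 with hs
      have hcond : ∀ i : Fin m', 1 < s i ↔ i.1 < n' := by
        intro i
        simp only [hs]
        split_ifs with h
        · simp [h, hmm1]
        · simp [h]
      have hspos : ∀ i, 0 < s i := by
        intro i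
        simp only [hs]
        split_ifs
        · omega
        · omega
      have hsle : ∀ i, s i ≤ mm := by
        intro i
        simp only [hs]
        split_ifs <;> omega
      refine ⟨m', s, hspos, ⟨rfl, ?_⟩, ?_⟩
      · -- card of {i // 1 < s i} = n'
        have e : {i : Fin m' // 1 < s i} ≃ Fin n' :=
          { toFun := fun i => ⟨i.1.1, (hcond i.1).1 i.2⟩
            invFun := fun j => ⟨⟨j.1, lt_of_lt_of_le j.2 hn'm'⟩, (hcond _).2 j.2⟩
            left_inv := fun i => by cases i; rfl
            right_inv := fun j => rfl }
        rw [Nat.card_congr e, Nat.card_eq_fintype_card, Fintype.card_fin]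
      intro K _ _ _
      constructor
      · intro ht
        cases htk : typeOf K with
        | none =>
          -- infinitely many components
          have hinf : Infinite (ConnectedComponents K) :=
            not_finite_iff_infinite.1 (typeOf_eq_none htk)
          have emb : Fin m' × Fin mm ↪ ConnectedComponents K :=
            (finProdFinEquiv.toEmbedding.trans Fin.valEmbedding).trans (Infinite.natEmbedding _)
          have hrep : ∀ p : Fin m' × Fin mm, ∃ y : K, ConnectedComponents.mk y = emb p := fun p =>
            ConnectedComponents.surjective_coe (emb p)
          choose x hx using hrep
          have hxinj : Function.Injective x := by
            intro p q hpq
            apply emb.injective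
            rw [← hx p, ← hx q, hpq]
          set F : Fin m' → Finset K := fun i => Finset.image (fun j : Fin mm => x (i, j))
            Finset.univ with hF
          have hcc : ∀ i j : Fin m', i ≠ j → ∀ a ∈ F i, ∀ b ∈ F j,
              connectedComponent a ≠ connectedComponent b := by
            intro i j hij a ha b hb hab
            simp only [hF, Finset.mem_image, Finset.mem_univ, true_and] at ha hb
            obtain ⟨ja, rfl⟩ := ha
            obtain ⟨jb, rfl⟩ := hb
            have : emb (i, ja) = emb (j, jb) := by
              rw [← hx (i, ja), ← hx (j, jb)]
              exact ConnectedComponents.coe_eq_coe.2 hab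
            exact hij (congrArg Prod.fst (emb.injective this))
          obtain ⟨P, hc, hd, hu, hsub⟩ := exists_partition m' hm' F hcc
          refine ⟨P, hc, hd, hu, fun i => ?_⟩
          have hFcard : (F i).card = mm := by
            rw [hF]
            rw [Finset.card_image_of_injective _ (fun j1 j2 h12 =>
              congrArg Prod.snd (hxinj h12))]
            simp
          calc ((s i : ℕ∞)) ≤ (mm : ℕ∞) := Nat.cast_le.2 (hsle i)
            _ = ((F i).card : ℕ∞) := by rw [hFcard]
            _ = (↑(F i) : Set K).encard := (Set.encard_coe_eq_coe_finsetCard _).symm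
            _ ≤ (P i).encard := Set.encard_mono (hsub i)
        | some q =>
          obtain ⟨hfin, hq1, hq2⟩ := typeOf_eq_some htk
          obtain ⟨-, hm'q, hn'q⟩ | ⟨h00, -⟩ :=
            (by rw [htk] at ht; exact ht :
              ((m', n') = (0, 0) ∧ q = (0, 0)) ∨ (0 < m' ∧ m' ≤ q.1 ∧ n' ≤ q.2)).symm
          swap
          · exact absurd (congrArg Prod.fst h00) (by simpa using hm'.ne')
          haveI := Fintype.ofFinite (ConnectedComponents K)
          set ND : Set (ConnectedComponents K) := {c : ConnectedComponents K |
            ¬ ({x : K | ConnectedComponents.mk x = c} : Set K).Subsingleton} with hND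
          haveI : Fintype ND := Fintype.ofFinite _
          have hn'ND : n' ≤ Fintype.card ND := by
            rw [← Nat.card_eq_fintype_card, ← hq2]
            exact hn'q
          obtain ⟨f1, hf1ND⟩ : ∃ f1 : Fin n' ↪ ConnectedComponents K, ∀ j, f1 j ∈ ND :=
            ⟨((Fin.castLEEmb hn'ND).trans (Fintype.equivFin ND).symm.toEmbedding).trans
              (Function.Embedding.subtype _), fun j => Subtype.mem _⟩
          haveI : DecidablePred (· ∈ Set.range f1) := fun _ => Classical.dec _
          have hrest : m' - n' ≤ Fintype.card {c : ConnectedComponents K // c ∉ Set.range f1} := by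
            have h1 : Fintype.card {c : ConnectedComponents K // c ∉ Set.range f1} =
                Fintype.card (ConnectedComponents K) - n' := by
              rw [Fintype.card_subtype_compl]
              congr 1
              calc Fintype.card {x : ConnectedComponents K // x ∈ Set.range f1}
                  = Nat.card {x : ConnectedComponents K // x ∈ Set.range f1} :=
                    Fintype.card_eq_nat_card
                _ = Nat.card (Fin n') :=
                    Nat.card_congr (Equiv.ofInjective f1 f1.injective).symm
                _ = n' := by simp
            rw [h1]
            have : m' ≤ Fintype.card (ConnectedComponents K) := by
              rw [← Nat.card_eq_fintype_card, ← hq1]; exact hm'q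
            omega
          have f2 : Fin (m' - n') ↪ {c : ConnectedComponents K // c ∉ Set.range f1} :=
            (Fin.castLEEmb hrest).trans (Fintype.equivFin _).symm.toEmbedding
          set c : Fin m' → ConnectedComponents K := fun i =>
            if h : i.1 < n' then f1 ⟨i.1, h⟩ else (f2 ⟨i.1 - n', by omega⟩).1 with hcdef
          have hcinj : Function.Injective c := by
            intro i j hij
            simp only [hcdef] at hij
            by_cases h1 : i.1 < n' <;> by_cases h2 : j.1 < n'
            · rw [dif_pos h1, dif_pos h2] at hij
              have h' : i.1 = j.1 := congrArg (fun z : Fin n' => z.val) (f1.injective hij)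
              exact Fin.ext h'
            · rw [dif_pos h1, dif_neg h2] at hij
              exact absurd ⟨_, hij⟩ (f2 _).2
            · rw [dif_neg h1, dif_pos h2] at hij
              exact absurd ⟨_, hij.symm⟩ (f2 _).2
            · rw [dif_neg h1, dif_neg h2] at hij
              have h0 := f2.injective (Subtype.ext hij)
              have h' : i.1 - n' = j.1 - n' := congrArg (fun z : Fin (m' - n') => z.val) h0
              apply Fin.ext
              omega
          have hcND : ∀ i : Fin m', i.1 < n' → c i ∈ ND := by
            intro i h
            simp only [hcdef, dif_pos h]
            exact hf1ND _
          have hrep : ∀ i : Fin m', ∃ y : K, ConnectedComponents.mk y = c i := fun i =>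
            ConnectedComponents.surjective_coe (c i)
          choose y hy using hrep
          have hcc : ∀ i j : Fin m', i ≠ j → ∀ a ∈ ({y i} : Finset K), ∀ b ∈ ({y j} : Finset K),
              connectedComponent a ≠ connectedComponent b := by
            intro i j hij a ha b hb hab
            rw [Finset.mem_singleton] at ha hb
            subst ha; subst hb
            exact hij (hcinj (by rw [← hy i, ← hy j]; exact ConnectedComponents.coe_eq_coe.2 hab))
          obtain ⟨P, hc, hd, hu, hsub⟩ := exists_partition m' hm' (fun i => {y i}) hcc
          refine ⟨P, hc, hd, hu, fun i => ?_⟩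
          have hyP : y i ∈ P i := hsub i (Finset.mem_singleton_self _)
          by_cases hi : i.1 < n'
          · -- nondegenerate component, hence infinite
            have hnd : ¬ (connectedComponent (y i)).Subsingleton := by
              have := hcND i hi
              rw [hND, Set.mem_setOf_eq, ← hy i, fiber_eq_cc] at this
              exact this
            have hinf : (connectedComponent (y i)).Infinite :=
              isPreconnected_connectedComponent.infinite_of_nontrivial
                (Set.not_subsingleton_iff.1 hnd)
            have hPinf : (P i).Infinite :=
              hinf.mono ((hc i).connectedComponent_subset hyP)
            rw [hPinf.encard_eq]
            exact le_top
          · have : s i = 1 := by simp [hs, hi]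
            rw [this, Nat.cast_one, Set.one_le_encard_iff_nonempty]
            exact ⟨y i, hyP⟩
      · rintro ⟨P, hc, hd, hu, hcard⟩
        cases htk : typeOf K with
        | none => exact Or.inl hm'
        | some q =>
          obtain ⟨hfin, hq1, hq2⟩ := typeOf_eq_some htk
          have hne : ∀ i, (P i).Nonempty := fun i => by
            rw [← Set.one_le_encard_iff_nonempty]
            exact le_trans (by exact_mod_cast hspos i) (hcard i)
          have hm'count : m' ≤ q.1 := hq1 ▸ decomp_count hc hd hne
          by_cases hb : ∀ i : Fin m', i.1 < n' →
              ∃ a ∈ P i, ¬ (connectedComponent a).Subsingleton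
          · left
            refine Or.inr ⟨hm', hm'count, ?_⟩
            -- n' ≤ q.2
            choose a haP hand using hb
            set ND : Set (ConnectedComponents K) := {c : ConnectedComponents K |
              ¬ ({x : K | ConnectedComponents.mk x = c} : Set K).Subsingleton} with hND
            obtain ⟨g, hg⟩ : ∃ g : Fin n' → ND, ∀ j : Fin n',
                (g j : ConnectedComponents K) =
                  ConnectedComponents.mk (a ⟨j.1, lt_of_lt_of_le j.2 hn'm'⟩ j.2) :=
              ⟨fun j => ⟨ConnectedComponents.mk (a ⟨j.1, lt_of_lt_of_le j.2 hn'm'⟩ j.2), by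
                rw [hND, Set.mem_setOf_eq, fiber_eq_cc]
                exact hand _ _⟩, fun j => rfl⟩
            have hginj : Function.Injective g := by
              intro j k hjk
              have hjk' : ConnectedComponents.mk (a ⟨j.1, lt_of_lt_of_le j.2 hn'm'⟩ j.2) =
                  ConnectedComponents.mk (a ⟨k.1, lt_of_lt_of_le k.2 hn'm'⟩ k.2) := by
                rw [← hg j, ← hg k]
                exact congrArg Subtype.val hjk
              have h1 : a ⟨k.1, _⟩ k.2 ∈ connectedComponent (a ⟨j.1, lt_of_lt_of_le j.2 hn'm'⟩ j.2) :=
                ConnectedComponents.coe_eq_coe'.1 hjk'.symm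
              have h2 : a ⟨k.1, lt_of_lt_of_le k.2 hn'm'⟩ k.2 ∈ P ⟨j.1, lt_of_lt_of_le j.2 hn'm'⟩ :=
                (hc _).connectedComponent_subset (haP _ _) h1
              by_contra hne2
              have hne3 : (⟨j.1, lt_of_lt_of_le j.2 hn'm'⟩ : Fin m') ≠ ⟨k.1, lt_of_lt_of_le k.2 hn'm'⟩ := by
                intro h
                have h' : j.1 = k.1 := congrArg (fun z : Fin m' => z.val) h
                exact hne2 (Fin.ext h')
              exact Set.disjoint_left.1 (hd hne3) h2 (haP _ _)
            haveI : Finite ND := Subtype.finite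
            have := Nat.card_le_card_of_injective g hginj
            simpa [← hq2] using this
          · right
            push_neg at hb
            obtain ⟨i, hi, hall⟩ := hb
            -- every component meeting P i is a singleton; P i has ≥ mm ≥ m points
            have hsi : s i = mm := by simp [hs, hi]
            have hinj : Function.Injective
                (fun p : (P i : Set K) => ConnectedComponents.mk (p : K)) := by
              intro p q hpq
              have h1 : (q : K) ∈ connectedComponent (p : K) :=
                ConnectedComponents.coe_eq_coe'.1 hpq.symm
              have h2 := hall (p : K) p.2
              exact Subtype.ext (h2 mem_connectedComponent h1)
            haveI : Finite (P i : Set K) := Finite.of_injective _ hinj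
            have hfinPi : (P i).Finite := Set.toFinite _
            have hmcard : m ≤ Nat.card (P i : Set K) := by
              have h1 : (mm : ℕ∞) ≤ (P i).encard := hsi ▸ hcard i
              rw [hfinPi.encard_eq_coe_toFinset_card] at h1
              have h2 : mm ≤ hfinPi.toFinset.card := by exact_mod_cast h1
              rw [Nat.card_coe_set_eq, Set.ncard_eq_toFinset_card _ hfinPi]
              omega
            have := Nat.card_le_card_of_injective _ hinj
            exact Or.inr ⟨hm, hq1 ▸ le_trans hmcard this, Nat.zero_le _⟩

theorem stmt17 (o : Option (ℕ × ℕ)) (ho : isType o) (m : ℕ) (hm : 0 < m) :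
    ∃ (M : ℕ) (s : Fin M → ℕ), (∀ i, 0 < s i) ∧ Sfit o M s ∧
      ∀ (K : Type u) [TopologicalSpace K] [CompactSpace K] [MetrizableSpace K],
        (tle o (typeOf K) → HasDecomp K s) ∧
        (HasDecomp K s → tle o (typeOf K) ∨ tle (some (m, 0)) (typeOf K)) :=
  stmt17' o ho m hm

end Main
end
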